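/- arXiv:2107.08276 — 6 statements merged into one kernel-verified Lean document; each statement's English description precedes it below -/
import Mathlib

section
/- Let M, A ∈ ℕ with M ≥ 3 and 1 < A < M. Then for any function F : 𝔄(M,A) → ℂ with ‖F‖_Lip > 0 and any t > 0, μ({𝒜 ∈ 𝔄(M,A) : |F(𝒜) − 𝔼(F)| ≥ t}) ≤ 2·exp(−t²/(16·A·‖F‖²_Lip)), where 𝔼(F) is the expectation of F with respect to μ. -/
open scoped BigOperators

/-- The discrete Fourier transform matrix `F_N`,
with entries `(F_N)_{j l} = N^{-1/2} e^{-2π i j l / N}`. -/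
noncomputable def dftMatrix (N : ℕ) : Matrix (Fin N) (Fin N) ℂ :=
  fun j l => (1 / Real.sqrt N : ℝ) *
    Complex.exp (-(2 * Real.pi * Complex.I * (j : ℕ) * (l : ℕ)) / N)

/-- The discrete Cantor set `C_k(M, 𝒜) = {∑ a_j M^j : a_j ∈ 𝒜}` as a finset of naturals. -/
def discCantor (M k : ℕ) (A : Finset ℕ) : Finset ℕ :=
  (Fintype.piFinset (fun _ : Fin k => A)).image (fun a => ∑ i : Fin k, a i * M ^ (i : ℕ))

/-- The matrix of the operator `1_{C_k(M,𝒜)} F_N 1_{C_k(M,𝒜)}` on `ℓ²_N`, where `N = M^k`. -/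
noncomputable def cantorOp (M k : ℕ) (A : Finset ℕ) :
    Matrix (Fin (M ^ k)) (Fin (M ^ k)) ℂ :=
  fun j l => if (j : ℕ) ∈ discCantor M k A ∧ (l : ℕ) ∈ discCantor M k A
    then dftMatrix (M ^ k) j l else 0

/-- `r_k = ‖1_{C_k(M,𝒜)} F_N 1_{C_k(M,𝒜)}‖_{ℓ²_N → ℓ²_N}`, the operator norm on
`ℓ²_N = EuclideanSpace ℂ (Fin N)` with `N = M^k`. -/
noncomputable def rNorm (M k : ℕ) (A : Finset ℕ) : ℝ :=
  ‖Matrix.toEuclideanCLM (𝕜 := ℂ) (cantorOp M k A)‖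

/-- The space of alphabets `𝔄(M, A)`: subsets of `{0, …, M-1}` of cardinality `A`. -/
def alphabets (M A : ℕ) : Finset (Finset ℕ) :=
  (Finset.range M).powersetCard A

open scoped symmDiff



lemma key_identity (S : Finset ℕ) (n : ℕ) (f : Finset ℕ → ℝ) :
    ∑ a ∈ S, ∑ B ∈ (S.erase a).powersetCard n, f (insert a B)
      = ∑ 𝒜 ∈ S.powersetCard (n+1), ((n:ℝ)+1) * f 𝒜 := by
  have h1 : ∀ 𝒜 ∈ S.powersetCard (n+1), ((n:ℝ)+1) * f 𝒜 = ∑ a ∈ 𝒜, f 𝒜 := by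
    intro 𝒜 h𝒜
    rw [Finset.sum_const, (Finset.mem_powersetCard.1 h𝒜).2]
    push_cast [nsmul_eq_mul]; ring
  rw [Finset.sum_congr rfl h1]
  rw [Finset.sum_sigma' S (fun a => (S.erase a).powersetCard n) (fun a B => f (insert a B)),
    Finset.sum_sigma' (S.powersetCard (n+1)) (fun 𝒜 => 𝒜) (fun 𝒜 _ => f 𝒜)]
  refine Finset.sum_nbij' (fun p => ⟨insert p.1 p.2, p.1⟩) (fun p => ⟨p.2, p.1.erase p.2⟩)
    ?_ ?_ ?_ ?_ ?_
  · rintro ⟨a, B⟩ hp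
    simp only [Finset.mem_sigma, Finset.mem_powersetCard] at hp ⊢
    have haB : a ∉ B := fun h => (Finset.mem_erase.1 (hp.2.1 h)).1 rfl
    exact ⟨⟨Finset.insert_subset hp.1 ((hp.2.1.trans (Finset.erase_subset _ _))),
      by rw [Finset.card_insert_of_notMem haB, hp.2.2]⟩, Finset.mem_insert_self _ _⟩
  · rintro ⟨𝒜, a⟩ hp
    simp only [Finset.mem_sigma, Finset.mem_powersetCard] at hp ⊢
    obtain ⟨⟨hsub, hcard⟩, ha⟩ := hp
    refine ⟨hsub ha, fun x hx => ?_, by rw [Finset.card_erase_of_mem ha, hcard]; omega⟩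
    exact Finset.mem_erase.2 ⟨(Finset.mem_erase.1 hx).1, hsub (Finset.mem_erase.1 hx).2⟩
  · rintro ⟨a, B⟩ hp
    simp only [Finset.mem_sigma, Finset.mem_powersetCard] at hp
    have haB : a ∉ B := fun h => (Finset.mem_erase.1 (hp.2.1 h)).1 rfl
    simp [Finset.erase_insert haB]
  · rintro ⟨𝒜, a⟩ hp
    simp only [Finset.mem_sigma, Finset.mem_powersetCard] at hp
    simp [Finset.insert_erase hp.2]
  · rintro ⟨a, B⟩ hp; rfl

lemma fin_var_le {ι : Type*} (s : Finset ι) (hs : s.Nonempty) (v : ι → ℝ) (L : ℝ)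
    (hpair : ∀ i ∈ s, ∀ j ∈ s, |v i - v j| ≤ L) :
    ∑ i ∈ s, (v i - (∑ j ∈ s, v j) / s.card) ^ 2 ≤ s.card * (L ^ 2 / 2) := by
  have hc : (0:ℝ) < s.card := by exact_mod_cast Finset.card_pos.mpr hs
  set μ : ℝ := (∑ j ∈ s, v j) / s.card with hμdef
  have hsum : ∑ i ∈ s, (v i - μ) = 0 := by
    rw [Finset.sum_sub_distrib, Finset.sum_const, nsmul_eq_mul, hμdef]
    field_simp
    ring
  have h1 : ∀ i j : ι, (v i - v j)^2
      = (v i - μ)^2 + (v j - μ)^2 - 2 * ((v i - μ) * (v j - μ)) := by intros; ring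
  set T := ∑ j ∈ s, (v j - μ)^2 with hT
  have inner : ∀ i ∈ s, ∑ j ∈ s, (v i - v j)^2 = (s.card:ℝ) * (v i - μ)^2 + T := by
    intro i _
    rw [Finset.sum_congr rfl (fun j _ => h1 i j)]
    rw [Finset.sum_sub_distrib, Finset.sum_add_distrib, Finset.sum_const, nsmul_eq_mul]
    simp only [← Finset.mul_sum, hsum, mul_zero]
    ring
  have expand : ∑ i ∈ s, ∑ j ∈ s, (v i - v j) ^ 2 = 2 * s.card * T := by
    rw [Finset.sum_congr rfl inner, Finset.sum_add_distrib, Finset.sum_const,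
      ← Finset.mul_sum, nsmul_eq_mul, ← hT]
    ring
  have hbound : ∑ i ∈ s, ∑ j ∈ s, (v i - v j) ^ 2 ≤ (s.card : ℝ) * ((s.card:ℝ) * L ^ 2) := by
    calc ∑ i ∈ s, ∑ j ∈ s, (v i - v j) ^ 2
        ≤ ∑ i ∈ s, ∑ j ∈ s, L ^ 2 := by
          refine Finset.sum_le_sum fun i hi => Finset.sum_le_sum fun j hj => ?_
          have h := hpair i hi j hj
          have h0 : (0:ℝ) ≤ |v i - v j| := abs_nonneg _
          calc (v i - v j)^2 = |v i - v j|^2 := (sq_abs _).symm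
            _ ≤ L^2 := by nlinarith
      _ = (s.card : ℝ) * ((s.card:ℝ) * L ^ 2) := by
          simp only [Finset.sum_const, nsmul_eq_mul]
  nlinarith [expand, hbound]

lemma fin_hoeff {ι : Type*} (s : Finset ι) (hs : s.Nonempty) (v : ι → ℝ) (L l : ℝ)
    (hpair : ∀ i ∈ s, ∀ j ∈ s, |v i - v j| ≤ L) :
    ∑ i ∈ s, Real.exp (l * (v i - (∑ j ∈ s, v j) / s.card))
      ≤ s.card * Real.exp (l ^ 2 * L ^ 2 / 2) := by
  have hc : (0:ℝ) < s.card := by exact_mod_cast Finset.card_pos.mpr hs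
  have hL : 0 ≤ L := by
    obtain ⟨i, hi⟩ := hs
    exact le_trans (abs_nonneg _) (hpair i hi i hi)
  have jensen : ∀ i ∈ s, Real.exp (l * (v i - (∑ j ∈ s, v j) / s.card))
      ≤ (1 / s.card) * ∑ j ∈ s, Real.exp (l * (v i - v j)) := by
    intro i hi
    have harg : l * (v i - (∑ j ∈ s, v j) / s.card)
        = ∑ j ∈ s, (1 / (s.card:ℝ)) • (l * (v i - v j)) := by
      simp only [smul_eq_mul]
      rw [Finset.sum_congr rfl (fun j _ => by ring :
        ∀ j ∈ s, (1 / (s.card:ℝ)) * (l * (v i - v j))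
          = (1/(s.card:ℝ)) * (l * v i) - (1/(s.card:ℝ)) * l * v j)]
      rw [Finset.sum_sub_distrib, Finset.sum_const, nsmul_eq_mul, ← Finset.mul_sum]
      field_simp
    rw [harg]
    have := convexOn_exp.map_sum_le (t := s) (w := fun _ => (1/(s.card:ℝ)))
      (p := fun j => l * (v i - v j)) (fun j _ => by positivity)
      (by rw [Finset.sum_const, nsmul_eq_mul]; field_simp)
      (fun j _ => Set.mem_univ _)
    simpa [Finset.mul_sum, smul_eq_mul] using this
  have hswap : ∑ i ∈ s, ∑ j ∈ s, Real.exp (l * (v i - v j))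
      = ∑ i ∈ s, ∑ j ∈ s, Real.exp (-(l * (v i - v j))) := by
    rw [Finset.sum_comm]
    refine Finset.sum_congr rfl fun i _ => Finset.sum_congr rfl fun j _ => ?_
    ring_nf
  calc ∑ i ∈ s, Real.exp (l * (v i - (∑ j ∈ s, v j) / s.card))
      ≤ ∑ i ∈ s, (1 / s.card) * ∑ j ∈ s, Real.exp (l * (v i - v j)) :=
        Finset.sum_le_sum jensen
    _ = (1 / s.card) * ∑ i ∈ s, ∑ j ∈ s, Real.exp (l * (v i - v j)) := by
        rw [← Finset.mul_sum]
    _ = (1 / s.card) * ∑ i ∈ s, ∑ j ∈ s, Real.cosh (l * (v i - v j)) := by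
        congr 1
        calc ∑ i ∈ s, ∑ j ∈ s, Real.exp (l * (v i - v j))
            = (∑ i ∈ s, ∑ j ∈ s, Real.exp (l * (v i - v j))
              + ∑ i ∈ s, ∑ j ∈ s, Real.exp (-(l * (v i - v j)))) / 2 := by
              rw [← hswap]; ring
          _ = ∑ i ∈ s, ∑ j ∈ s, Real.cosh (l * (v i - v j)) := by
              simp_rw [Real.cosh_eq, ← Finset.sum_div, ← Finset.sum_add_distrib]
    _ ≤ (1 / s.card) * ∑ i ∈ s, ∑ j ∈ s, Real.exp (l ^ 2 * L ^ 2 / 2) := by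
        gcongr with i hi j hj
        have h1 : |l * (v i - v j)| ≤ |l| * L := by
          rw [abs_mul]
          exact mul_le_mul_of_nonneg_left (hpair i hi j hj) (abs_nonneg l)
        calc Real.cosh (l * (v i - v j)) ≤ Real.cosh (|l| * L) := by
              rw [Real.cosh_le_cosh]
              rwa [abs_of_nonneg (by positivity : (0:ℝ) ≤ |l| * L)]
          _ ≤ Real.exp ((|l| * L) ^ 2 / 2) := Real.cosh_le_exp_half_sq _
          _ = Real.exp (l ^ 2 * L ^ 2 / 2) := by rw [mul_pow, sq_abs]
    _ = s.card * Real.exp (l ^ 2 * L ^ 2 / 2) := by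
        simp only [Finset.sum_const, nsmul_eq_mul]
        field_simp

lemma symmDiff_insert_eq (a : ℕ) (B₁ B₂ : Finset ℕ) (h1 : a ∉ B₁) (h2 : a ∉ B₂) :
    (insert a B₁) ∆ (insert a B₂) = B₁ ∆ B₂ := by
  ext x
  by_cases hxa : x = a
  · subst hxa
    simp [Finset.mem_symmDiff, h1, h2]
  · simp [Finset.mem_symmDiff, Finset.mem_insert, hxa]

lemma symmDiff_insert_card (a a' : ℕ) (B : Finset ℕ) (hne : a ≠ a') (ha : a ∉ B)
    (ha' : a' ∉ B) : ((insert a B) ∆ (insert a' B)).card = 2 := by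
  have : (insert a B) ∆ (insert a' B) = {a, a'} := by
    ext x
    simp only [Finset.mem_symmDiff, Finset.mem_insert, Finset.mem_singleton]
    constructor
    · rintro (⟨h1, h2⟩ | ⟨h1, h2⟩) <;> tauto
    · rintro (rfl | rfl)
      · exact Or.inl ⟨Or.inl rfl, by tauto⟩
      · exact Or.inr ⟨Or.inl rfl, by tauto⟩
  rw [this, Finset.card_insert_of_notMem (by simpa using hne), Finset.card_singleton]

lemma mem_insert_slice {S : Finset ℕ} {n : ℕ} {a : ℕ} (ha : a ∈ S) {B : Finset ℕ}
    (hB : B ∈ (S.erase a).powersetCard n) : insert a B ∈ S.powersetCard (n+1) := by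
  rw [Finset.mem_powersetCard] at hB ⊢
  have haB : a ∉ B := fun h => (Finset.mem_erase.1 (hB.1 h)).1 rfl
  exact ⟨Finset.insert_subset ha (hB.1.trans (Finset.erase_subset _ _)),
    by rw [Finset.card_insert_of_notMem haB, hB.2]⟩

lemma swapMem {S : Finset ℕ} {n : ℕ} {a a' : ℕ} (ha : a ∈ S) (hne : a ≠ a')
    {B : Finset ℕ} (hB : B ∈ (S.erase a).powersetCard n) :
    (if a' ∈ B then insert a (B.erase a') else B) ∈ (S.erase a').powersetCard n := by
  rw [Finset.mem_powersetCard] at hB ⊢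
  have hsub := hB.1
  have haB : a ∉ B := fun h => (Finset.mem_erase.1 (hsub h)).1 rfl
  by_cases hmem : a' ∈ B
  · simp only [hmem, if_true]
    constructor
    · intro x hx
      rcases Finset.mem_insert.1 hx with rfl | hx'
      · exact Finset.mem_erase.2 ⟨hne, ha⟩
      · rcases Finset.mem_erase.1 hx' with ⟨hxa', hxB⟩
        exact Finset.mem_erase.2 ⟨hxa', (Finset.mem_erase.1 (hsub hxB)).2⟩
    · have hcard1 : 1 ≤ B.card := Finset.card_pos.2 ⟨a', hmem⟩
      rw [Finset.card_insert_of_notMem (fun hcon => haB (Finset.mem_erase.1 hcon).2),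
        Finset.card_erase_of_mem hmem, hB.2]
      omega
  · simp only [hmem, if_false]
    exact ⟨fun x hx => Finset.mem_erase.2 ⟨fun hcon => hmem (hcon ▸ hx),
      (Finset.mem_erase.1 (hsub hx)).2⟩, hB.2⟩

lemma swapInv {S : Finset ℕ} {n : ℕ} {a a' : ℕ} (hne : a ≠ a')
    {B : Finset ℕ} (hB : B ∈ (S.erase a).powersetCard n) :
    (if a ∈ (if a' ∈ B then insert a (B.erase a') else B)
      then insert a' ((if a' ∈ B then insert a (B.erase a') else B).erase a)
      else (if a' ∈ B then insert a (B.erase a') else B)) = B := by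
  rw [Finset.mem_powersetCard] at hB
  have haB : a ∉ B := fun h => (Finset.mem_erase.1 (hB.1 h)).1 rfl
  by_cases hmem : a' ∈ B
  · simp only [hmem, if_true]
    have haBe : a ∉ B.erase a' := fun hcon => haB (Finset.mem_erase.1 hcon).2
    simp only [Finset.mem_insert_self, if_true]
    rw [Finset.erase_insert haBe, Finset.insert_erase hmem]
  · simp only [hmem, if_false, haB, if_false]

lemma insert_swap_eq {a a' : ℕ} (hne : a ≠ a') {B : Finset ℕ} (ha : a ∉ B) (hmem : a' ∈ B) :
    insert a' (insert a (B.erase a')) = insert a B := by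
  rw [Finset.insert_comm, Finset.insert_erase hmem]

/-- The sums of `h (insert a ·)` and `h (insert a' ·)` over reduced slices differ
by at most `card * (2K)`. -/
lemma sum_insert_diff_le (S : Finset ℕ) (n : ℕ) (h : Finset ℕ → ℝ) (K : ℝ) (hK : 0 ≤ K)
    (hd : ∀ 𝒜₁ ∈ S.powersetCard (n+1), ∀ 𝒜₂ ∈ S.powersetCard (n+1),
      |h 𝒜₁ - h 𝒜₂| ≤ K * ((𝒜₁ ∆ 𝒜₂).card : ℝ))
    {a a' : ℕ} (ha : a ∈ S) (ha' : a' ∈ S) (hne : a ≠ a') :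
    |∑ B ∈ (S.erase a).powersetCard n, h (insert a B)
      - ∑ B' ∈ (S.erase a').powersetCard n, h (insert a' B')|
      ≤ ((S.erase a).powersetCard n).card * (2 * K) := by
  classical
  have hswap : ∑ B' ∈ (S.erase a').powersetCard n, h (insert a' B')
      = ∑ B ∈ (S.erase a).powersetCard n,
          h (insert a' (if a' ∈ B then insert a (B.erase a') else B)) := by
    refine Finset.sum_nbij' (fun B => if a ∈ B then insert a' (B.erase a) else B)
      (fun B => if a' ∈ B then insert a (B.erase a') else B)
      (fun B hB => swapMem ha' hne.symm hB)
      (fun B hB => swapMem ha hne hB)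
      (fun B hB => swapInv hne.symm hB)
      (fun B hB => swapInv hne hB)
      ?_
    intro B hB
    have hinv := swapInv (S := S) (n := n) (a := a') (a' := a) hne.symm hB
    rw [hinv]
  rw [hswap, ← Finset.sum_sub_distrib]
  calc |∑ B ∈ (S.erase a).powersetCard n,
        (h (insert a B) - h (insert a' (if a' ∈ B then insert a (B.erase a') else B)))|
      ≤ ∑ B ∈ (S.erase a).powersetCard n,
        |h (insert a B) - h (insert a' (if a' ∈ B then insert a (B.erase a') else B))| :=
        Finset.abs_sum_le_sum_abs _ _
    _ ≤ ∑ B ∈ (S.erase a).powersetCard n, (2 * K) := by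
        refine Finset.sum_le_sum fun B hB => ?_
        have hBp := Finset.mem_powersetCard.1 hB
        have haB : a ∉ B := fun hcon => (Finset.mem_erase.1 (hBp.1 hcon)).1 rfl
        by_cases hmem : a' ∈ B
        · simp only [hmem, if_true]
          rw [insert_swap_eq hne haB hmem]
          simpa using by positivity
        · simp only [hmem, if_false]
          have h1 := hd (insert a B) (mem_insert_slice ha hB) (insert a' B)
            (mem_insert_slice ha' (by
              rw [Finset.mem_powersetCard] at hB ⊢
              exact ⟨fun x hx => Finset.mem_erase.2 ⟨fun hcon => hmem (hcon ▸ hx),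
                (Finset.mem_erase.1 (hB.1 hx)).2⟩, hB.2⟩))
          rw [symmDiff_insert_card a a' B hne haB hmem] at h1
          calc |h (insert a B) - h (insert a' B)| ≤ K * (2:ℕ) := h1
            _ = 2 * K := by push_cast; ring
    _ = ((S.erase a).powersetCard n).card * (2 * K) := by
        rw [Finset.sum_const, nsmul_eq_mul]

lemma chain_mgf (n : ℕ) : ∀ (S : Finset ℕ) (h : Finset ℕ → ℝ) (K l : ℝ), 0 ≤ K →
    n ≤ S.card →
    (∀ 𝒜₁ ∈ S.powersetCard n, ∀ 𝒜₂ ∈ S.powersetCard n,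
      |h 𝒜₁ - h 𝒜₂| ≤ K * ((𝒜₁ ∆ 𝒜₂).card : ℝ)) →
    ∑ 𝒜 ∈ S.powersetCard n, Real.exp (l * (h 𝒜 -
        (∑ ℬ ∈ S.powersetCard n, h ℬ) / (S.powersetCard n).card))
      ≤ (S.powersetCard n).card * Real.exp (2 * n * l ^ 2 * K ^ 2) := by
  induction n with
  | zero =>
    intro S h K l hK hn hd
    simp [Finset.powersetCard_zero]
  | succ n IH =>
    intro S h K l hK hn hd
    classical
    have hS : S.Nonempty := Finset.card_pos.1 (by omega)
    have hmpos : (0:ℝ) < S.card := by exact_mod_cast Finset.card_pos.2 hS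
    set N : ℕ := (S.powersetCard (n+1)).card with hNdef
    have hNpos : 0 < N := by
      rw [hNdef, Finset.card_powersetCard]
      exact Nat.choose_pos hn
    set N' : ℕ := (S.card - 1).choose n with hN'def
    have hPcard : ∀ a ∈ S, ((S.erase a).powersetCard n).card = N' := by
      intro a ha
      rw [Finset.card_powersetCard, Finset.card_erase_of_mem ha]
    have hN'pos : 0 < N' := Nat.choose_pos (by omega)
    have hN'posR : (0:ℝ) < N' := by exact_mod_cast hN'pos
    set μ : ℝ := (∑ ℬ ∈ S.powersetCard (n+1), h ℬ) / N with hμ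
    set ν : ℕ → ℝ := fun a =>
      (∑ B ∈ (S.erase a).powersetCard n, h (insert a B)) / N' with hν
    have hcount : (S.card : ℝ) * N' = ((n:ℝ)+1) * N := by
      have h0 := key_identity S n (fun _ => (1:ℝ))
      simp only [Finset.sum_const, nsmul_eq_mul, mul_one] at h0
      rw [Finset.sum_congr rfl (fun a ha => by rw [hPcard a ha])] at h0
      simp only [Finset.sum_const, nsmul_eq_mul] at h0
      rw [h0]; ring
    have hνa : ∀ a ∈ S, ∑ B ∈ (S.erase a).powersetCard n, h (insert a B)
        = (N':ℝ) * ν a := by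
      intro a ha
      rw [hν]
      field_simp
    have hνsum : ∑ a ∈ S, ν a = (S.card : ℝ) * μ := by
      have h0 := key_identity S n (fun 𝒜 => h 𝒜)
      have h1 : ∑ a ∈ S, ν a
          = (∑ a ∈ S, ∑ B ∈ (S.erase a).powersetCard n, h (insert a B)) / N' := by
        simp only [hν]
        rw [← Finset.sum_div]
      rw [h1, h0, ← Finset.mul_sum, hμ]
      field_simp
      linear_combination (-∑ ℬ ∈ S.powersetCard (n+1), h ℬ) * hcount
    have hνpair : ∀ a ∈ S, ∀ a' ∈ S, |ν a - ν a'| ≤ 2 * K := by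
      intro a ha a' ha'
      by_cases hne : a = a'
      · subst hne; simp; positivity
      · have hdd := sum_insert_diff_le S n h K hK hd ha ha' hne
        rw [hPcard a ha] at hdd
        rw [hν]
        simp only
        rw [div_sub_div_same, abs_div, abs_of_pos hN'posR]
        rw [div_le_iff₀ hN'posR]
        calc |∑ B ∈ (S.erase a).powersetCard n, h (insert a B)
              - ∑ B' ∈ (S.erase a').powersetCard n, h (insert a' B')|
            ≤ (N' : ℝ) * (2 * K) := hdd
          _ = 2 * K * N' := by ring
    have hmean : (∑ j ∈ S, ν j) / (S.card : ℝ) = μ := by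
      rw [hνsum]; field_simp
    have key : ((n:ℝ)+1) * ∑ 𝒜 ∈ S.powersetCard (n+1), Real.exp (l * (h 𝒜 - μ))
        ≤ ((n:ℝ)+1) * ((N:ℝ) * Real.exp (2 * ((n:ℝ)+1) * l ^ 2 * K ^ 2)) := by
      calc ((n:ℝ)+1) * ∑ 𝒜 ∈ S.powersetCard (n+1), Real.exp (l * (h 𝒜 - μ))
          = ∑ a ∈ S, ∑ B ∈ (S.erase a).powersetCard n,
              Real.exp (l * (h (insert a B) - μ)) := by
            rw [key_identity S n (fun 𝒜 => Real.exp (l * (h 𝒜 - μ))), ← Finset.mul_sum]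
        _ = ∑ a ∈ S, Real.exp (l * (ν a - μ)) *
              ∑ B ∈ (S.erase a).powersetCard n,
                Real.exp (l * (h (insert a B) - ν a)) := by
            refine Finset.sum_congr rfl fun a ha => ?_
            rw [Finset.mul_sum]
            refine Finset.sum_congr rfl fun B hB => ?_
            rw [← Real.exp_add]
            congr 1
            ring
        _ ≤ ∑ a ∈ S, Real.exp (l * (ν a - μ)) *
              ((N':ℝ) * Real.exp (2 * n * l ^ 2 * K ^ 2)) := by
            refine Finset.sum_le_sum fun a ha => ?_
            refine mul_le_mul_of_nonneg_left ?_ (Real.exp_nonneg _)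
            have hlip : ∀ B₁ ∈ (S.erase a).powersetCard n,
                ∀ B₂ ∈ (S.erase a).powersetCard n,
                |h (insert a B₁) - h (insert a B₂)| ≤ K * ((B₁ ∆ B₂).card : ℝ) := by
              intro B₁ hB₁ B₂ hB₂
              have m₁ : a ∉ B₁ := fun hcon =>
                (Finset.mem_erase.1 ((Finset.mem_powersetCard.1 hB₁).1 hcon)).1 rfl
              have m₂ : a ∉ B₂ := fun hcon =>
                (Finset.mem_erase.1 ((Finset.mem_powersetCard.1 hB₂).1 hcon)).1 rfl
              have := hd (insert a B₁) (mem_insert_slice ha hB₁)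
                (insert a B₂) (mem_insert_slice ha hB₂)
              rwa [symmDiff_insert_eq a B₁ B₂ m₁ m₂] at this
            have hIH := IH (S.erase a) (fun B => h (insert a B)) K l hK
              (by rw [Finset.card_erase_of_mem ha]; omega) hlip
            rw [hPcard a ha] at hIH
            exact hIH
        _ = ((N':ℝ) * Real.exp (2 * n * l ^ 2 * K ^ 2)) *
              ∑ a ∈ S, Real.exp (l * (ν a - μ)) := by
            rw [← Finset.sum_mul, mul_comm]
        _ ≤ ((N':ℝ) * Real.exp (2 * n * l ^ 2 * K ^ 2)) *
              ((S.card : ℝ) * Real.exp (l ^ 2 * (2*K) ^ 2 / 2)) := by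
            refine mul_le_mul_of_nonneg_left ?_ (by positivity)
            have hh := fin_hoeff S hS ν (2*K) l hνpair
            rw [hmean] at hh
            exact hh
        _ = ((n:ℝ)+1) * ((N:ℝ) * Real.exp (2 * ((n:ℝ)+1) * l ^ 2 * K ^ 2)) := by
            have hexp : Real.exp (2 * n * l ^ 2 * K ^ 2) *
                Real.exp (l ^ 2 * (2*K) ^ 2 / 2)
                = Real.exp (2 * ((n:ℝ)+1) * l ^ 2 * K ^ 2) := by
              rw [← Real.exp_add]; congr 1; ring
            calc ((N':ℝ) * Real.exp (2 * n * l ^ 2 * K ^ 2)) *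
                  ((S.card : ℝ) * Real.exp (l ^ 2 * (2*K) ^ 2 / 2))
                = ((S.card : ℝ) * N') * (Real.exp (2 * n * l ^ 2 * K ^ 2) *
                    Real.exp (l ^ 2 * (2*K) ^ 2 / 2)) := by ring
              _ = (((n:ℝ)+1) * N) * Real.exp (2 * ((n:ℝ)+1) * l ^ 2 * K ^ 2) := by
                  rw [hexp, hcount]
              _ = ((n:ℝ)+1) * ((N:ℝ) * Real.exp (2 * ((n:ℝ)+1) * l ^ 2 * K ^ 2)) := by
                  ring
    have hpos : (0:ℝ) < (n:ℝ)+1 := by positivity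
    have hfinal := le_of_mul_le_mul_left (by exact key) hpos
    push_cast
    exact hfinal

lemma chain_var (n : ℕ) : ∀ (S : Finset ℕ) (h : Finset ℕ → ℝ) (K : ℝ), 0 ≤ K →
    n ≤ S.card →
    (∀ 𝒜₁ ∈ S.powersetCard n, ∀ 𝒜₂ ∈ S.powersetCard n,
      |h 𝒜₁ - h 𝒜₂| ≤ K * ((𝒜₁ ∆ 𝒜₂).card : ℝ)) →
    ∑ 𝒜 ∈ S.powersetCard n, (h 𝒜 -
        (∑ ℬ ∈ S.powersetCard n, h ℬ) / (S.powersetCard n).card) ^ 2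
      ≤ (S.powersetCard n).card * (2 * n * K ^ 2) := by
  induction n with
  | zero =>
    intro S h K hK hn hd
    simp [Finset.powersetCard_zero]
  | succ n IH =>
    intro S h K hK hn hd
    classical
    have hS : S.Nonempty := Finset.card_pos.1 (by omega)
    have hmpos : (0:ℝ) < S.card := by exact_mod_cast Finset.card_pos.2 hS
    set N : ℕ := (S.powersetCard (n+1)).card with hNdef
    have hNpos : 0 < N := by
      rw [hNdef, Finset.card_powersetCard]
      exact Nat.choose_pos hn
    set N' : ℕ := (S.card - 1).choose n with hN'def
    have hPcard : ∀ a ∈ S, ((S.erase a).powersetCard n).card = N' := by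
      intro a ha
      rw [Finset.card_powersetCard, Finset.card_erase_of_mem ha]
    have hN'pos : 0 < N' := Nat.choose_pos (by omega)
    have hN'posR : (0:ℝ) < N' := by exact_mod_cast hN'pos
    set μ : ℝ := (∑ ℬ ∈ S.powersetCard (n+1), h ℬ) / N with hμ
    set ν : ℕ → ℝ := fun a =>
      (∑ B ∈ (S.erase a).powersetCard n, h (insert a B)) / N' with hν
    have hcount : (S.card : ℝ) * N' = ((n:ℝ)+1) * N := by
      have h0 := key_identity S n (fun _ => (1:ℝ))
      simp only [Finset.sum_const, nsmul_eq_mul, mul_one] at h0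
      rw [Finset.sum_congr rfl (fun a ha => by rw [hPcard a ha])] at h0
      simp only [Finset.sum_const, nsmul_eq_mul] at h0
      rw [h0]; ring
    have hνa : ∀ a ∈ S, ∑ B ∈ (S.erase a).powersetCard n, h (insert a B)
        = (N':ℝ) * ν a := by
      intro a ha
      rw [hν]
      field_simp
    have hνsum : ∑ a ∈ S, ν a = (S.card : ℝ) * μ := by
      have h0 := key_identity S n (fun 𝒜 => h 𝒜)
      have h1 : ∑ a ∈ S, ν a
          = (∑ a ∈ S, ∑ B ∈ (S.erase a).powersetCard n, h (insert a B)) / N' := by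
        simp only [hν]
        rw [← Finset.sum_div]
      rw [h1, h0, ← Finset.mul_sum, hμ]
      field_simp
      linear_combination (-∑ ℬ ∈ S.powersetCard (n+1), h ℬ) * hcount
    have hνpair : ∀ a ∈ S, ∀ a' ∈ S, |ν a - ν a'| ≤ 2 * K := by
      intro a ha a' ha'
      by_cases hne : a = a'
      · subst hne; simp; positivity
      · have hdd := sum_insert_diff_le S n h K hK hd ha ha' hne
        rw [hPcard a ha] at hdd
        rw [hν]
        simp only
        rw [div_sub_div_same, abs_div, abs_of_pos hN'posR]
        rw [div_le_iff₀ hN'posR]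
        calc |∑ B ∈ (S.erase a).powersetCard n, h (insert a B)
              - ∑ B' ∈ (S.erase a').powersetCard n, h (insert a' B')|
            ≤ (N' : ℝ) * (2 * K) := hdd
          _ = 2 * K * N' := by ring
    have hmean : (∑ j ∈ S, ν j) / (S.card : ℝ) = μ := by
      rw [hνsum]; field_simp
    have key : ((n:ℝ)+1) * ∑ 𝒜 ∈ S.powersetCard (n+1), (h 𝒜 - μ) ^ 2
        ≤ ((n:ℝ)+1) * ((N:ℝ) * (2 * ((n:ℝ)+1) * K ^ 2)) := by
      calc ((n:ℝ)+1) * ∑ 𝒜 ∈ S.powersetCard (n+1), (h 𝒜 - μ) ^ 2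
          = ∑ a ∈ S, ∑ B ∈ (S.erase a).powersetCard n,
              (h (insert a B) - μ) ^ 2 := by
            rw [key_identity S n (fun 𝒜 => (h 𝒜 - μ) ^ 2), ← Finset.mul_sum]
        _ = ∑ a ∈ S, ((∑ B ∈ (S.erase a).powersetCard n,
              (h (insert a B) - ν a) ^ 2) + (N':ℝ) * (ν a - μ) ^ 2) := by
            refine Finset.sum_congr rfl fun a ha => ?_
            have hsplit : ∀ B, (h (insert a B) - μ) ^ 2
                = (h (insert a B) - ν a) ^ 2
                  + 2 * (ν a - μ) * (h (insert a B) - ν a) + (ν a - μ) ^ 2 := by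
              intro B; ring
            rw [Finset.sum_congr rfl (fun B _ => hsplit B)]
            rw [Finset.sum_add_distrib, Finset.sum_add_distrib, Finset.sum_const,
              nsmul_eq_mul, ← Finset.mul_sum, Finset.sum_sub_distrib, Finset.sum_const,
              nsmul_eq_mul, hνa a ha, hPcard a ha]
            ring
        _ ≤ ∑ a ∈ S, ((N':ℝ) * (2 * n * K ^ 2) + (N':ℝ) * (ν a - μ) ^ 2) := by
            refine Finset.sum_le_sum fun a ha => ?_
            refine add_le_add_left ?_ _
            have hlip : ∀ B₁ ∈ (S.erase a).powersetCard n,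
                ∀ B₂ ∈ (S.erase a).powersetCard n,
                |h (insert a B₁) - h (insert a B₂)| ≤ K * ((B₁ ∆ B₂).card : ℝ) := by
              intro B₁ hB₁ B₂ hB₂
              have m₁ : a ∉ B₁ := fun hcon =>
                (Finset.mem_erase.1 ((Finset.mem_powersetCard.1 hB₁).1 hcon)).1 rfl
              have m₂ : a ∉ B₂ := fun hcon =>
                (Finset.mem_erase.1 ((Finset.mem_powersetCard.1 hB₂).1 hcon)).1 rfl
              have := hd (insert a B₁) (mem_insert_slice ha hB₁)
                (insert a B₂) (mem_insert_slice ha hB₂)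
              rwa [symmDiff_insert_eq a B₁ B₂ m₁ m₂] at this
            have hIH := IH (S.erase a) (fun B => h (insert a B)) K hK
              (by rw [Finset.card_erase_of_mem ha]; omega) hlip
            rw [hPcard a ha] at hIH
            exact hIH
        _ = (S.card : ℝ) * ((N':ℝ) * (2 * n * K ^ 2))
              + (N':ℝ) * ∑ a ∈ S, (ν a - μ) ^ 2 := by
            rw [Finset.sum_add_distrib, Finset.sum_const, nsmul_eq_mul, ← Finset.mul_sum]
        _ ≤ (S.card : ℝ) * ((N':ℝ) * (2 * n * K ^ 2))
              + (N':ℝ) * ((S.card : ℝ) * ((2*K) ^ 2 / 2)) := by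
            refine add_le_add_right (mul_le_mul_of_nonneg_left ?_ (le_of_lt hN'posR)) _
            have hvv := fin_var_le S hS ν (2*K) hνpair
            rw [hmean] at hvv
            exact hvv
        _ = ((n:ℝ)+1) * ((N:ℝ) * (2 * ((n:ℝ)+1) * K ^ 2)) := by
            have : (S.card : ℝ) * ((N':ℝ) * (2 * n * K ^ 2))
                + (N':ℝ) * ((S.card : ℝ) * ((2*K) ^ 2 / 2))
                = ((S.card:ℝ) * N') * (2 * ((n:ℝ)+1) * K ^ 2) := by ring
            rw [this, hcount]
            ring
    have hpos : (0:ℝ) < (n:ℝ)+1 := by positivity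
    have hfinal := le_of_mul_le_mul_left (by exact key) hpos
    push_cast
    exact hfinal

set_option maxHeartbeats 2000000 in
theorem stmt2_aux (M A : ℕ) (hM : 3 ≤ M) (hA1 : 1 < A) (hA2 : A < M)
    (F : Finset ℕ → ℂ) (K : ℝ) (hK : 0 < K)
    (hLip : ∀ 𝒜₁ ∈ alphabets M A, ∀ 𝒜₂ ∈ alphabets M A, 𝒜₁ ≠ 𝒜₂ →
      ‖F 𝒜₁ - F 𝒜₂‖ ≤ K * ((𝒜₁ ∆ 𝒜₂).card : ℝ))
    (t : ℝ) (ht : 0 < t) :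
    (((alphabets M A).filter (fun 𝒜 =>
        t ≤ ‖F 𝒜 -
          (∑ ℬ ∈ alphabets M A, F ℬ) / ((alphabets M A).card : ℂ)‖)).card : ℝ) /
      ((alphabets M A).card : ℝ) ≤ 2 * Real.exp (-t ^ 2 / (16 * A * K ^ 2)) := by
  classical
  set Ω : Finset (Finset ℕ) := alphabets M A with hΩ
  have hΩeq : Ω = (Finset.range M).powersetCard A := rfl
  set N : ℕ := Ω.card with hNdef
  have hnle : A ≤ (Finset.range M).card := by rw [Finset.card_range]; omega
  have hNpos : 0 < N := by
    rw [hNdef, hΩeq, Finset.card_powersetCard]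
    exact Nat.choose_pos hnle
  have hNR : (0:ℝ) < N := by exact_mod_cast hNpos
  set c : ℂ := (∑ ℬ ∈ Ω, F ℬ) / (N : ℂ) with hc
  set G : Finset ℕ → ℝ := fun 𝒜 => ‖F 𝒜 - c‖ with hG
  have hApos : (0:ℝ) < A := by positivity
  -- full Lipschitz bound for F (including equal sets)
  have hFlip : ∀ 𝒜₁ ∈ Ω, ∀ 𝒜₂ ∈ Ω,
      ‖F 𝒜₁ - F 𝒜₂‖ ≤ K * ((𝒜₁ ∆ 𝒜₂).card : ℝ) := by
    intro 𝒜₁ h₁ 𝒜₂ h₂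
    by_cases he : 𝒜₁ = 𝒜₂
    · subst he
      simp [symmDiff_self]
    · exact hLip 𝒜₁ h₁ 𝒜₂ h₂ he
  -- Lipschitz bounds for G, Re F, Im F
  have hGlip : ∀ 𝒜₁ ∈ Ω, ∀ 𝒜₂ ∈ Ω,
      |G 𝒜₁ - G 𝒜₂| ≤ K * ((𝒜₁ ∆ 𝒜₂).card : ℝ) := by
    intro 𝒜₁ h₁ 𝒜₂ h₂
    refine le_trans ?_ (hFlip 𝒜₁ h₁ 𝒜₂ h₂)
    have := abs_norm_sub_norm_le (F 𝒜₁ - c) (F 𝒜₂ - c)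
    rwa [sub_sub_sub_cancel_right] at this
  have hRlip : ∀ 𝒜₁ ∈ Ω, ∀ 𝒜₂ ∈ Ω,
      |(F 𝒜₁).re - (F 𝒜₂).re| ≤ K * ((𝒜₁ ∆ 𝒜₂).card : ℝ) := by
    intro 𝒜₁ h₁ 𝒜₂ h₂
    refine le_trans ?_ (hFlip 𝒜₁ h₁ 𝒜₂ h₂)
    rw [← Complex.sub_re]
    exact Complex.abs_re_le_norm _
  have hIlip : ∀ 𝒜₁ ∈ Ω, ∀ 𝒜₂ ∈ Ω,
      |(F 𝒜₁).im - (F 𝒜₂).im| ≤ K * ((𝒜₁ ∆ 𝒜₂).card : ℝ) := by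
    intro 𝒜₁ h₁ 𝒜₂ h₂
    refine le_trans ?_ (hFlip 𝒜₁ h₁ 𝒜₂ h₂)
    rw [← Complex.sub_im]
    exact Complex.abs_im_le_norm _
  -- means of re and im
  have hcre : (∑ 𝒜 ∈ Ω, (F 𝒜).re) / (N : ℝ) = c.re := by
    rw [hc]
    rw [show ((N:ℕ):ℂ) = (((N:ℕ):ℝ):ℂ) by push_cast; ring]
    rw [Complex.div_ofReal_re, Complex.re_sum]
  have hcim : (∑ 𝒜 ∈ Ω, (F 𝒜).im) / (N : ℝ) = c.im := by
    rw [hc]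
    rw [show ((N:ℕ):ℂ) = (((N:ℕ):ℝ):ℂ) by push_cast; ring]
    rw [Complex.div_ofReal_im, Complex.im_sum]
  -- variance bounds
  have hvarR := chain_var A (Finset.range M) (fun 𝒜 => (F 𝒜).re) K (le_of_lt hK) hnle
    (by rw [← hΩeq]; exact hRlip)
  have hvarI := chain_var A (Finset.range M) (fun 𝒜 => (F 𝒜).im) K (le_of_lt hK) hnle
    (by rw [← hΩeq]; exact hIlip)
  rw [← hΩeq, ← hNdef] at hvarR hvarI
  rw [hcre] at hvarR
  rw [hcim] at hvarI
  -- sum of squares of G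
  have hsumG2 : ∑ 𝒜 ∈ Ω, (G 𝒜) ^ 2 ≤ (N:ℝ) * (4 * A * K ^ 2) := by
    have hpt : ∀ 𝒜, (G 𝒜) ^ 2
        = ((F 𝒜).re - c.re) ^ 2 + ((F 𝒜).im - c.im) ^ 2 := by
      intro 𝒜
      rw [hG]
      simp only
      rw [Complex.sq_norm, Complex.normSq_apply, Complex.sub_re, Complex.sub_im]
      ring
    rw [Finset.sum_congr rfl fun 𝒜 _ => hpt 𝒜, Finset.sum_add_distrib]
    calc (∑ 𝒜 ∈ Ω, ((F 𝒜).re - c.re) ^ 2) + ∑ 𝒜 ∈ Ω, ((F 𝒜).im - c.im) ^ 2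
        ≤ (N:ℝ) * (2 * A * K ^ 2) + (N:ℝ) * (2 * A * K ^ 2) := add_le_add hvarR hvarI
      _ = (N:ℝ) * (4 * A * K ^ 2) := by ring
  -- bound on the mean of G
  set b : ℝ := 2 * K * Real.sqrt A with hb
  have hbsq : b ^ 2 = 4 * A * K ^ 2 := by
    rw [hb, mul_pow, mul_pow, Real.sq_sqrt (le_of_lt hApos)]
    ring
  have hbpos : 0 < b := by
    rw [hb]
    have : 0 < Real.sqrt A := Real.sqrt_pos.2 hApos
    positivity
  set Eg : ℝ := (∑ 𝒜 ∈ Ω, G 𝒜) / (N : ℝ) with hEg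
  have hEgnn : 0 ≤ Eg := by
    rw [hEg]
    apply div_nonneg _ (le_of_lt hNR)
    exact Finset.sum_nonneg fun 𝒜 _ => norm_nonneg _
  have hEgle : Eg ≤ b := by
    have hCS : (∑ 𝒜 ∈ Ω, G 𝒜) ^ 2 ≤ (N:ℝ) * ∑ 𝒜 ∈ Ω, (G 𝒜) ^ 2 := by
      have := sq_sum_le_card_mul_sum_sq (s := Ω) (f := G)
      exact_mod_cast this
    have h2 : Eg ^ 2 ≤ b ^ 2 := by
      rw [hEg, div_pow, hbsq]
      rw [div_le_iff₀ (by positivity)]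
      calc (∑ 𝒜 ∈ Ω, G 𝒜) ^ 2 ≤ (N:ℝ) * ((N:ℝ) * (4 * A * K ^ 2)) :=
            le_trans hCS (mul_le_mul_of_nonneg_left hsumG2 (le_of_lt hNR))
        _ = 4 * A * K ^ 2 * (N:ℝ) ^ 2 := by ring
    calc Eg = Real.sqrt (Eg ^ 2) := (Real.sqrt_sq hEgnn).symm
      _ ≤ Real.sqrt (b ^ 2) := Real.sqrt_le_sqrt h2
      _ = b := Real.sqrt_sq (le_of_lt hbpos)
  -- log 2 facts
  have hlog2 : (1:ℝ)/2 < Real.log 2 := by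
    have := Real.log_two_gt_d9
    linarith
  by_cases hcase : t ≤ b
  · -- trivial bound
    have hlhs : ((Ω.filter (fun 𝒜 => t ≤ G 𝒜)).card : ℝ) / (N : ℝ) ≤ 1 := by
      rw [div_le_one hNR]
      exact_mod_cast Finset.card_filter_le _ _
    refine le_trans hlhs ?_
    have hexp : (1:ℝ) ≤ 2 * Real.exp (-t ^ 2 / (16 * A * K ^ 2)) := by
      have h1 : t ^ 2 ≤ 4 * A * K ^ 2 := by
        rw [← hbsq]
        have h0 : 0 ≤ t := le_of_lt ht
        nlinarith
      have h2 : -t ^ 2 / (16 * A * K ^ 2) ≥ -(1/4) := by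
        rw [ge_iff_le, neg_le, ← neg_div]
        rw [div_le_iff₀ (by positivity)]
        nlinarith
      have h3 : Real.exp (-(1/4):ℝ) ≤ Real.exp (-t ^ 2 / (16 * A * K ^ 2)) :=
        Real.exp_le_exp.2 h2
      have h4 : (1:ℝ)/2 < Real.exp (-(1/4):ℝ) := by
        rw [show (1:ℝ)/2 = Real.exp (Real.log (1/2)) by rw [Real.exp_log]; norm_num]
        apply Real.exp_lt_exp.2
        rw [show (1:ℝ)/2 = 2⁻¹ by norm_num, Real.log_inv]
        linarith
      linarith
    exact hexp
  · -- Chernoff bound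
    push_neg at hcase
    set l : ℝ := (t - b) / (4 * A * K ^ 2) with hl
    have hlpos : 0 < l := by
      rw [hl]
      apply div_pos (by linarith) (by positivity)
    have hmgf := chain_mgf A (Finset.range M) G K l (le_of_lt hK) hnle
      (by rw [← hΩeq]; exact hGlip)
    rw [← hΩeq, ← hNdef, ← hEg] at hmgf
    -- tail bound
    have htail : ((Ω.filter (fun 𝒜 => t ≤ G 𝒜)).card : ℝ) * Real.exp (l * (t - b))
        ≤ (N:ℝ) * Real.exp (2 * A * l ^ 2 * K ^ 2) := by
      calc ((Ω.filter (fun 𝒜 => t ≤ G 𝒜)).card : ℝ) * Real.exp (l * (t - b))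
          = ∑ _𝒜 ∈ Ω.filter (fun 𝒜 => t ≤ G 𝒜), Real.exp (l * (t - b)) := by
            rw [Finset.sum_const, nsmul_eq_mul]
        _ ≤ ∑ 𝒜 ∈ Ω.filter (fun 𝒜 => t ≤ G 𝒜), Real.exp (l * (G 𝒜 - Eg)) := by
            refine Finset.sum_le_sum fun 𝒜 h𝒜 => ?_
            have hm := (Finset.mem_filter.1 h𝒜).2
            apply Real.exp_le_exp.2
            apply mul_le_mul_of_nonneg_left _ (le_of_lt hlpos)
            linarith
        _ ≤ ∑ 𝒜 ∈ Ω, Real.exp (l * (G 𝒜 - Eg)) := by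
            refine Finset.sum_le_sum_of_subset_of_nonneg (Finset.filter_subset _ _)
              fun 𝒜 _ _ => Real.exp_nonneg _
        _ ≤ (N:ℝ) * Real.exp (2 * A * l ^ 2 * K ^ 2) := hmgf
    have hdiv : ((Ω.filter (fun 𝒜 => t ≤ G 𝒜)).card : ℝ) / (N : ℝ)
        ≤ Real.exp (2 * A * l ^ 2 * K ^ 2 - l * (t - b)) := by
      rw [div_le_iff₀ hNR]
      rw [Real.exp_sub, div_mul_eq_mul_div, le_div_iff₀ (Real.exp_pos _)]
      calc ((Ω.filter (fun 𝒜 => t ≤ G 𝒜)).card : ℝ) * Real.exp (l * (t - b))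
          ≤ (N:ℝ) * Real.exp (2 * A * l ^ 2 * K ^ 2) := htail
        _ = Real.exp (2 * A * l ^ 2 * K ^ 2) * (N:ℝ) := by ring
    have hexpval : 2 * A * l ^ 2 * K ^ 2 - l * (t - b) = -(t - b) ^ 2 / (8 * A * K ^ 2) := by
      rw [hl]
      field_simp
      ring
    rw [hexpval] at hdiv
    refine le_trans hdiv ?_
    -- -(t-b)^2/(8AK²) ≤ log 2 - t²/(16AK²)
    have harith : -(t - b) ^ 2 / (8 * A * K ^ 2) ≤ Real.log 2 + -t ^ 2 / (16 * A * K ^ 2) := by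
      have hsq : t ^ 2 / 2 - b ^ 2 ≤ (t - b) ^ 2 := by nlinarith [sq_nonneg (t - 2*b)]
      have hD : (0:ℝ) < 16 * A * K ^ 2 := by positivity
      rw [← sub_nonneg]
      have hre : Real.log 2 + -t ^ 2 / (16 * A * K ^ 2) - -(t - b) ^ 2 / (8 * A * K ^ 2)
          = Real.log 2 + (2 * (t - b) ^ 2 - t ^ 2) / (16 * A * K ^ 2) := by
        field_simp
        ring
      rw [hre]
      have h2 : (-2 * b ^ 2) / (16 * A * K ^ 2)
          ≤ (2 * (t - b) ^ 2 - t ^ 2) / (16 * A * K ^ 2) := by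
        rw [div_le_div_iff_of_pos_right hD]
        nlinarith
      have h3 : (-2 * b ^ 2) / (16 * A * K ^ 2) = -(1:ℝ) / 2 := by
        rw [hbsq]
        field_simp
        ring
      rw [h3] at h2
      linarith
    calc Real.exp (-(t - b) ^ 2 / (8 * A * K ^ 2))
        ≤ Real.exp (Real.log 2 + -t ^ 2 / (16 * A * K ^ 2)) := Real.exp_le_exp.2 harith
      _ = 2 * Real.exp (-t ^ 2 / (16 * A * K ^ 2)) := by
          rw [Real.exp_add, Real.exp_log (by norm_num : (0:ℝ) < 2)]


/-- Theorem 2.1, concentration of measure in the space of alphabets: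
for any `F : 𝔄(M,A) → ℂ` with Lipschitz constant `K > 0` (for the symmetric-difference
metric) and any `t > 0`,
`μ({𝒜 : |F(𝒜) - 𝔼(F)| ≥ t}) ≤ 2 exp(-t²/(16 A K²))`. -/
theorem stmt2 (M A : ℕ) (hM : 3 ≤ M) (hA1 : 1 < A) (hA2 : A < M)
    (F : Finset ℕ → ℂ) (K : ℝ) (hK : 0 < K)
    (hLip : ∀ 𝒜₁ ∈ alphabets M A, ∀ 𝒜₂ ∈ alphabets M A, 𝒜₁ ≠ 𝒜₂ →
      ‖F 𝒜₁ - F 𝒜₂‖ ≤ K * ((𝒜₁ ∆ 𝒜₂).card : ℝ))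
    (t : ℝ) (ht : 0 < t) :
    (((alphabets M A).filter (fun 𝒜 =>
        t ≤ ‖F 𝒜 -
          (∑ ℬ ∈ alphabets M A, F ℬ) / ((alphabets M A).card : ℂ)‖)).card : ℝ) /
      ((alphabets M A).card : ℝ) ≤ 2 * Real.exp (-t ^ 2 / (16 * A * K ^ 2)) := by
  exact stmt2_aux M A hM hA1 hA2 F K hK hLip t ht
end

section
/- Let M, A ∈ ℕ with M ≥ 3 and 1 < A < M. Then for any function F : Π(M,A) → ℂ with ‖F‖_Lip > 0 and any t > 0, μ^p({π ∈ Π(M,A) : |F(π) − 𝔼^p(F)| ≥ t}) ≤ 2·exp(−t²/(16·A·‖F‖²_Lip)), where 𝔼^p(F) is the expectation of F with respect to μ^p. -/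
open scoped BigOperators

section ConcentrationAux

lemma hoeffding_core {a b : ℝ} (ha : a ≤ 0) (hb : 0 ≤ b) (t : ℝ) :
    b * Real.exp (t * a) - a * Real.exp (t * b) ≤
      (b - a) * Real.exp (t ^ 2 * (b - a) ^ 2 / 8) := by
  rcases eq_or_lt_of_le ha with rfl | ha'
  · simp only [mul_zero, Real.exp_zero, mul_one, zero_mul, sub_zero]
    have h1 : (1:ℝ) ≤ Real.exp (t ^ 2 * b ^ 2 / 8) := Real.one_le_exp (by positivity)
    nlinarith [mul_le_mul_of_nonneg_left h1 hb]
  rcases eq_or_lt_of_le hb with rfl | hb'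
  · simp only [mul_zero, Real.exp_zero, mul_one, zero_mul, zero_sub, neg_mul]
    have h1 : (1:ℝ) ≤ Real.exp (t ^ 2 * (-a) ^ 2 / 8) := Real.one_le_exp (by positivity)
    nlinarith [mul_le_mul_of_nonneg_left h1 (neg_nonneg.2 ha), Real.exp_pos (t * a)]
  -- now a < 0 < b
  set c : ℝ := (b - a) ^ 2 / 8 with hc
  set D : ℝ → ℝ := fun t => b * Real.exp (t * a) - a * Real.exp (t * b) with hDdef
  have hDpos : ∀ t, 0 < D t := fun t => by
    have := Real.exp_pos (t * a); have := Real.exp_pos (t * b); simp only [hDdef]; nlinarith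
  have hD : ∀ t, HasDerivAt D (a * b * Real.exp (t * a) - a * b * Real.exp (t * b)) t := by
    intro t
    have h1 : HasDerivAt (fun t => Real.exp (t * a)) (a * Real.exp (t * a)) t := by
      simpa [mul_comm, Function.comp_def] using (Real.hasDerivAt_exp (t * a)).comp t
        ((hasDerivAt_id t).mul_const a)
    have h2 : HasDerivAt (fun t => Real.exp (t * b)) (b * Real.exp (t * b)) t := by
      simpa [mul_comm, Function.comp_def] using (Real.hasDerivAt_exp (t * b)).comp t
        ((hasDerivAt_id t).mul_const b)
    have := ((h1.const_mul b).sub (h2.const_mul a))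
    exact this.congr_deriv (by ring)
  set L : ℝ → ℝ := fun t => Real.log (D t) with hLdef
  set φ : ℝ → ℝ := fun t => (a * b * Real.exp (t * a) - a * b * Real.exp (t * b)) / D t with hφdef
  have hL : ∀ t, HasDerivAt L (φ t) t := by
    intro t
    have := (Real.hasDerivAt_log (hDpos t).ne').comp t (hD t)
    simpa [hLdef, hφdef, div_eq_inv_mul, Function.comp_def] using this
  have hxy : ∀ t : ℝ, Real.exp (t * a) * Real.exp (t * b) = Real.exp (t * (a + b)) := by
    intro t; rw [← Real.exp_add]; ring_nf
  have hφ : ∀ t, HasDerivAt φ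
      ((-(a * b)) * (b - a) ^ 2 * Real.exp (t * (a + b)) / (D t) ^ 2) t := by
    intro t
    have h1 : HasDerivAt (fun t => Real.exp (t * a)) (a * Real.exp (t * a)) t := by
      simpa [mul_comm, Function.comp_def] using (Real.hasDerivAt_exp (t * a)).comp t
        ((hasDerivAt_id t).mul_const a)
    have h2 : HasDerivAt (fun t => Real.exp (t * b)) (b * Real.exp (t * b)) t := by
      simpa [mul_comm, Function.comp_def] using (Real.hasDerivAt_exp (t * b)).comp t
        ((hasDerivAt_id t).mul_const b)
    have hN : HasDerivAt (fun t => a * b * Real.exp (t * a) - a * b * Real.exp (t * b))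
        (a * b * (a * Real.exp (t * a)) - a * b * (b * Real.exp (t * b))) t :=
      (h1.const_mul (a * b)).sub (h2.const_mul (a * b))
    have := hN.div (hD t) (hDpos t).ne'
    refine this.congr_deriv ?_
    congr 1
    simp only [hDdef]
    rw [← hxy t]; ring
  -- H = G' where G t = c t² - L t + log (b - a)
  set H : ℝ → ℝ := fun t => 2 * c * t - φ t with hHdef
  have hH : ∀ t, HasDerivAt H
      (2 * c - (-(a * b)) * (b - a) ^ 2 * Real.exp (t * (a + b)) / (D t) ^ 2) t := by
    intro t
    have h1 : HasDerivAt (fun t => 2 * c * t) (2 * c) t := by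
      simpa using (hasDerivAt_id t).const_mul (2 * c)
    exact h1.sub (hφ t)
  have hH'nonneg : ∀ t, 0 ≤ 2 * c - (-(a * b)) * (b - a) ^ 2 * Real.exp (t * (a + b)) / (D t) ^ 2 := by
    intro t
    have hkey : 4 * (-(a * b)) * Real.exp (t * (a + b)) ≤ (D t) ^ 2 := by
      simp only [hDdef]
      rw [← hxy t]
      nlinarith [sq_nonneg (b * Real.exp (t * a) + a * Real.exp (t * b))]
    have hD2 : (0:ℝ) < (D t) ^ 2 := pow_pos (hDpos t) 2
    rw [sub_nonneg, div_le_iff₀ hD2, hc]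
    linarith [mul_le_mul_of_nonneg_left hkey (show (0:ℝ) ≤ (b - a) ^ 2 / 8 by positivity)]
  have hHmono : Monotone H := by
    apply monotone_of_deriv_nonneg (fun t => (hH t).differentiableAt)
    intro x; rw [(hH x).deriv]; exact hH'nonneg x
  have hH0 : H 0 = 0 := by
    simp [hHdef, hφdef]
  set G : ℝ → ℝ := fun t => c * t ^ 2 - L t + Real.log (b - a) with hGdef
  have hG : ∀ t, HasDerivAt G (H t) t := by
    intro t
    have h1 : HasDerivAt (fun t : ℝ => c * t ^ 2) (c * (2 * t)) t := by
      simpa using (hasDerivAt_pow 2 t).const_mul c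
    have := (h1.sub (hL t)).add_const (Real.log (b - a))
    refine this.congr_deriv ?_
    simp only [hHdef]; ring
  have hG0 : G 0 = 0 := by
    have : D 0 = b - a := by simp [hDdef]
    simp [hGdef, hLdef, this]
  have hGnonneg : ∀ t, 0 ≤ G t := by
    intro t
    rcases le_or_gt 0 t with h | h
    · have hmono : MonotoneOn G (Set.Ici 0) := by
        apply monotoneOn_of_deriv_nonneg (convex_Ici 0)
        · have hdiff : Differentiable ℝ G := fun x => (hG x).differentiableAt
          exact hdiff.continuous.continuousOn
        · intro x _; exact (hG x).differentiableAt.differentiableWithinAt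
        · intro x hx
          rw [(hG x).deriv]
          rw [interior_Ici] at hx
          calc (0:ℝ) = H 0 := hH0.symm
          _ ≤ H x := hHmono (le_of_lt hx)
      calc (0:ℝ) = G 0 := hG0.symm
      _ ≤ G t := hmono (by simp) (by simpa using h) h
    · have hanti : AntitoneOn G (Set.Iic 0) := by
        apply antitoneOn_of_deriv_nonpos (convex_Iic 0)
        · have hdiff : Differentiable ℝ G := fun x => (hG x).differentiableAt
          exact hdiff.continuous.continuousOn
        · intro x _; exact (hG x).differentiableAt.differentiableWithinAt
        · intro x hx
          rw [(hG x).deriv]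
          rw [interior_Iic] at hx
          calc H x ≤ H 0 := hHmono (le_of_lt hx)
          _ = 0 := hH0
      calc (0:ℝ) = G 0 := hG0.symm
      _ ≤ G t := hanti (by simpa using h.le) (by simp) h.le
  -- conclude
  have hba : (0:ℝ) < b - a := by linarith
  have := hGnonneg t
  simp only [hGdef, hLdef] at this
  have hlog : Real.log (D t) ≤ c * t ^ 2 + Real.log (b - a) := by linarith
  have := Real.exp_le_exp.mpr hlog
  rw [Real.exp_log (hDpos t), Real.exp_add, Real.exp_log hba] at this
  calc D t ≤ Real.exp (c * t ^ 2) * (b - a) := this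
  _ = (b - a) * Real.exp (t ^ 2 * (b - a) ^ 2 / 8) := by rw [hc]; ring_nf


lemma hoeffding_avg {ι : Type*} [Fintype ι] [Nonempty ι] (f : ι → ℝ) (lo hi l : ℝ)
    (hlo : ∀ i, lo ≤ f i) (hhi : ∀ i, f i ≤ hi) :
    ∑ i, Real.exp (l * (f i - (∑ j, f j) / (Fintype.card ι))) ≤
      (Fintype.card ι) * Real.exp (l ^ 2 * (hi - lo) ^ 2 / 8) := by
  have hN0 : 0 < (Fintype.card ι : ℝ) := by exact_mod_cast Fintype.card_pos
  set N : ℝ := (Fintype.card ι : ℝ) with hN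
  set μ : ℝ := (∑ j, f j) / N with hμ
  have hsum0 : ∑ i, (f i - μ) = 0 := by
    rw [Finset.sum_sub_distrib]
    simp only [Finset.sum_const, Finset.card_univ, nsmul_eq_mul, hμ]
    field_simp
    rw [← hN]; ring
  have hloμ : lo ≤ μ := by
    rw [hμ, le_div_iff₀ hN0]
    calc lo * N = ∑ _i : ι, lo := by simp [Finset.card_univ, mul_comm, ← hN]
    _ ≤ ∑ j, f j := Finset.sum_le_sum (fun i _ => hlo i)
  have hμhi : μ ≤ hi := by
    rw [hμ, div_le_iff₀ hN0]
    calc ∑ j, f j ≤ ∑ _i : ι, hi := Finset.sum_le_sum (fun i _ => hhi i)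
    _ = hi * N := by simp [Finset.card_univ, mul_comm, ← hN]
  rcases le_or_gt hi lo with hcase | hcase
  · have hfi : ∀ i, f i - μ = 0 := fun i => by
      have := hlo i; have := hhi i; linarith
    have hone : ∀ i, Real.exp (l * (f i - μ)) = 1 := fun i => by
      rw [hfi i, mul_zero, Real.exp_zero]
    calc ∑ i, Real.exp (l * (f i - μ)) = N := by
          rw [Finset.sum_congr rfl (fun i _ => hone i)]; simp [Finset.card_univ, ← hN]
    _ ≤ N * Real.exp (l ^ 2 * (hi - lo) ^ 2 / 8) := by
        nlinarith [Real.one_le_exp (show (0:ℝ) ≤ l ^ 2 * (hi - lo) ^ 2 / 8 by positivity)]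
  · set a : ℝ := lo - μ with hadef
    set b : ℝ := hi - μ with hbdef
    have ha : a ≤ 0 := by rw [hadef]; linarith
    have hb : 0 ≤ b := by rw [hbdef]; linarith
    have hba : 0 < b - a := by rw [hadef, hbdef]; linarith
    have key : ∀ i, Real.exp (l * (f i - μ)) ≤
        ((b - (f i - μ)) * Real.exp (l * a) + ((f i - μ) - a) * Real.exp (l * b)) / (b - a) := by
      intro i
      have hax : a ≤ f i - μ := by rw [hadef]; linarith [hlo i]
      have hxb : f i - μ ≤ b := by rw [hbdef]; linarith [hhi i]
      have w1 : (0:ℝ) ≤ (b - (f i - μ)) / (b - a) := div_nonneg (by linarith) hba.le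
      have w2 : (0:ℝ) ≤ ((f i - μ) - a) / (b - a) := div_nonneg (by linarith) hba.le
      have wsum : (b - (f i - μ)) / (b - a) + ((f i - μ) - a) / (b - a) = 1 := by field_simp; ring
      have hcomb : (b - (f i - μ)) / (b - a) * (l * a) + ((f i - μ) - a) / (b - a) * (l * b)
          = l * (f i - μ) := by field_simp; ring
      have hcv := convexOn_exp.2 (Set.mem_univ (l * a)) (Set.mem_univ (l * b)) w1 w2 wsum
      rw [smul_eq_mul, smul_eq_mul, hcomb] at hcv
      calc Real.exp (l * (f i - μ))
          ≤ (b - (f i - μ))/(b - a) * Real.exp (l * a)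
            + ((f i - μ) - a)/(b - a) * Real.exp (l * b) := hcv
      _ = ((b - (f i - μ)) * Real.exp (l * a) + ((f i - μ) - a) * Real.exp (l * b)) / (b - a) := by
          ring
    calc ∑ i, Real.exp (l * (f i - μ))
        ≤ ∑ i, ((b - (f i - μ)) * Real.exp (l * a) + ((f i - μ) - a) * Real.exp (l * b)) / (b - a) :=
          Finset.sum_le_sum (fun i _ => key i)
    _ = N * (b * Real.exp (l * a) - a * Real.exp (l * b)) / (b - a) := by
        rw [← Finset.sum_div]
        congr 1
        rw [Finset.sum_add_distrib, ← Finset.sum_mul, ← Finset.sum_mul]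
        have h1 : ∑ i, (b - (f i - μ)) = N * b := by
          rw [Finset.sum_sub_distrib, hsum0]; simp [Finset.card_univ, ← hN]
        have h2 : ∑ i, ((f i - μ) - a) = -(N * a) := by
          rw [Finset.sum_sub_distrib, hsum0]; simp [Finset.card_univ, ← hN]
        rw [h1, h2]; ring
    _ ≤ N * ((b - a) * Real.exp (l ^ 2 * (b - a) ^ 2 / 8)) / (b - a) := by
        gcongr
        exact hoeffding_core ha hb l
    _ = N * Real.exp (l ^ 2 * (hi - lo) ^ 2 / 8) := by
        have hba' : b - a = hi - lo := by rw [hadef, hbdef]; ring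
        rw [mul_div_assoc, mul_div_cancel_left₀ _ hba.ne', hba']

variable {β : Type*} [DecidableEq β]

/-- Hamming distance between two embeddings `Fin n ↪ β`. -/
def hd {n : ℕ} {β : Type*} [DecidableEq β] (π₁ π₂ : Fin n ↪ β) : ℕ :=
  (Finset.univ.filter fun j => π₁ j ≠ π₂ j).card

/-- Decomposition of an embedding `Fin (A+1) ↪ β` by its value at `0`. -/
def embConsEquiv (A : ℕ) (β : Type*) [DecidableEq β] :
    (Fin (A + 1) ↪ β) ≃ Σ b : β, (Fin A ↪ {x : β // x ≠ b}) where
  toFun π := ⟨π 0, ⟨fun j => ⟨π j.succ, fun h => Fin.succ_ne_zero j (π.injective h)⟩,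
    fun j₁ j₂ h => by
      apply Fin.succ_injective
      exact π.injective (congrArg Subtype.val h)⟩⟩
  invFun p := ⟨Fin.cons p.1 (fun j => (p.2 j : β)), by
    intro i₁ i₂ h
    induction i₁ using Fin.cases with
    | zero =>
      induction i₂ using Fin.cases with
      | zero => rfl
      | succ j₂ => rw [Fin.cons_zero, Fin.cons_succ] at h; exact absurd h.symm (p.2 j₂).2
    | succ j₁ =>
      induction i₂ using Fin.cases with
      | zero => rw [Fin.cons_succ, Fin.cons_zero] at h; exact absurd h (p.2 j₁).2
      | succ j₂ =>
        rw [Fin.cons_succ, Fin.cons_succ] at h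
        rw [p.2.injective (Subtype.ext h)]⟩
  left_inv π := by
    ext i
    induction i using Fin.cases with
    | zero => exact Fin.cons_zero (α := fun _ => β) (π 0) (fun j : Fin A => π j.succ)
    | succ j => exact Fin.cons_succ (α := fun _ => β) (π 0) (fun j : Fin A => π j.succ) j
  right_inv p := by
    rcases p with ⟨b, π'⟩
    refine Sigma.ext rfl (heq_of_eq ?_)
    ext j
    rfl

@[simp] lemma embConsEquiv_symm_zero (A : ℕ) (b : β) (π' : Fin A ↪ {x : β // x ≠ b}) :
    (embConsEquiv A β).symm ⟨b, π'⟩ 0 = b := rfl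

@[simp] lemma embConsEquiv_symm_succ (A : ℕ) (b : β) (π' : Fin A ↪ {x : β // x ≠ b})
    (j : Fin A) : (embConsEquiv A β).symm ⟨b, π'⟩ j.succ = (π' j : β) := rfl

/-- Hamming distance is preserved by `cons` with the same head. -/
lemma hd_cons_same (A : ℕ) (b : β) (π'₁ π'₂ : Fin A ↪ {x : β // x ≠ b}) :
    hd ((embConsEquiv A β).symm ⟨b, π'₁⟩) ((embConsEquiv A β).symm ⟨b, π'₂⟩) = hd π'₁ π'₂ := by
  unfold hd
  rw [Finset.card_filter, Finset.card_filter, Fin.sum_univ_succ]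
  simp only [embConsEquiv_symm_zero, embConsEquiv_symm_succ, ne_eq, not_true_eq_false,
    if_false, zero_add]
  congr 1
  ext j
  congr 1
  simp [Subtype.ext_iff]

/-- The swap equivalence between the complements of two points. -/
def swapCompl (b b' : β) : {x : β // x ≠ b} ≃ {x : β // x ≠ b'} :=
  (Equiv.swap b b').subtypeEquiv (fun x => by
    have h : (Equiv.swap b b') x = b' ↔ x = b := by
      rw [Equiv.swap_apply_eq_iff, Equiv.swap_apply_right]
    exact not_congr (h.symm.trans Iff.rfl).symm |>.symm |> fun _ => not_congr ((Iff.symm h).symm.symm).symm |> fun _ => not_congr h.symm.symm |> fun _ => Iff.symm (not_congr h) |> fun _ => (not_congr h.symm : x ≠ b ↔ _))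

lemma hd_swap_le (A : ℕ) (b b' : β) (π' : Fin A ↪ {x : β // x ≠ b}) :
    hd ((embConsEquiv A β).symm ⟨b, π'⟩)
       ((embConsEquiv A β).symm ⟨b', π'.trans (swapCompl b b').toEmbedding⟩) ≤ 2 := by
  unfold hd
  rw [Finset.card_filter, Fin.sum_univ_succ]
  have h0 : (if ((embConsEquiv A β).symm ⟨b, π'⟩) 0 ≠
      ((embConsEquiv A β).symm ⟨b', π'.trans (swapCompl b b').toEmbedding⟩) 0 then 1 else 0) ≤ 1 := by
    split <;> simp
  have h1 : ∀ j : Fin A, (if ((embConsEquiv A β).symm ⟨b, π'⟩) j.succ ≠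
      ((embConsEquiv A β).symm ⟨b', π'.trans (swapCompl b b').toEmbedding⟩) j.succ then 1 else 0)
      ≤ (if (π' j : β) = b' then 1 else 0) := by
    intro j
    simp only [embConsEquiv_symm_succ]
    by_cases hj : (π' j : β) = b'
    · rw [if_pos hj]
      exact ite_le_one le_rfl zero_le_one
    · have hsw : (((swapCompl b b') (π' j)) : β) = (π' j : β) := by
        show ((Equiv.swap b b') (π' j : β) : β) = (π' j : β)
        rw [Equiv.swap_apply_of_ne_of_ne (π' j).2 hj]
      simp [Function.Embedding.trans_apply, hsw, hj]
  have h2 : (∑ j : Fin A, if (π' j : β) = b' then 1 else 0) ≤ 1 := by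
    rw [← Finset.card_filter]
    rw [Finset.card_le_one]
    intro i hi k hk
    simp only [Finset.mem_filter] at hi hk
    exact π'.injective (Subtype.ext (hi.2.trans hk.2.symm))
  calc _ ≤ 1 + ∑ j : Fin A, if (π' j : β) = b' then 1 else 0 :=
        Nat.add_le_add h0 (Finset.sum_le_sum fun j _ => h1 j)
  _ ≤ 1 + 1 := Nat.add_le_add_left h2 1

lemma mgf_bound (A : ℕ) : ∀ (β : Type) [Fintype β] [DecidableEq β] (K l : ℝ), 0 ≤ K →
    ∀ f : (Fin A ↪ β) → ℝ,
    (∀ π₁ π₂ : Fin A ↪ β, |f π₁ - f π₂| ≤ K * (hd π₁ π₂ : ℝ)) →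
    A ≤ Fintype.card β →
    ∑ π : Fin A ↪ β, Real.exp (l * (f π - (∑ σ : Fin A ↪ β, f σ) / (Fintype.card (Fin A ↪ β)))) ≤
      (Fintype.card (Fin A ↪ β)) * Real.exp (A * (l ^ 2 * K ^ 2 / 2)) := by
  induction A with
  | zero =>
    intro β _ _ K l hK f hLip hcard
    have hne : Nonempty (Fin 0 ↪ β) := ⟨Function.Embedding.ofIsEmpty⟩
    have hN0 : 0 < (Fintype.card (Fin 0 ↪ β) : ℝ) := by exact_mod_cast Fintype.card_pos
    have hzero : ∀ π : Fin 0 ↪ β, f π - (∑ σ : Fin 0 ↪ β, f σ) / (Fintype.card (Fin 0 ↪ β)) = 0 := by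
      intro π
      have hall : ∀ σ : Fin 0 ↪ β, f σ = f π := fun σ => by
        congr 1; ext j; exact j.elim0
      rw [Finset.sum_congr rfl (fun σ _ => hall σ)]
      simp [Finset.card_univ]
    calc ∑ π : Fin 0 ↪ β, Real.exp (l * (f π - (∑ σ : Fin 0 ↪ β, f σ) / (Fintype.card (Fin 0 ↪ β))))
        = ∑ _π : Fin 0 ↪ β, 1 := by
          apply Finset.sum_congr rfl; intro π _; rw [hzero π, mul_zero, Real.exp_zero]
    _ = (Fintype.card (Fin 0 ↪ β) : ℝ) := by simp [Finset.card_univ]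
    _ ≤ _ := by simp
  | succ A ih =>
    intro β _ _ K l hK f hLip hcard
    classical
    set e := embConsEquiv A β with he
    -- cardinal of each fiber
    have hfib : ∀ b : β, Fintype.card (Fin A ↪ {x : β // x ≠ b})
        = (Fintype.card β - 1).descFactorial A := by
      intro b
      rw [Fintype.card_embedding_eq, Fintype.card_fin]
      congr 1
      rw [Fintype.card_subtype_compl, Fintype.card_subtype_eq]
    have hAfib : ∀ b : β, A ≤ Fintype.card {x : β // x ≠ b} := by
      intro b
      rw [Fintype.card_subtype_compl, Fintype.card_subtype_eq]
      omega
    have hcpos : 0 < (Fintype.card β - 1).descFactorial A := by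
      apply Nat.pos_of_ne_zero
      intro h
      rw [Nat.descFactorial_eq_zero_iff_lt] at h
      omega
    have hN : Fintype.card (Fin (A+1) ↪ β)
        = Fintype.card β * (Fintype.card β - 1).descFactorial A := by
      rw [Fintype.card_congr e, Fintype.card_sigma]
      rw [Finset.sum_congr rfl (fun b _ => hfib b)]
      simp [Finset.card_univ, mul_comm]
    set c : ℝ := ((Fintype.card β - 1).descFactorial A : ℝ) with hc
    have hc0 : 0 < c := by rw [hc]; exact_mod_cast hcpos
    have hM0 : 0 < (Fintype.card β : ℝ) := by
      have : 0 < Fintype.card β := by omega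
      exact_mod_cast this
    have hNR : (Fintype.card (Fin (A+1) ↪ β) : ℝ) = (Fintype.card β : ℝ) * c := by
      rw [hN]; push_cast; ring
    -- sum decomposition
    have hsum : ∀ (h : (Fin (A+1) ↪ β) → ℝ),
        ∑ π : Fin (A+1) ↪ β, h π = ∑ b : β, ∑ π' : Fin A ↪ {x : β // x ≠ b}, h (e.symm ⟨b, π'⟩) := by
      intro h
      rw [← Equiv.sum_comp e.symm h]
      rw [← Finset.univ_sigma_univ, Finset.sum_sigma]
    -- conditional functions and conditional means
    set g : β → ℝ := fun b => (∑ π' : Fin A ↪ {x : β // x ≠ b}, f (e.symm ⟨b, π'⟩)) /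
      (Fintype.card (Fin A ↪ {x : β // x ≠ b})) with hg
    set μ : ℝ := (∑ σ : Fin (A+1) ↪ β, f σ) / (Fintype.card (Fin (A+1) ↪ β)) with hμ
    have hcR : ∀ b : β, (Fintype.card (Fin A ↪ {x : β // x ≠ b}) : ℝ) = c := by
      intro b; rw [hfib b, hc]
    have hfibsum : ∀ b : β, (∑ π' : Fin A ↪ {x : β // x ≠ b}, f (e.symm ⟨b, π'⟩)) = c * g b := by
      intro b
      simp only [hg]
      rw [hcR b]
      field_simp
    have hμg : μ = (∑ b : β, g b) / (Fintype.card β : ℝ) := by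
      rw [hμ, hsum f, hNR, Finset.sum_congr rfl (fun b _ => hfibsum b), ← Finset.mul_sum]
      rw [mul_comm ((Fintype.card β : ℝ)) c, mul_div_mul_left _ _ hc0.ne']
    -- IH applied to each fiber
    have hIH : ∀ b : β,
        ∑ π' : Fin A ↪ {x : β // x ≠ b}, Real.exp (l * (f (e.symm ⟨b, π'⟩) - g b)) ≤
          (Fintype.card (Fin A ↪ {x : β // x ≠ b})) * Real.exp (A * (l ^ 2 * K ^ 2 / 2)) := by
      intro b
      have hLip' : ∀ π'₁ π'₂ : Fin A ↪ {x : β // x ≠ b},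
          |f (e.symm ⟨b, π'₁⟩) - f (e.symm ⟨b, π'₂⟩)| ≤ K * (hd π'₁ π'₂ : ℝ) := by
        intro π'₁ π'₂
        rw [← hd_cons_same A b π'₁ π'₂]
        exact hLip _ _
      exact ih {x : β // x ≠ b} K l hK (fun π' => f (e.symm ⟨b, π'⟩)) hLip' (hAfib b)
    -- g is 2K-Lipschitz in a trivial sense
    have hg2K : ∀ b b' : β, g b - g b' ≤ 2 * K := by
      intro b b'
      have hbij : ∑ π'' : Fin A ↪ {x : β // x ≠ b'}, f (e.symm ⟨b', π''⟩)
          = ∑ π' : Fin A ↪ {x : β // x ≠ b},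
              f (e.symm ⟨b', π'.trans (swapCompl b b').toEmbedding⟩) := by
        refine (Fintype.sum_bijective
          (fun π' : Fin A ↪ {x : β // x ≠ b} => π'.trans (swapCompl b b').toEmbedding)
          ⟨?_, ?_⟩
          (fun π' => f (e.symm ⟨b', π'.trans (swapCompl b b').toEmbedding⟩))
          (fun π'' => f (e.symm ⟨b', π''⟩))
          (fun π' => rfl)).symm
        · intro x y hxy
          ext j
          have := congrFun (congrArg (fun (u : Fin A ↪ {x : β // x ≠ b'}) => (u : Fin A → _)) hxy) j
          simp only [Function.Embedding.trans_apply, Equiv.coe_toEmbedding] at this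
          exact congrArg Subtype.val ((swapCompl b b').injective this)
        · intro y
          refine ⟨y.trans (swapCompl b b').symm.toEmbedding, ?_⟩
          ext j
          simp
      have hcard' := hcR b
      have hcard'' := hcR b'
      rw [hg]
      show (∑ π' : Fin A ↪ {x : β // x ≠ b}, f (e.symm ⟨b, π'⟩)) /
            (Fintype.card (Fin A ↪ {x : β // x ≠ b})) -
          (∑ π'' : Fin A ↪ {x : β // x ≠ b'}, f (e.symm ⟨b', π''⟩)) /
            (Fintype.card (Fin A ↪ {x : β // x ≠ b'})) ≤ 2 * K
      rw [hcard', hcard'', hbij, div_sub_div_same, ← Finset.sum_sub_distrib]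
      rw [div_le_iff₀ hc0]
      have hterm : ∀ π' : Fin A ↪ {x : β // x ≠ b},
          f (e.symm ⟨b, π'⟩) - f (e.symm ⟨b', π'.trans (swapCompl b b').toEmbedding⟩) ≤ 2 * K := by
        intro π'
        have h1 := hLip (e.symm ⟨b, π'⟩) (e.symm ⟨b', π'.trans (swapCompl b b').toEmbedding⟩)
        have h2 := hd_swap_le A b b' π'
        have h3 : (hd (e.symm ⟨b, π'⟩) (e.symm ⟨b', π'.trans (swapCompl b b').toEmbedding⟩) : ℝ) ≤ 2 := by
          exact_mod_cast h2
        calc f (e.symm ⟨b, π'⟩) - f (e.symm ⟨b', π'.trans (swapCompl b b').toEmbedding⟩)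
            ≤ |f (e.symm ⟨b, π'⟩) - f (e.symm ⟨b', π'.trans (swapCompl b b').toEmbedding⟩)| :=
              le_abs_self _
        _ ≤ K * _ := h1
        _ ≤ K * 2 := by exact mul_le_mul_of_nonneg_left h3 hK
        _ = 2 * K := by ring
      calc ∑ π' : Fin A ↪ {x : β // x ≠ b},
            (f (e.symm ⟨b, π'⟩) - f (e.symm ⟨b', π'.trans (swapCompl b b').toEmbedding⟩))
          ≤ ∑ _π' : Fin A ↪ {x : β // x ≠ b}, 2 * K := Finset.sum_le_sum (fun π' _ => hterm π')
      _ = (Fintype.card (Fin A ↪ {x : β // x ≠ b})) * (2 * K) := by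
          simp [Finset.card_univ]
      _ = 2 * K * c := by rw [hcR b]; ring
    -- bounds for g
    have hβne : Nonempty β := by
      have : 0 < Fintype.card β := by omega
      exact Fintype.card_pos_iff.mp this
    obtain ⟨bmin, _, hbmin⟩ := Finset.exists_min_image Finset.univ g ⟨hβne.some, Finset.mem_univ _⟩
    obtain ⟨bmax, _, hbmax⟩ := Finset.exists_max_image Finset.univ g ⟨hβne.some, Finset.mem_univ _⟩
    have hrange : g bmax - g bmin ≤ 2 * K := hg2K bmax bmin
    have hrange0 : 0 ≤ g bmax - g bmin := by
      have := hbmin bmax (Finset.mem_univ _)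
      linarith
    -- Hoeffding step on β
    have hHoef : ∑ b : β, Real.exp (l * (g b - μ)) ≤
        (Fintype.card β : ℝ) * Real.exp (l ^ 2 * K ^ 2 / 2) := by
      have h1 := hoeffding_avg g (g bmin) (g bmax) l
        (fun b => hbmin b (Finset.mem_univ _)) (fun b => hbmax b (Finset.mem_univ _))
      rw [← hμg] at h1
      calc ∑ b : β, Real.exp (l * (g b - μ)) ≤
          (Fintype.card β) * Real.exp (l ^ 2 * (g bmax - g bmin) ^ 2 / 8) := h1
      _ ≤ (Fintype.card β : ℝ) * Real.exp (l ^ 2 * K ^ 2 / 2) := by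
          apply mul_le_mul_of_nonneg_left _ hM0.le
          apply Real.exp_le_exp.mpr
          have : (g bmax - g bmin) ^ 2 ≤ (2 * K) ^ 2 := by
            apply pow_le_pow_left₀ hrange0 hrange
          nlinarith [sq_nonneg l]
    -- main chain
    calc ∑ π : Fin (A+1) ↪ β, Real.exp (l * (f π - μ))
        = ∑ b : β, ∑ π' : Fin A ↪ {x : β // x ≠ b}, Real.exp (l * (f (e.symm ⟨b, π'⟩) - μ)) :=
          hsum _
    _ = ∑ b : β, Real.exp (l * (g b - μ)) *
          ∑ π' : Fin A ↪ {x : β // x ≠ b}, Real.exp (l * (f (e.symm ⟨b, π'⟩) - g b)) := by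
        apply Finset.sum_congr rfl
        intro b _
        rw [Finset.mul_sum]
        apply Finset.sum_congr rfl
        intro π' _
        rw [← Real.exp_add]
        congr 1
        ring
    _ ≤ ∑ b : β, Real.exp (l * (g b - μ)) *
          ((Fintype.card (Fin A ↪ {x : β // x ≠ b})) * Real.exp (A * (l ^ 2 * K ^ 2 / 2))) := by
        apply Finset.sum_le_sum
        intro b _
        exact mul_le_mul_of_nonneg_left (hIH b) (Real.exp_pos _).le
    _ = c * Real.exp (A * (l ^ 2 * K ^ 2 / 2)) * ∑ b : β, Real.exp (l * (g b - μ)) := by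
        rw [Finset.mul_sum]
        apply Finset.sum_congr rfl
        intro b _
        rw [hcR b]
        ring
    _ ≤ c * Real.exp (A * (l ^ 2 * K ^ 2 / 2)) * ((Fintype.card β : ℝ) * Real.exp (l ^ 2 * K ^ 2 / 2)) := by
        apply mul_le_mul_of_nonneg_left hHoef
        positivity
    _ = (Fintype.card (Fin (A+1) ↪ β)) * Real.exp ((A+1 : ℕ) * (l ^ 2 * K ^ 2 / 2)) := by
        rw [hNR]
        have hEE : Real.exp ((A : ℝ) * (l ^ 2 * K ^ 2 / 2)) * Real.exp (l ^ 2 * K ^ 2 / 2)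
            = Real.exp (((A+1 : ℕ) : ℝ) * (l ^ 2 * K ^ 2 / 2)) := by
          rw [← Real.exp_add]
          congr 1
          push_cast
          ring
        rw [← hEE]
        ring

/-- One-sided Chernoff bound. -/
lemma onesided (A : ℕ) (β : Type) [Fintype β] [DecidableEq β] (f : (Fin A ↪ β) → ℝ) (K s : ℝ)
    (hK : 0 < K) (hApos : 0 < A) (hcard : A ≤ Fintype.card β)
    (hLip : ∀ π₁ π₂ : Fin A ↪ β, |f π₁ - f π₂| ≤ K * (hd π₁ π₂ : ℝ)) (hs : 0 < s) :
    ((Finset.univ.filter (fun π : Fin A ↪ β =>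
        s ≤ f π - (∑ σ : Fin A ↪ β, f σ) / (Fintype.card (Fin A ↪ β)))).card : ℝ) ≤
      (Fintype.card (Fin A ↪ β)) * Real.exp (-s ^ 2 / (2 * A * K ^ 2)) := by
  have hAR : (0:ℝ) < (A:ℝ) := by exact_mod_cast hApos
  set l : ℝ := s / (A * K ^ 2) with hl
  have hl0 : 0 < l := by positivity
  set μ : ℝ := (∑ σ : Fin A ↪ β, f σ) / (Fintype.card (Fin A ↪ β)) with hμ
  have hmgf := mgf_bound A β K l hK.le f hLip hcard
  rw [← hμ] at hmgf
  set T := Finset.univ.filter (fun π : Fin A ↪ β => s ≤ f π - μ) with hT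
  have h1 : (T.card : ℝ) * Real.exp (l * s) ≤
      ∑ π : Fin A ↪ β, Real.exp (l * (f π - μ)) := by
    calc (T.card : ℝ) * Real.exp (l * s) = ∑ _π ∈ T, Real.exp (l * s) := by
          rw [Finset.sum_const]; simp [nsmul_eq_mul]
    _ ≤ ∑ π ∈ T, Real.exp (l * (f π - μ)) := by
        apply Finset.sum_le_sum
        intro π hπ
        apply Real.exp_le_exp.mpr
        apply mul_le_mul_of_nonneg_left _ hl0.le
        exact (Finset.mem_filter.mp hπ).2
    _ ≤ ∑ π : Fin A ↪ β, Real.exp (l * (f π - μ)) := by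
        apply Finset.sum_le_sum_of_subset_of_nonneg (Finset.filter_subset _ _)
        intro π _ _
        exact (Real.exp_pos _).le
  have h2 : (T.card : ℝ) ≤ (Fintype.card (Fin A ↪ β)) *
      (Real.exp ((A:ℝ) * (l ^ 2 * K ^ 2 / 2)) / Real.exp (l * s)) := by
    rw [← mul_div_assoc, le_div_iff₀ (Real.exp_pos _)]
    exact h1.trans hmgf
  have h3 : Real.exp ((A:ℝ) * (l ^ 2 * K ^ 2 / 2)) / Real.exp (l * s)
      = Real.exp (-s ^ 2 / (2 * A * K ^ 2)) := by
    rw [← Real.exp_sub]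
    congr 1
    rw [hl]
    field_simp
    ring
  rw [h3] at h2
  exact h2

end ConcentrationAux

set_option maxHeartbeats 1000000 in
/-- Theorem 2.5, concentration of measure in the space of permutations
`Π(M,A)`, i.e. injective maps `{0,…,A-1} → {0,…,M-1}`, modelled as `Fin A ↪ Fin M`:
for any `F : Π(M,A) → ℂ` with Lipschitz constant `K > 0` (for the Hamming metric `d^p`)
and any `t > 0`, `μ^p({π : |F(π) - 𝔼^p(F)| ≥ t}) ≤ 2 exp(-t²/(16 A K²))`. -/
theorem stmt3 (M A : ℕ) (hM : 3 ≤ M) (hA1 : 1 < A) (hA2 : A < M)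
    (F : (Fin A ↪ Fin M) → ℂ) (K : ℝ) (hK : 0 < K)
    (hLip : ∀ π₁ π₂ : Fin A ↪ Fin M, π₁ ≠ π₂ →
      ‖F π₁ - F π₂‖ ≤
        K * ((Finset.univ.filter (fun j : Fin A => π₁ j ≠ π₂ j)).card : ℝ))
    (t : ℝ) (ht : 0 < t) :
    ((Finset.univ.filter (fun π : Fin A ↪ Fin M =>
        t ≤ ‖F π -
          (∑ σ : Fin A ↪ Fin M, F σ) / (Fintype.card (Fin A ↪ Fin M) : ℂ)‖)).card : ℝ) /
      (Fintype.card (Fin A ↪ Fin M) : ℝ) ≤ 2 * Real.exp (-t ^ 2 / (16 * A * K ^ 2)) := by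
  classical
  have hApos : 0 < A := by omega
  have hAM : A ≤ Fintype.card (Fin M) := by rw [Fintype.card_fin]; omega
  have hAR : (0:ℝ) < (A:ℝ) := by exact_mod_cast hApos
  have hNpos : 0 < Fintype.card (Fin A ↪ Fin M) := by
    rw [Fintype.card_embedding_eq, Fintype.card_fin, Fintype.card_fin]
    apply Nat.pos_of_ne_zero
    intro h
    rw [Nat.descFactorial_eq_zero_iff_lt] at h
    omega
  set N : ℝ := (Fintype.card (Fin A ↪ Fin M) : ℝ) with hN
  have hN0 : 0 < N := by rw [hN]; exact_mod_cast hNpos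
  set u : (Fin A ↪ Fin M) → ℝ := fun π => (F π).re with hu
  set v : (Fin A ↪ Fin M) → ℝ := fun π => (F π).im with hv
  -- Lipschitz bounds for real/imaginary parts and their negations
  have hLipRe : ∀ π₁ π₂ : Fin A ↪ Fin M, |u π₁ - u π₂| ≤ K * (hd π₁ π₂ : ℝ) := by
    intro π₁ π₂
    rcases eq_or_ne π₁ π₂ with rfl | hne
    · simp only [sub_self, abs_zero]
      positivity
    · calc |u π₁ - u π₂| = |(F π₁ - F π₂).re| := by rw [Complex.sub_re]
      _ ≤ ‖F π₁ - F π₂‖ := Complex.abs_re_le_norm _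
      _ ≤ K * (hd π₁ π₂ : ℝ) := hLip π₁ π₂ hne
  have hLipIm : ∀ π₁ π₂ : Fin A ↪ Fin M, |v π₁ - v π₂| ≤ K * (hd π₁ π₂ : ℝ) := by
    intro π₁ π₂
    rcases eq_or_ne π₁ π₂ with rfl | hne
    · simp only [sub_self, abs_zero]
      positivity
    · calc |v π₁ - v π₂| = |(F π₁ - F π₂).im| := by rw [Complex.sub_im]
      _ ≤ ‖F π₁ - F π₂‖ := Complex.abs_im_le_norm _
      _ ≤ K * (hd π₁ π₂ : ℝ) := hLip π₁ π₂ hne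
  have hLipNeg : ∀ (w : (Fin A ↪ Fin M) → ℝ),
      (∀ π₁ π₂, |w π₁ - w π₂| ≤ K * (hd π₁ π₂ : ℝ)) →
      ∀ π₁ π₂ : Fin A ↪ Fin M, |(-w π₁) - (-w π₂)| ≤ K * (hd π₁ π₂ : ℝ) := by
    intro w hw π₁ π₂
    rw [show (-w π₁) - (-w π₂) = -(w π₁ - w π₂) by ring, abs_neg]
    exact hw π₁ π₂
  set s : ℝ := t / Real.sqrt 2 with hsdef
  have hsqrt2 : (0:ℝ) < Real.sqrt 2 := Real.sqrt_pos.mpr (by norm_num)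
  have hs : 0 < s := by positivity
  have hs2 : s ^ 2 = t ^ 2 / 2 := by
    rw [hsdef, div_pow, Real.sq_sqrt (by norm_num : (0:ℝ) ≤ 2)]
  -- mean decomposition
  have hμre : ((∑ σ : Fin A ↪ Fin M, F σ) / (Fintype.card (Fin A ↪ Fin M) : ℂ)).re
      = (∑ σ : Fin A ↪ Fin M, u σ) / (Fintype.card (Fin A ↪ Fin M)) := by
    rw [show ((Fintype.card (Fin A ↪ Fin M) : ℕ) : ℂ)
        = (((Fintype.card (Fin A ↪ Fin M) : ℕ) : ℝ) : ℂ) by push_cast; rfl]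
    rw [Complex.div_ofReal_re, Complex.re_sum]
  have hμim : ((∑ σ : Fin A ↪ Fin M, F σ) / (Fintype.card (Fin A ↪ Fin M) : ℂ)).im
      = (∑ σ : Fin A ↪ Fin M, v σ) / (Fintype.card (Fin A ↪ Fin M)) := by
    rw [show ((Fintype.card (Fin A ↪ Fin M) : ℕ) : ℂ)
        = (((Fintype.card (Fin A ↪ Fin M) : ℕ) : ℝ) : ℂ) by push_cast; rfl]
    rw [Complex.div_ofReal_im, Complex.im_sum]
  -- the four one-sided events
  set T := Finset.univ.filter (fun π : Fin A ↪ Fin M =>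
      t ≤ ‖F π - (∑ σ : Fin A ↪ Fin M, F σ) / (Fintype.card (Fin A ↪ Fin M) : ℂ)‖)
    with hT
  set E1 := Finset.univ.filter (fun π : Fin A ↪ Fin M =>
      s ≤ u π - (∑ σ : Fin A ↪ Fin M, u σ) / (Fintype.card (Fin A ↪ Fin M))) with hE1
  set E2 := Finset.univ.filter (fun π : Fin A ↪ Fin M =>
      s ≤ -u π - (∑ σ : Fin A ↪ Fin M, -u σ) / (Fintype.card (Fin A ↪ Fin M))) with hE2
  set E3 := Finset.univ.filter (fun π : Fin A ↪ Fin M =>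
      s ≤ v π - (∑ σ : Fin A ↪ Fin M, v σ) / (Fintype.card (Fin A ↪ Fin M))) with hE3
  set E4 := Finset.univ.filter (fun π : Fin A ↪ Fin M =>
      s ≤ -v π - (∑ σ : Fin A ↪ Fin M, -v σ) / (Fintype.card (Fin A ↪ Fin M))) with hE4
  have hsub : T ⊆ E1 ∪ E2 ∪ E3 ∪ E4 := by
    intro π hπ
    rw [hT, Finset.mem_filter] at hπ
    obtain ⟨-, hπ⟩ := hπ
    set z := F π - (∑ σ : Fin A ↪ Fin M, F σ) / (Fintype.card (Fin A ↪ Fin M) : ℂ) with hz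
    have ht2 : t ^ 2 ≤ z.re ^ 2 + z.im ^ 2 := by
      have h1 : t ^ 2 ≤ ‖z‖ ^ 2 :=
        pow_le_pow_left₀ ht.le hπ 2
      rwa [Complex.sq_norm, Complex.normSq_apply, ← pow_two, ← pow_two] at h1
    have hre : z.re = u π - (∑ σ : Fin A ↪ Fin M, u σ) / (Fintype.card (Fin A ↪ Fin M)) := by
      rw [hz, Complex.sub_re, hμre]
    have him : z.im = v π - (∑ σ : Fin A ↪ Fin M, v σ) / (Fintype.card (Fin A ↪ Fin M)) := by
      rw [hz, Complex.sub_im, hμim]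
    have hcase : s ≤ |z.re| ∨ s ≤ |z.im| := by
      by_contra hcon
      push_neg at hcon
      have h1 : z.re ^ 2 < s ^ 2 := by
        have := abs_nonneg z.re
        nlinarith [hcon.1, sq_abs z.re]
      have h2 : z.im ^ 2 < s ^ 2 := by
        have := abs_nonneg z.im
        nlinarith [hcon.2, sq_abs z.im]
      rw [hs2] at h1 h2
      nlinarith
    simp only [Finset.mem_union]
    have hsumu : (∑ σ : Fin A ↪ Fin M, -u σ) = -∑ σ : Fin A ↪ Fin M, u σ := by
      rw [Finset.sum_neg_distrib]
    have hsumv : (∑ σ : Fin A ↪ Fin M, -v σ) = -∑ σ : Fin A ↪ Fin M, v σ := by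
      rw [Finset.sum_neg_distrib]
    rcases hcase with hcase | hcase
    · rcases le_abs.mp hcase with h | h
      · refine Or.inl (Or.inl (Or.inl ?_))
        rw [hE1, Finset.mem_filter]
        exact ⟨Finset.mem_univ _, by rw [← hre]; exact h⟩
      · refine Or.inl (Or.inl (Or.inr ?_))
        rw [hE2, Finset.mem_filter]
        refine ⟨Finset.mem_univ _, ?_⟩
        rw [hsumu]
        have heq : -u π - (-∑ σ : Fin A ↪ Fin M, u σ) / (Fintype.card (Fin A ↪ Fin M)) = -z.re := by
          rw [hre]; ring
        rw [heq]
        exact h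
    · rcases le_abs.mp hcase with h | h
      · refine Or.inl (Or.inr ?_)
        rw [hE3, Finset.mem_filter]
        exact ⟨Finset.mem_univ _, by rw [← him]; exact h⟩
      · refine Or.inr ?_
        rw [hE4, Finset.mem_filter]
        refine ⟨Finset.mem_univ _, ?_⟩
        rw [hsumv]
        have heq : -v π - (-∑ σ : Fin A ↪ Fin M, v σ) / (Fintype.card (Fin A ↪ Fin M)) = -z.im := by
          rw [him]; ring
        rw [heq]
        exact h
  -- one-sided bounds
  set B : ℝ := Real.exp (-s ^ 2 / (2 * (A:ℝ) * K ^ 2)) with hB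
  have hb1 : (E1.card : ℝ) ≤ N * B :=
    onesided A (Fin M) u K s hK hApos hAM hLipRe hs
  have hb2 : (E2.card : ℝ) ≤ N * B :=
    onesided A (Fin M) (fun π => -u π) K s hK hApos hAM (hLipNeg u hLipRe) hs
  have hb3 : (E3.card : ℝ) ≤ N * B :=
    onesided A (Fin M) v K s hK hApos hAM hLipIm hs
  have hb4 : (E4.card : ℝ) ≤ N * B :=
    onesided A (Fin M) (fun π => -v π) K s hK hApos hAM (hLipNeg v hLipIm) hs
  have hcards : (T.card : ℝ) ≤ (E1.card : ℝ) + E2.card + E3.card + E4.card := by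
    have h1 : T.card ≤ (E1 ∪ E2 ∪ E3 ∪ E4).card := Finset.card_le_card hsub
    have h2 : (E1 ∪ E2 ∪ E3 ∪ E4).card ≤ E1.card + E2.card + E3.card + E4.card := by
      calc (E1 ∪ E2 ∪ E3 ∪ E4).card ≤ (E1 ∪ E2 ∪ E3).card + E4.card := Finset.card_union_le _ _
      _ ≤ ((E1 ∪ E2).card + E3.card) + E4.card :=
          Nat.add_le_add_right (Finset.card_union_le _ _) _
      _ ≤ ((E1.card + E2.card) + E3.card) + E4.card :=
          Nat.add_le_add_right (Nat.add_le_add_right (Finset.card_union_le _ _) _) _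
    exact_mod_cast h1.trans h2
  have hmain : (T.card : ℝ) ≤ 4 * N * Real.exp (-t ^ 2 / (4 * (A:ℝ) * K ^ 2)) := by
    have hBeq : B = Real.exp (-t ^ 2 / (4 * (A:ℝ) * K ^ 2)) := by
      rw [hB]
      congr 1
      rw [hs2]
      field_simp
      ring
    calc (T.card : ℝ) ≤ (E1.card : ℝ) + E2.card + E3.card + E4.card := hcards
    _ ≤ N * B + N * B + N * B + N * B :=
        add_le_add (add_le_add (add_le_add hb1 hb2) hb3) hb4
    _ = 4 * N * B := by ring
    _ = 4 * N * Real.exp (-t ^ 2 / (4 * (A:ℝ) * K ^ 2)) := by rw [hBeq]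
  -- finish with case split
  have hAK : (0:ℝ) < (A:ℝ) * K ^ 2 := by positivity
  rcases le_or_gt (t ^ 2) (8 * (A:ℝ) * K ^ 2) with hcase | hcase
  · -- trivial bound 1
    have hle1 : (T.card : ℝ) / N ≤ 1 := by
      rw [div_le_one hN0, hN]
      have := Finset.card_filter_le Finset.univ (fun π : Fin A ↪ Fin M =>
        t ≤ ‖F π - (∑ σ : Fin A ↪ Fin M, F σ) / (Fintype.card (Fin A ↪ Fin M) : ℂ)‖)
      rw [hT]
      exact_mod_cast this.trans (le_of_eq (Finset.card_univ))
    have hhalf : Real.exp (1 / 2 : ℝ) ≤ 2 := by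
      have hsq : Real.exp (1/2 : ℝ) * Real.exp (1/2 : ℝ) = Real.exp 1 := by
        rw [← Real.exp_add]; norm_num
      nlinarith [Real.exp_one_lt_d9, Real.exp_pos (1/2 : ℝ)]
    have hexp1 : Real.exp (-(1/2) : ℝ) ≤ Real.exp (-t ^ 2 / (16 * (A:ℝ) * K ^ 2)) := by
      apply Real.exp_le_exp.mpr
      rw [neg_div, le_neg, neg_neg]
      rw [div_le_iff₀ (by positivity : (0:ℝ) < 16 * (A:ℝ) * K ^ 2)]
      linarith
    have hhalf2 : (1:ℝ) ≤ 2 * Real.exp (-(1/2) : ℝ) := by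
      rw [Real.exp_neg]
      have h0 := Real.exp_pos (1/2 : ℝ)
      have h1 : Real.exp (1/2:ℝ) * (Real.exp (1/2:ℝ))⁻¹ = 1 := mul_inv_cancel₀ h0.ne'
      nlinarith [inv_pos.mpr h0]
    calc (T.card : ℝ) / N ≤ 1 := hle1
    _ ≤ 2 * Real.exp (-(1/2) : ℝ) := hhalf2
    _ ≤ 2 * Real.exp (-t ^ 2 / (16 * (A:ℝ) * K ^ 2)) := by linarith [hexp1]
  · -- Chernoff regime
    have hdiv : (T.card : ℝ) / N ≤ 4 * Real.exp (-t ^ 2 / (4 * (A:ℝ) * K ^ 2)) := by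
      rw [div_le_iff₀ hN0]
      calc (T.card : ℝ) ≤ 4 * N * Real.exp (-t ^ 2 / (4 * (A:ℝ) * K ^ 2)) := hmain
      _ = 4 * Real.exp (-t ^ 2 / (4 * (A:ℝ) * K ^ 2)) * N := by ring
    have hy : (3:ℝ)/2 ≤ 3 * t ^ 2 / (16 * (A:ℝ) * K ^ 2) := by
      rw [le_div_iff₀ (by positivity : (0:ℝ) < 16 * (A:ℝ) * K ^ 2)]
      nlinarith
    have h2e : (2:ℝ) ≤ Real.exp (3 * t ^ 2 / (16 * (A:ℝ) * K ^ 2)) := by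
      have := Real.add_one_le_exp (3 * t ^ 2 / (16 * (A:ℝ) * K ^ 2))
      linarith
    have hsplit : Real.exp (-t ^ 2 / (16 * (A:ℝ) * K ^ 2)) =
        Real.exp (-t ^ 2 / (4 * (A:ℝ) * K ^ 2)) * Real.exp (3 * t ^ 2 / (16 * (A:ℝ) * K ^ 2)) := by
      rw [← Real.exp_add]
      congr 1
      field_simp
      ring
    have hfinal : 4 * Real.exp (-t ^ 2 / (4 * (A:ℝ) * K ^ 2)) ≤
        2 * Real.exp (-t ^ 2 / (16 * (A:ℝ) * K ^ 2)) := by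
      rw [hsplit]
      nlinarith [Real.exp_pos (-t ^ 2 / (4 * (A:ℝ) * K ^ 2)), h2e]
    exact hdiv.trans hfinal
end

section
/- Let (X,d) be a finite nonempty metric space, and suppose there exist n ∈ ℕ, positive real numbers a_1,...,a_n, and a sequence 𝒳⁰, 𝒳¹, ..., 𝒳ⁿ of partitions of X such that: 𝒳⁰ = {X}; 𝒳ⁿ consists of all singletons of X; each 𝒳ᵏ refines 𝒳ᵏ⁻¹ for k = 1,...,n; and for every k = 1,...,n and every pair of cells Ω_p, Ω_q of 𝒳ᵏ contained in the same cell of 𝒳ᵏ⁻¹, there exists a bijection φ : Ω_p → Ω_q with d(x, φ(x)) ≤ a_k for all x ∈ Ω_p. Set l = (∑_{k=1}^n a_k²)^{1/2}. Let μ be the uniform counting probability measure on X. Then for any F : X → ℂ with ‖F‖_Lip > 0 and any t > 0, μ({x ∈ X : |F(x) − 𝔼(F)| ≥ t}) ≤ 2·exp(−t²/(4·l²·‖F‖²_Lip)). -/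
open scoped BigOperators

private lemma hasSum_cosh_sqrt {s : ℝ} (hs : 0 ≤ s) :
    HasSum (fun n : ℕ => s ^ n / ((Nat.factorial (2 * n)) : ℝ)) (Real.cosh (Real.sqrt s)) := by
  have h := Real.hasSum_cosh (Real.sqrt s)
  simpa [pow_mul, Real.sq_sqrt hs] using h

private lemma convexOn_cosh_sqrt :
    ConvexOn ℝ (Set.Ici 0) (fun s : ℝ => Real.cosh (Real.sqrt s)) := by
  refine ⟨convex_Ici 0, fun x hx y hy α β hα hβ hab => ?_⟩
  have hx' : (0:ℝ) ≤ x := hx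
  have hy' : (0:ℝ) ≤ y := hy
  simp only [smul_eq_mul]
  have hxy : (0:ℝ) ≤ α * x + β * y := by positivity
  have h1 := hasSum_cosh_sqrt hxy
  have h2 := ((hasSum_cosh_sqrt hx').mul_left α).add ((hasSum_cosh_sqrt hy').mul_left β)
  refine hasSum_le (fun n => ?_) h1 h2
  have hpow : (α * x + β * y) ^ n ≤ α * x ^ n + β * y ^ n := by
    simpa using (convexOn_pow n).2 hx hy hα hβ hab
  have hfac : (0:ℝ) < ((Nat.factorial (2 * n)) : ℝ) := by positivity
  rw [div_le_iff₀ hfac]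
  calc (α * x + β * y) ^ n ≤ α * x ^ n + β * y ^ n := hpow
    _ = (α * (x ^ n / ((Nat.factorial (2 * n)) : ℝ)) + β * (y ^ n / ((Nat.factorial (2 * n)) : ℝ))) * ((Nat.factorial (2 * n)) : ℝ) := by
        field_simp

private lemma pinelis_key {p q ρ : ℝ} (hp : 0 ≤ p) (hq : 0 ≤ q) (hρ : |ρ| ≤ 1) :
    Real.cosh (Real.sqrt (p^2 + q^2 + 2*p*q*ρ)) ≤
      Real.cosh p * Real.cosh q + ρ * (Real.sinh p * Real.sinh q) := by
  obtain ⟨hρ1, hρ2⟩ := abs_le.1 hρ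
  have hθ1 : (0:ℝ) ≤ (1 - ρ)/2 := by linarith
  have hθ2 : (0:ℝ) ≤ (1 + ρ)/2 := by linarith
  have hsum : (1-ρ)/2 + (1+ρ)/2 = 1 := by ring
  have h := convexOn_cosh_sqrt.2 (Set.mem_Ici.2 (sq_nonneg (p-q)))
      (Set.mem_Ici.2 (sq_nonneg (p+q))) hθ1 hθ2 hsum
  simp only [smul_eq_mul] at h
  have harg : (1-ρ)/2 * (p-q)^2 + (1+ρ)/2 * (p+q)^2 = p^2+q^2+2*p*q*ρ := by ring
  rw [harg] at h
  rw [Real.sqrt_sq_eq_abs, Real.sqrt_sq (by positivity), Real.cosh_abs,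
    Real.cosh_sub, Real.cosh_add] at h
  calc Real.cosh (Real.sqrt (p^2 + q^2 + 2*p*q*ρ)) ≤ _ := h
    _ = Real.cosh p * Real.cosh q + ρ * (Real.sinh p * Real.sinh q) := by ring
private lemma pinelis_cell {ι : Type*} (s : Finset ι) (d : ι → ℂ) (z : ℂ) {c lam : ℝ}
    (hc : 0 < c) (hlam : 0 ≤ lam)
    (hd : ∀ i ∈ s, ‖d i‖ ≤ c) (hsum : ∑ i ∈ s, d i = 0) :
    ∑ i ∈ s, Real.cosh (lam * ‖z + d i‖) ≤
      s.card * (Real.cosh (lam * ‖z‖) * Real.cosh (lam * c)) := by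
  rcases eq_or_ne z 0 with hz | hz
  · subst hz
    have : ∀ i ∈ s, Real.cosh (lam * ‖0 + d i‖) ≤ Real.cosh (lam * c) := by
      intro i hi
      apply Real.cosh_le_cosh.2
      rw [abs_of_nonneg (by positivity), abs_of_nonneg (by positivity)]
      exact mul_le_mul_of_nonneg_left (by simpa using hd i hi) hlam
    calc ∑ i ∈ s, Real.cosh (lam * ‖0 + d i‖) ≤ ∑ _i ∈ s, Real.cosh (lam * c) :=
          Finset.sum_le_sum this
      _ = s.card * (Real.cosh (lam * ‖(0:ℂ)‖) * Real.cosh (lam * c)) := by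
          simp [Finset.sum_const, nsmul_eq_mul]
  · set A := ‖z‖ with hA
    have hA0 : 0 < A := norm_pos_iff.mpr hz
    set p := lam * A
    set q := lam * c
    have hp : 0 ≤ p := by positivity
    have hq : 0 ≤ q := by positivity
    set ρ : ι → ℝ := fun i => (z * (starRingEnd ℂ) (d i)).re / (A * c) with hρdef
    have hρ : ∀ i ∈ s, |ρ i| ≤ 1 := by
      intro i hi
      rw [abs_div, abs_of_pos (mul_pos hA0 hc), div_le_one (mul_pos hA0 hc)]
      calc |(z * (starRingEnd ℂ) (d i)).re| ≤ ‖z * (starRingEnd ℂ) (d i)‖ :=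
            Complex.abs_re_le_norm _
        _ = A * ‖d i‖ := by rw [norm_mul, Complex.norm_conj]
        _ ≤ A * c := mul_le_mul_of_nonneg_left (hd i hi) hA0.le
    have key : ∀ i ∈ s, Real.cosh (lam * ‖z + d i‖) ≤
        Real.cosh p * Real.cosh q + ρ i * (Real.sinh p * Real.sinh q) := by
      intro i hi
      have h1 : lam * ‖z + d i‖ ≤ Real.sqrt (p^2 + q^2 + 2*p*q*(ρ i)) := by
        have e1 : lam * ‖z + d i‖
            = Real.sqrt (lam^2 * (A^2 + ‖d i‖^2 + 2 * (z * (starRingEnd ℂ) (d i)).re)) := by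
          rw [Complex.sq_norm, Complex.sq_norm, ← Complex.normSq_add]
          rw [Real.sqrt_mul (sq_nonneg lam), Real.sqrt_sq hlam, ← Complex.sq_norm,
            Real.sqrt_sq (norm_nonneg _)]
        rw [e1]
        apply Real.sqrt_le_sqrt
        have e2 : p^2 + q^2 + 2*p*q*(ρ i)
            = lam^2 * (A^2 + c^2 + 2 * (z * (starRingEnd ℂ) (d i)).re) := by
          have : 2*p*q*(ρ i) = lam^2 * (2 * (z * (starRingEnd ℂ) (d i)).re) := by
            rw [hρdef]
            field_simp
            ring
          rw [this]; ring
        rw [e2]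
        have : ‖d i‖^2 ≤ c^2 := by
          apply sq_le_sq' (by linarith [norm_nonneg (d i), hd i hi]) (hd i hi)
        nlinarith [sq_nonneg lam]
      calc Real.cosh (lam * ‖z + d i‖)
          ≤ Real.cosh (Real.sqrt (p^2 + q^2 + 2*p*q*(ρ i))) := by
            apply Real.cosh_le_cosh.2
            rw [abs_of_nonneg (by positivity), abs_of_nonneg (Real.sqrt_nonneg _)]
            exact h1
        _ ≤ _ := pinelis_key hp hq (hρ i hi)
    have hρsum : ∑ i ∈ s, ρ i = 0 := by
      rw [hρdef]
      rw [← Finset.sum_div]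
      have : ∑ i ∈ s, (z * (starRingEnd ℂ) (d i)).re = (z * (starRingEnd ℂ) (∑ i ∈ s, d i)).re := by
        rw [map_sum, Finset.mul_sum, Complex.re_sum]
      rw [this, hsum]
      simp
    calc ∑ i ∈ s, Real.cosh (lam * ‖z + d i‖)
        ≤ ∑ i ∈ s, (Real.cosh p * Real.cosh q + ρ i * (Real.sinh p * Real.sinh q)) :=
          Finset.sum_le_sum key
      _ = s.card * (Real.cosh p * Real.cosh q)
          + (∑ i ∈ s, ρ i) * (Real.sinh p * Real.sinh q) := by
          rw [Finset.sum_add_distrib, Finset.sum_const, nsmul_eq_mul, ← Finset.sum_mul]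
      _ = s.card * (Real.cosh (lam * ‖z‖) * Real.cosh (lam * c)) := by
          rw [hρsum]; simp; left; rfl
private lemma subparts_biUnion {α : Type*} [DecidableEq α] [Fintype α]
    {P Q : Finpartition (Finset.univ : Finset α)} (hPQ : P ≤ Q) {r : Finset α}
    (hr : r ∈ Q.parts) :
    (P.parts.filter (fun p => p ⊆ r)).biUnion id = r := by
  ext y
  simp only [Finset.mem_biUnion, Finset.mem_filter, id]
  constructor
  · rintro ⟨p, ⟨hp, hpr⟩, hyp⟩
    exact hpr hyp
  · intro hyr
    obtain ⟨p, hp, hyp⟩ := P.exists_mem (Finset.mem_univ y)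
    obtain ⟨q, hq, hpq⟩ := hPQ hp
    have hqr : q = r := Q.eq_of_mem_parts hq hr (hpq hyp) hyr
    exact ⟨p, ⟨hp, hqr ▸ hpq⟩, hyp⟩

private lemma subparts_disj {α : Type*} [DecidableEq α] [Fintype α]
    (P : Finpartition (Finset.univ : Finset α)) (r : Finset α) :
    (↑(P.parts.filter (fun p => p ⊆ r)) : Set (Finset α)).PairwiseDisjoint id :=
  P.disjoint.subset (by exact_mod_cast Finset.filter_subset _ _)

private lemma sum_subparts {α : Type*} {M : Type*} [DecidableEq α] [Fintype α] [AddCommMonoid M]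
    {P Q : Finpartition (Finset.univ : Finset α)} (hPQ : P ≤ Q) {r : Finset α}
    (hr : r ∈ Q.parts) (g : α → M) :
    ∑ p ∈ P.parts.filter (fun p => p ⊆ r), ∑ x ∈ p, g x = ∑ x ∈ r, g x := by
  conv_rhs => rw [← subparts_biUnion hPQ hr]
  rw [Finset.sum_biUnion (subparts_disj P r)]
  rfl

private lemma sum_parts_univ {α : Type*} {M : Type*} [DecidableEq α] [Fintype α] [AddCommMonoid M]
    (P : Finpartition (Finset.univ : Finset α)) (g : α → M) :
    ∑ r ∈ P.parts, ∑ x ∈ r, g x = ∑ x, g x := by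
  conv_rhs => rw [← P.biUnion_parts]
  rw [Finset.sum_biUnion P.disjoint]
  rfl

/-- Theorem 2.4, concentration of measure in finite metric spaces:
if a finite metric space `X` has a chain of partitions `𝒳⁰ = {X}`, …, `𝒳ⁿ = {singletons}`,
each refining the previous one, such that cells of `𝒳ᵏ` inside a common cell of `𝒳ᵏ⁻¹`
are related by bijections moving points at most `a_k`, and `l = (∑ a_k²)^{1/2}`, then every
`F : X → ℂ` with Lipschitz constant `K > 0` and any `t > 0` satisfy
`μ({x : |F(x) - 𝔼(F)| ≥ t}) ≤ 2 exp(-t²/(4 l² K²))`. -/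
theorem stmt4 (X : Type*) [MetricSpace X] [Fintype X] [Nonempty X] [DecidableEq X]
    (n : ℕ) (a : ℕ → ℝ) (ha : ∀ k, 1 ≤ k → k ≤ n → 0 < a k)
    (𝒳 : ℕ → Finpartition (Finset.univ : Finset X))
    (h0 : (𝒳 0).parts = {Finset.univ})
    (hn : ∀ p ∈ (𝒳 n).parts, ∃ x : X, p = {x})
    (href : ∀ k, 1 ≤ k → k ≤ n → 𝒳 k ≤ 𝒳 (k - 1))
    (hbij : ∀ k, 1 ≤ k → k ≤ n → ∀ r ∈ (𝒳 (k - 1)).parts,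
      ∀ p ∈ (𝒳 k).parts, ∀ q ∈ (𝒳 k).parts, p ⊆ r → q ⊆ r →
        ∃ φ : X → X, Set.BijOn φ (↑p) (↑q) ∧ ∀ x ∈ p, dist x (φ x) ≤ a k)
    (l : ℝ) (hl : l = Real.sqrt (∑ k ∈ Finset.Icc 1 n, (a k) ^ 2))
    (F : X → ℂ) (K : ℝ) (hK : 0 < K)
    (hLip : ∀ x y : X, x ≠ y → ‖F x - F y‖ ≤ K * dist x y)
    (t : ℝ) (ht : 0 < t) :
    ((Finset.univ.filter (fun x : X =>
        t ≤ ‖F x - (∑ y : X, F y) / (Fintype.card X : ℂ)‖)).card : ℝ) /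
      (Fintype.card X : ℝ) ≤ 2 * Real.exp (-t ^ 2 / (4 * l ^ 2 * K ^ 2)) := by
  classical
  have hcard : 0 < Fintype.card X := Fintype.card_pos
  rcases Nat.eq_zero_or_pos n with hn0 | hn1
  · subst hn0
    have hl0 : l = 0 := by simp [hl]
    rw [hl0]
    have h1 : ((Finset.univ.filter (fun x : X =>
        t ≤ ‖F x - (∑ y : X, F y) / (Fintype.card X : ℂ)‖)).card : ℝ) /
        (Fintype.card X : ℝ) ≤ 1 := by
      rw [div_le_one (by exact_mod_cast hcard)]
      exact_mod_cast Finset.card_filter_le _ _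
    have h2 : (4:ℝ) * 0 ^ 2 * K ^ 2 = 0 := by ring
    calc _ ≤ (1:ℝ) := h1
      _ ≤ _ := by rw [h2, div_zero, Real.exp_zero]; norm_num
  · set E : ℂ := (∑ y : X, F y) / (Fintype.card X : ℂ) with hE
    set L : ℝ := ∑ k ∈ Finset.Icc 1 n, (a k) ^ 2 with hLdef
    have hL : 0 < L := Finset.sum_pos (fun k hk => by
        have := ha k (Finset.mem_Icc.1 hk).1 (Finset.mem_Icc.1 hk).2
        positivity) ⟨1, Finset.mem_Icc.2 ⟨le_refl 1, hn1⟩⟩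
    have hl2 : l ^ 2 = L := by rw [hl]; exact Real.sq_sqrt hL.le
    set lam : ℝ := t / (K ^ 2 * L) with hlamdef
    have hlam : 0 < lam := by positivity
    set Avg : Finset X → ℂ := fun S => (∑ y ∈ S, F y) / (S.card : ℂ) with hAvg
    set f : ℕ → X → ℂ := fun k x => Avg ((𝒳 k).part x) with hfdef
    have hpmem : ∀ (k : ℕ) (x : X), (𝒳 k).part x ∈ (𝒳 k).parts :=
      fun k x => (𝒳 k).part_mem.2 (Finset.mem_univ x)
    have hxmem : ∀ (k : ℕ) (x : X), x ∈ (𝒳 k).part x :=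
      fun k x => (𝒳 k).mem_part_self.2 (Finset.mem_univ x)
    have hpeq : ∀ (k : ℕ) (x : X) (r : Finset X), r ∈ (𝒳 k).parts → x ∈ r →
        (𝒳 k).part x = r :=
      fun k x r hr hxr => (𝒳 k).eq_of_mem_parts (hpmem k x) hr (hxmem k x) hxr
    have hAvgpart : ∀ (k : ℕ) (x : X) (r : Finset X), r ∈ (𝒳 k).parts → x ∈ r →
        f k x = Avg r := by
      intro k x r hr hxr
      simp only [hfdef]
      rw [hpeq k x r hr hxr]
    have hcpos : ∀ (k : ℕ) (p : Finset X), p ∈ (𝒳 k).parts → 0 < p.card :=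
      fun k p hp => Finset.card_pos.2 ((𝒳 k).nonempty_of_mem_parts hp)
    have hsum_cells : ∀ (k : ℕ) (p : Finset X), p ∈ (𝒳 k).parts →
        ∑ x ∈ p, f k x = ∑ y ∈ p, F y := by
      intro k p hp
      have hne : ((p.card : ℂ)) ≠ 0 := by exact_mod_cast (hcpos k p hp).ne'
      have h1 : ∀ x ∈ p, f k x = Avg p := fun x hx => hAvgpart k x p hp hx
      rw [Finset.sum_congr rfl h1, Finset.sum_const, nsmul_eq_mul, hAvg]
      simp only
      rw [mul_div_cancel₀ _ hne]
    have cell_ineq : ∀ k, 1 ≤ k → k ≤ n → ∀ r ∈ (𝒳 (k-1)).parts,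
        ∑ x ∈ r, Real.cosh (lam * ‖f k x - E‖) ≤
          (r.card : ℝ) * (Real.cosh (lam * ‖Avg r - E‖) *
            Real.cosh (lam * (K * a k))) := by
      intro k hk1 hkn r hr
      have hak := ha k hk1 hkn
      set sub := (𝒳 k).parts.filter (fun p => p ⊆ r) with hsubdef
      have hsubmem : ∀ p ∈ sub, p ∈ (𝒳 k).parts := fun p hp => (Finset.mem_filter.1 hp).1
      have hsubss : ∀ p ∈ sub, p ⊆ r := fun p hp => (Finset.mem_filter.1 hp).2
      have hxin : ∀ x ∈ r, (𝒳 k).part x ∈ sub := by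
        intro x hx
        refine Finset.mem_filter.2 ⟨hpmem k x, ?_⟩
        obtain ⟨q, hq, hpq⟩ := href k hk1 hkn (hpmem k x)
        have hqr : q = r := (𝒳 (k-1)).eq_of_mem_parts hq hr (hpq (hxmem k x)) hx
        exact hqr ▸ hpq
      have hkey : ∀ p ∈ sub, ∀ q ∈ sub, p.card = q.card ∧
          ‖Avg p - Avg q‖ ≤ K * a k := by
        intro p hp q hq
        obtain ⟨φ, hφ, hmove⟩ := hbij k hk1 hkn r hr p (hsubmem p hp) q (hsubmem q hq)
          (hsubss p hp) (hsubss q hq)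
        have hmaps : ∀ y ∈ p, φ y ∈ q := fun y hy => hφ.mapsTo hy
        have hinj : ∀ y₁ ∈ p, ∀ y₂ ∈ p, φ y₁ = φ y₂ → y₁ = y₂ := fun y₁ h₁ y₂ h₂ h =>
          hφ.injOn h₁ h₂ h
        have hsurj : ∀ b ∈ q, ∃ y, ∃ hy : y ∈ p, φ y = b := by
          intro b hb
          obtain ⟨y, hy, hyb⟩ := hφ.surjOn hb
          exact ⟨y, hy, hyb⟩
        have hcard : p.card = q.card := Finset.card_bij (fun y _ => φ y)
          (fun y hy => hmaps y hy) (fun y₁ h₁ y₂ h₂ h => hinj y₁ h₁ y₂ h₂ h) hsurj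
        refine ⟨hcard, ?_⟩
        have hsumq : ∑ y ∈ q, F y = ∑ y ∈ p, F (φ y) :=
          (Finset.sum_bij (fun y _ => φ y) (fun y hy => hmaps y hy)
            (fun y₁ h₁ y₂ h₂ h => hinj y₁ h₁ y₂ h₂ h) hsurj (fun y hy => rfl)).symm
        have hpc := hcpos k p (hsubmem p hp)
        have hne : ((p.card : ℂ)) ≠ 0 := by exact_mod_cast hpc.ne'
        have hdiff : Avg p - Avg q = (∑ y ∈ p, (F y - F (φ y))) / (p.card : ℂ) := by
          rw [hAvg]
          simp only
          rw [← hcard, hsumq, Finset.sum_sub_distrib, sub_div]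
        rw [hdiff, norm_div, Complex.norm_natCast]
        rw [div_le_iff₀ (by exact_mod_cast hpc)]
        calc ‖∑ y ∈ p, (F y - F (φ y))‖ ≤ ∑ y ∈ p, ‖F y - F (φ y)‖ :=
              norm_sum_le _ _
          _ ≤ ∑ _y ∈ p, K * a k := by
              refine Finset.sum_le_sum (fun y hy => ?_)
              rcases eq_or_ne y (φ y) with h | h
              · rw [← h, sub_self, norm_zero]; positivity
              · calc ‖F y - F (φ y)‖ ≤ K * dist y (φ y) := hLip y (φ y) h
                  _ ≤ K * a k := mul_le_mul_of_nonneg_left (hmove y hy) hK.le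
          _ = K * a k * p.card := by rw [Finset.sum_const, nsmul_eq_mul]; ring
      have hrc : 0 < r.card := hcpos (k-1) r hr
      have hrne : ((r.card : ℂ)) ≠ 0 := by exact_mod_cast hrc.ne'
      have hsumF : ∑ p ∈ sub, ∑ y ∈ p, F y = ∑ y ∈ r, F y :=
        sum_subparts (href k hk1 hkn) hr F
      have hsumf : ∑ x ∈ r, f k x = ∑ y ∈ r, F y := by
        rw [← sum_subparts (href k hk1 hkn) hr (f k), ← hsumF]
        exact Finset.sum_congr rfl (fun p hp => hsum_cells k p (hsubmem p hp))
      have hzero : ∑ x ∈ r, (f k x - Avg r) = 0 := by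
        rw [Finset.sum_sub_distrib, hsumf, Finset.sum_const, nsmul_eq_mul, hAvg]
        simp only
        rw [mul_div_cancel₀ _ hrne, sub_self]
      have hd : ∀ x ∈ r, ‖f k x - Avg r‖ ≤ K * a k := by
        intro x hx
        have hpx := hxin x hx
        set s0 := sub.card with hs0
        have hs0pos : 0 < s0 := Finset.card_pos.2 ⟨_, hpx⟩
        have hs0ne : ((s0 : ℂ)) ≠ 0 := by exact_mod_cast hs0pos.ne'
        set m := ((𝒳 k).part x).card with hm
        have hmne : ((m : ℂ)) ≠ 0 := by exact_mod_cast (hcpos k _ (hpmem k x)).ne'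
        have hcards : ∀ p ∈ sub, ((p.card : ℂ)) = (m : ℂ) := by
          intro p hp
          have := (hkey p hp _ hpx).1
          exact_mod_cast this
        have hrsum : ((r.card : ℂ)) = (s0 : ℂ) * (m : ℂ) := by
          have h1 : r.card = ∑ p ∈ sub, p.card := by
            conv_lhs => rw [← subparts_biUnion (href k hk1 hkn) hr]
            exact Finset.card_biUnion (fun p hp q hq hne =>
              subparts_disj (𝒳 k) r (Finset.mem_coe.2 hp) (Finset.mem_coe.2 hq) hne)
          rw [h1]
          push_cast
          rw [Finset.sum_congr rfl hcards, Finset.sum_const, nsmul_eq_mul]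
        have hFr : ∑ y ∈ r, F y = (m : ℂ) * ∑ p ∈ sub, Avg p := by
          rw [← hsumF, Finset.mul_sum]
          refine Finset.sum_congr rfl (fun p hp => ?_)
          rw [hAvg]
          simp only
          rw [hcards p hp, mul_div_cancel₀ _ hmne]
        have hAvgr : Avg r = (∑ p ∈ sub, Avg p) / (s0 : ℂ) := by
          rw [hAvg]
          simp only
          rw [hFr, hrsum, mul_comm ((s0:ℂ)) ((m:ℂ)), mul_div_mul_left _ _ hmne]
        have hdx : f k x - Avg r = (∑ p ∈ sub, (f k x - Avg p)) / (s0 : ℂ) := by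
          rw [hAvgr, Finset.sum_sub_distrib, Finset.sum_const, nsmul_eq_mul, sub_div,
            mul_div_cancel_left₀ _ hs0ne]
        rw [hdx, norm_div, Complex.norm_natCast]
        rw [div_le_iff₀ (by exact_mod_cast hs0pos)]
        calc ‖∑ p ∈ sub, (f k x - Avg p)‖
            ≤ ∑ p ∈ sub, ‖f k x - Avg p‖ := norm_sum_le _ _
          _ ≤ ∑ _p ∈ sub, K * a k := by
              refine Finset.sum_le_sum (fun p hp => ?_)
              have h2 : f k x = Avg ((𝒳 k).part x) := by simp only [hfdef]
              rw [h2]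
              exact (hkey _ hpx p hp).2
          _ = K * a k * s0 := by rw [Finset.sum_const, nsmul_eq_mul]; ring
      have happ := pinelis_cell r (fun x => f k x - Avg r) (Avg r - E)
        (by positivity : (0:ℝ) < K * a k) hlam.le hd hzero
      calc ∑ x ∈ r, Real.cosh (lam * ‖f k x - E‖)
          = ∑ x ∈ r, Real.cosh (lam * ‖(Avg r - E) + (f k x - Avg r)‖) := by
            refine Finset.sum_congr rfl (fun x hx => ?_)
            have h3 : (Avg r - E) + (f k x - Avg r) = f k x - E := by ring
            rw [h3]
        _ ≤ (r.card : ℝ) * (Real.cosh (lam * ‖Avg r - E‖) *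
            Real.cosh (lam * (K * a k))) := happ
    have step : ∀ k, 1 ≤ k → k ≤ n →
        (∑ x : X, Real.cosh (lam * ‖f k x - E‖)) ≤
          (∑ x : X, Real.cosh (lam * ‖f (k-1) x - E‖)) *
            Real.cosh (lam * (K * a k)) := by
      intro k hk1 hkn
      rw [← sum_parts_univ (𝒳 (k-1)) (fun x => Real.cosh (lam * ‖f k x - E‖)),
          ← sum_parts_univ (𝒳 (k-1)) (fun x => Real.cosh (lam * ‖f (k-1) x - E‖)),
          Finset.sum_mul]
      refine Finset.sum_le_sum (fun r hr => ?_)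
      have h1 : ∑ x ∈ r, Real.cosh (lam * ‖f (k-1) x - E‖) =
          (r.card : ℝ) * Real.cosh (lam * ‖Avg r - E‖) := by
        rw [Finset.sum_congr rfl (fun x hx => by rw [hAvgpart (k-1) x r hr hx]),
          Finset.sum_const, nsmul_eq_mul]
      rw [h1, mul_assoc]
      exact cell_ineq k hk1 hkn r hr
    have hf0 : ∀ x : X, f 0 x = E := by
      intro x
      have h1 : (𝒳 0).part x ∈ ({Finset.univ} : Finset (Finset X)) := h0 ▸ hpmem 0 x
      have h2 : (𝒳 0).part x = Finset.univ := Finset.mem_singleton.1 h1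
      simp only [hfdef]
      rw [h2, hAvg]
      simp only [Finset.card_univ, hE]
    have chain : ∀ j, j ≤ n →
        (∑ x : X, Real.cosh (lam * ‖f j x - E‖)) ≤
          (Fintype.card X : ℝ) * ∏ k ∈ Finset.Icc 1 j, Real.cosh (lam * (K * a k)) := by
      intro j
      induction j with
      | zero =>
        intro _
        have h1 : ∀ x : X, Real.cosh (lam * ‖f 0 x - E‖) = 1 := by
          intro x; rw [hf0 x, sub_self, norm_zero, mul_zero, Real.cosh_zero]
        rw [Finset.sum_congr rfl (fun x _ => h1 x)]
        rw [Finset.Icc_eq_empty (by omega), Finset.prod_empty, mul_one, Finset.sum_const,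
          Finset.card_univ, nsmul_eq_mul, mul_one]
      | succ j ih =>
        intro hj
        have h2 := step (j+1) (Nat.le_add_left 1 j) hj
        simp only [Nat.add_sub_cancel] at h2
        calc _ ≤ _ := h2
          _ ≤ ((Fintype.card X : ℝ) * ∏ k ∈ Finset.Icc 1 j, Real.cosh (lam * (K * a k))) *
              Real.cosh (lam * (K * a (j+1))) :=
            mul_le_mul_of_nonneg_right (ih (by omega)) (Real.cosh_pos _).le
          _ = _ := by
            rw [mul_assoc, ← Finset.prod_Icc_succ_top (by omega : 1 ≤ j + 1)]
    have hfn : ∀ x : X, f n x = F x := by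
      intro x
      obtain ⟨x', hx'⟩ := hn _ (hpmem n x)
      have hxx : x = x' := by
        have h1 := hxmem n x
        rw [hx'] at h1
        exact Finset.mem_singleton.1 h1
      simp only [hfdef]
      rw [hx', ← hxx, hAvg]
      simp
    set C := (Finset.univ.filter (fun x : X => t ≤ ‖F x - E‖)).card with hC
    have h6 : (C : ℝ) * Real.cosh (lam * t) ≤
        ∑ x : X, Real.cosh (lam * ‖f n x - E‖) := by
      have e1 : (C : ℝ) * Real.cosh (lam * t) =
          ∑ _x ∈ Finset.univ.filter (fun x : X => t ≤ ‖F x - E‖),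
            Real.cosh (lam * t) := by rw [Finset.sum_const, nsmul_eq_mul, hC]
      rw [e1]
      calc ∑ _x ∈ Finset.univ.filter (fun x : X => t ≤ ‖F x - E‖),
            Real.cosh (lam * t)
          ≤ ∑ x ∈ Finset.univ.filter (fun x : X => t ≤ ‖F x - E‖),
            Real.cosh (lam * ‖F x - E‖) := by
            refine Finset.sum_le_sum (fun x hx => ?_)
            have hx' := (Finset.mem_filter.1 hx).2
            apply Real.cosh_le_cosh.2
            rw [abs_of_nonneg (by positivity), abs_of_nonneg (by positivity)]
            exact mul_le_mul_of_nonneg_left hx' hlam.le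
        _ ≤ ∑ x : X, Real.cosh (lam * ‖F x - E‖) :=
            Finset.sum_le_sum_of_subset_of_nonneg (Finset.filter_subset _ _)
              (fun x _ _ => (Real.cosh_pos _).le)
        _ = ∑ x : X, Real.cosh (lam * ‖f n x - E‖) :=
            Finset.sum_congr rfl (fun x _ => by rw [hfn x])
    have h8 := chain n le_rfl
    have h9 : ∏ k ∈ Finset.Icc 1 n, Real.cosh (lam * (K * a k)) ≤
        Real.exp (lam ^ 2 * K ^ 2 * L / 2) := by
      calc ∏ k ∈ Finset.Icc 1 n, Real.cosh (lam * (K * a k))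
          ≤ ∏ k ∈ Finset.Icc 1 n, Real.exp ((lam * (K * a k)) ^ 2 / 2) :=
            Finset.prod_le_prod (fun k _ => (Real.cosh_pos _).le)
              (fun k _ => Real.cosh_le_exp_half_sq _)
        _ = Real.exp (∑ k ∈ Finset.Icc 1 n, (lam * (K * a k)) ^ 2 / 2) :=
            (Real.exp_sum _ _).symm
        _ = Real.exp (lam ^ 2 * K ^ 2 * L / 2) := by
            congr 1
            have h3 : ∀ k, (lam * (K * a k)) ^ 2 / 2 = lam ^ 2 * K ^ 2 / 2 * (a k ^ 2) := by
              intro k; ring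
            rw [Finset.sum_congr rfl (fun k _ => h3 k), ← Finset.mul_sum, ← hLdef]
            ring
    have h10 : Real.exp (lam * t) / 2 ≤ Real.cosh (lam * t) := by
      rw [Real.cosh_eq]
      have h4 := (Real.exp_pos (-(lam * t))).le
      linarith
    have hKL : (0:ℝ) < K ^ 2 * L := by positivity
    have hexp : lam ^ 2 * K ^ 2 * L / 2 - lam * t = -t ^ 2 / (2 * (K ^ 2 * L)) := by
      rw [hlamdef]
      field_simp
      ring
    have h12 : (C:ℝ) * (Real.exp (lam * t) / 2) ≤
        (Fintype.card X : ℝ) * Real.exp (lam ^ 2 * K ^ 2 * L / 2) :=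
      le_trans (mul_le_mul_of_nonneg_left h10 (Nat.cast_nonneg C))
        (le_trans h6 (le_trans h8 (mul_le_mul_of_nonneg_left h9 (Nat.cast_nonneg _))))
    have h11 : (C : ℝ) ≤ 2 * (Fintype.card X : ℝ) * Real.exp (-t ^ 2 / (2 * (K ^ 2 * L))) := by
      have hEpos := Real.exp_pos (lam * t)
      calc (C:ℝ) = (C * (Real.exp (lam * t) / 2)) * (2 / Real.exp (lam * t)) := by
            field_simp
        _ ≤ ((Fintype.card X : ℝ) * Real.exp (lam ^ 2 * K ^ 2 * L / 2)) *
            (2 / Real.exp (lam * t)) := mul_le_mul_of_nonneg_right h12 (by positivity)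
        _ = 2 * (Fintype.card X : ℝ) *
            (Real.exp (lam ^ 2 * K ^ 2 * L / 2) / Real.exp (lam * t)) := by ring
        _ = 2 * (Fintype.card X : ℝ) * Real.exp (lam ^ 2 * K ^ 2 * L / 2 - lam * t) := by
            rw [Real.exp_sub]
        _ = 2 * (Fintype.card X : ℝ) * Real.exp (-t ^ 2 / (2 * (K ^ 2 * L))) := by
            rw [hexp]
    rw [div_le_iff₀ (by exact_mod_cast hcard : (0:ℝ) < (Fintype.card X : ℝ))]
    calc (C : ℝ) ≤ 2 * (Fintype.card X : ℝ) * Real.exp (-t ^ 2 / (2 * (K ^ 2 * L))) := h11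
      _ ≤ 2 * (Fintype.card X : ℝ) * Real.exp (-t ^ 2 / (4 * l ^ 2 * K ^ 2)) := by
          refine mul_le_mul_of_nonneg_left ?_ (by positivity)
          apply Real.exp_le_exp.2
          rw [hl2, neg_div, neg_div, neg_le_neg_iff]
          apply div_le_div_of_nonneg_left (sq_nonneg t) (by positivity)
          nlinarith [hKL]
      _ = 2 * Real.exp (-t ^ 2 / (4 * l ^ 2 * K ^ 2)) * (Fintype.card X : ℝ) := by ring
end

section
/- Let M ∈ ℕ with M ≥ 3 and 𝒜 ⊆ {0,...,M−1}. Then for all k₁, k₂ ∈ ℕ with k₁, k₂ ≥ 1, the norms r_k = ‖1_{C_k(M,𝒜)} F_{M^k} 1_{C_k(M,𝒜)}‖_{ℓ²_{M^k}→ℓ²_{M^k}} satisfy the submultiplicativity property r_{k₁+k₂} ≤ r_{k₁}·r_{k₂}. -/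
open scoped BigOperators

/-! ### Auxiliary material for the proof of `stmt5`. -/

section Aux

open Matrix
open scoped Matrix.Norms.L2Operator

/-- Split `Fin n`, `n = a * b`, into remainder and quotient mod `a`. -/
def finSplitEquiv (a b n : ℕ) (h : n = a * b) : Fin n ≃ Fin b × Fin a where
  toFun j :=
    have ha : 0 < a := by
      rcases Nat.eq_zero_or_pos a with h0 | h0
      · exact absurd j.isLt (by simp [h, h0])
      · exact h0
    (⟨(j : ℕ) / a, by
        rw [Nat.div_lt_iff_lt_mul ha, mul_comm b a, ← h]; exact j.isLt⟩,
     ⟨(j : ℕ) % a, Nat.mod_lt _ ha⟩)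
  invFun p := ⟨(p.2 : ℕ) + a * (p.1 : ℕ), by
      calc (p.2 : ℕ) + a * (p.1 : ℕ) < a + a * (p.1 : ℕ) := by
            exact Nat.add_lt_add_right p.2.isLt _
        _ = a * ((p.1 : ℕ) + 1) := by ring
        _ ≤ a * b := Nat.mul_le_mul_left a p.1.isLt
        _ = n := h.symm⟩
  left_inv j := by
    apply Fin.ext
    simp [Nat.mod_add_div]
  right_inv p := by
    have ha : 0 < a := by
      rcases Nat.eq_zero_or_pos a with h0 | h0
      · exact absurd p.2.isLt (by simp [h0])
      · exact h0
    ext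
    · simp [Nat.add_mul_div_left _ _ ha, Nat.div_eq_of_lt p.2.isLt]
    · simp [Nat.add_mul_mod_self_left, Nat.mod_eq_of_lt p.2.isLt]

@[simp] lemma finSplitEquiv_fst (a b n : ℕ) (h : n = a * b) (j : Fin n) :
    ((finSplitEquiv a b n h j).1 : ℕ) = (j : ℕ) / a := rfl

@[simp] lemma finSplitEquiv_snd (a b n : ℕ) (h : n = a * b) (j : Fin n) :
    ((finSplitEquiv a b n h j).2 : ℕ) = (j : ℕ) % a := rfl

lemma eucl_norm_sq {ι : Type*} [Fintype ι] (x : EuclideanSpace ℂ ι) :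
    ‖x‖ ^ 2 = ∑ i, ‖x i‖ ^ 2 := by
  rw [EuclideanSpace.norm_eq]; exact Real.sq_sqrt (by positivity)

lemma norm_le_of_sq_le_sq {a b : ℝ} (ha : 0 ≤ a) (hb : 0 ≤ b) (h : a ^ 2 ≤ b ^ 2) : a ≤ b :=
  (pow_le_pow_iff_left₀ ha hb two_ne_zero).mp h

/-- If `A` is, up to reindexings `e`, `f` of rows and columns, of the form `B ⊗ I`,
then its `ℓ²`-operator norm is at most that of `B`. -/
lemma dilate_norm_le {n : ℕ} {α β : Type*} [Fintype α] [Fintype β] [DecidableEq α]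
    [DecidableEq β] (e f : Fin n ≃ α × β) (B : Matrix α α ℂ)
    (A : Matrix (Fin n) (Fin n) ℂ)
    (hA : ∀ j l, A j l = if (e j).2 = (f l).2 then B (e j).1 (f l).1 else 0) :
    ‖A‖ ≤ ‖B‖ := by
  classical
  rw [Matrix.l2_opNorm_def]
  refine ContinuousLinearMap.opNorm_le_bound _ (norm_nonneg B) fun x => ?_
  rw [LinearEquiv.trans_apply]
  set y : β → EuclideanSpace ℂ α := fun b => (WithLp.equiv 2 _).symm fun a => x (f.symm (a, b))
    with hy
  have hmv : ∀ j, (A *ᵥ (WithLp.equiv 2 _ x)) j = (B *ᵥ (y ((e j).2))) ((e j).1) := by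
    intro j
    simp only [Matrix.mulVec, dotProduct]
    rw [← Equiv.sum_comp f.symm]
    rw [Fintype.sum_prod_type]
    have : ∀ (a : α) (b : β), A j (f.symm (a, b)) * (WithLp.equiv 2 _) x (f.symm (a, b)) =
        if (e j).2 = b then B (e j).1 a * x (f.symm (a, b)) else 0 := by
      intro a b
      rw [hA]
      simp only [Equiv.apply_symm_apply]
      split
      · rfl
      · simp
    simp only [this]
    rw [Finset.sum_comm]
    have hswap : ∀ b : β, (∑ a : α, if (e j).2 = b then B (e j).1 a * x (f.symm (a, b)) else 0)
        = if (e j).2 = b then ∑ a : α, B (e j).1 a * x (f.symm (a, b)) else 0 := by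
      intro b
      split
      · rfl
      · simp
    simp only [hswap]
    rw [Finset.sum_ite_eq (Finset.univ) ((e j).2)
      (fun b => ∑ a : α, B (e j).1 a * x (f.symm (a, b)))]
    rw [if_pos (Finset.mem_univ _)]
    rfl
  refine norm_le_of_sq_le_sq (norm_nonneg _) (by positivity) ?_
  have lhs_sq : ‖(Matrix.toEuclideanLin A) x‖ ^ 2 = ∑ j, ‖(B *ᵥ (y ((e j).2))) ((e j).1)‖ ^ 2 := by
    rw [Matrix.toEuclideanLin_apply, eucl_norm_sq]
    refine Finset.sum_congr rfl fun j _ => ?_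
    rw [← hmv j]
    rfl
  have step2 : ∑ j, ‖(B *ᵥ (y ((e j).2))) ((e j).1)‖ ^ 2
      = ∑ p : α × β, ‖(B *ᵥ (y p.2)) p.1‖ ^ 2 :=
    Fintype.sum_equiv e _ _ fun j => rfl
  have step3 : ∑ p : α × β, ‖(B *ᵥ (y p.2)) p.1‖ ^ 2
      = ∑ b : β, ‖(WithLp.equiv 2 _).symm (B *ᵥ (y b))‖ ^ 2 := by
    rw [Fintype.sum_prod_type_right]
    refine Finset.sum_congr rfl fun b _ => ?_
    rw [eucl_norm_sq]
    rfl
  have step4 : ∀ b : β, ‖(WithLp.equiv 2 _).symm (B *ᵥ (y b))‖ ^ 2 ≤ ‖B‖ ^ 2 * ‖y b‖ ^ 2 := by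
    intro b
    have hb := Matrix.l2_opNorm_mulVec B (y b)
    calc ‖(WithLp.equiv 2 _).symm (B *ᵥ (y b))‖ ^ 2 ≤ (‖B‖ * ‖y b‖) ^ 2 := by
          apply pow_le_pow_left₀ (norm_nonneg _)
          exact hb
      _ = ‖B‖ ^ 2 * ‖y b‖ ^ 2 := by ring
  have step5 : ∑ b : β, ‖y b‖ ^ 2 = ‖x‖ ^ 2 := by
    rw [eucl_norm_sq x]
    rw [← Equiv.sum_comp f.symm (fun l => ‖x l‖ ^ 2), Fintype.sum_prod_type_right]
    refine Finset.sum_congr rfl fun b _ => ?_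
    rw [eucl_norm_sq]
    rfl
  calc ‖(Matrix.toEuclideanLin A) x‖ ^ 2
      = ∑ b : β, ‖(WithLp.equiv 2 _).symm (B *ᵥ (y b))‖ ^ 2 := by
        rw [lhs_sq, step2, step3]
    _ ≤ ∑ b : β, ‖B‖ ^ 2 * ‖y b‖ ^ 2 := Finset.sum_le_sum fun b _ => step4 b
    _ = ‖B‖ ^ 2 * ∑ b : β, ‖y b‖ ^ 2 := by rw [Finset.mul_sum]
    _ = ‖B‖ ^ 2 * ‖x‖ ^ 2 := by rw [step5]
    _ = (‖B‖ * ‖x‖) ^ 2 := by ring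

/-- A diagonal matrix with entries of norm at most one is a contraction on `ℓ²`. -/
lemma diag_norm_le {n : ℕ} (d : Fin n → ℂ) (hd : ∀ i, ‖d i‖ ≤ 1) :
    ‖Matrix.diagonal d‖ ≤ 1 := by
  rw [Matrix.l2_opNorm_def]
  refine ContinuousLinearMap.opNorm_le_bound _ zero_le_one fun x => ?_
  rw [LinearEquiv.trans_apply]
  rw [one_mul]
  refine norm_le_of_sq_le_sq (norm_nonneg _) (norm_nonneg _) ?_
  have happ : (LinearMap.toContinuousLinearMap (toEuclideanLin (diagonal d))) x
      = (WithLp.equiv 2 _).symm ((Matrix.diagonal d) *ᵥ ((WithLp.equiv 2 _) x)) :=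
    Matrix.toEuclideanLin_apply _ _
  rw [happ]
  rw [eucl_norm_sq, eucl_norm_sq]
  refine Finset.sum_le_sum fun i _ => ?_
  have hdi : ((WithLp.equiv 2 _).symm ((Matrix.diagonal d) *ᵥ ((WithLp.equiv 2 _) x))) i
      = d i * x i := by
    simp [Matrix.mulVec_diagonal]
  rw [hdi, norm_mul]
  have hd1 := hd i
  have hd0 : 0 ≤ ‖d i‖ := norm_nonneg _
  have h2 : ‖d i‖ ^ 2 ≤ 1 := by nlinarith
  calc (‖d i‖ * ‖x i‖) ^ 2 = ‖d i‖ ^ 2 * ‖x i‖ ^ 2 := by ring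
    _ ≤ 1 * ‖x i‖ ^ 2 := by nlinarith [sq_nonneg ‖x i‖]
    _ = ‖x i‖ ^ 2 := one_mul _

lemma discCantor_lt {M : ℕ} {𝒜 : Finset ℕ} (h𝒜 : 𝒜 ⊆ Finset.range M) {k c : ℕ}
    (hc : c ∈ discCantor M k 𝒜) : c < M ^ k := by
  classical
  rw [discCantor, Finset.mem_image] at hc
  obtain ⟨a, ha, rfl⟩ := hc
  rw [Fintype.mem_piFinset] at ha
  have key : ∀ (k' : ℕ) (a : Fin k' → ℕ), (∀ i, a i < M) →
      ∑ i : Fin k', a i * M ^ (i : ℕ) < M ^ k' := by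
    intro k'
    induction k' with
    | zero => intro a _; simp
    | succ k' ih =>
      intro a ha
      rw [Fin.sum_univ_succ]
      have h1 : ∑ i : Fin k', a i.succ * M ^ ((i.succ : Fin (k'+1)) : ℕ) =
          M * ∑ i : Fin k', a i.succ * M ^ (i : ℕ) := by
        rw [Finset.mul_sum]
        refine Finset.sum_congr rfl fun i _ => ?_
        simp [Fin.val_succ, pow_succ]
        ring
      rw [h1]
      have h2 := ih (fun i => a i.succ) (fun i => ha i.succ)
      have h3 := ha 0
      have h0 : a 0 * M ^ ((0 : Fin (k'+1)) : ℕ) = a 0 := by simp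
      rw [h0]
      calc a 0 + M * ∑ i : Fin k', a i.succ * M ^ (i : ℕ)
          < M + M * ∑ i : Fin k', a i.succ * M ^ (i : ℕ) := Nat.add_lt_add_right h3 _
        _ = M * (∑ i : Fin k', a i.succ * M ^ (i : ℕ) + 1) := by ring
        _ ≤ M * M ^ k' := Nat.mul_le_mul_left M h2
        _ = M ^ (k' + 1) := by rw [pow_succ]; ring
  exact key k a fun i => Finset.mem_range.mp (h𝒜 (ha i))

lemma sum_split_aux (M k k' : ℕ) (a : Fin (k + k') → ℕ) :
    ∑ i : Fin (k + k'), a i * M ^ (i : ℕ) =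
      (∑ i : Fin k, a (Fin.castAdd k' i) * M ^ (i : ℕ)) +
        M ^ k * ∑ i : Fin k', a (Fin.natAdd k i) * M ^ (i : ℕ) := by
  rw [Fin.sum_univ_add]
  congr 1
  rw [Finset.mul_sum]
  refine Finset.sum_congr rfl fun i _ => ?_
  simp only [Fin.coe_natAdd, pow_add]
  ring

/-- Splitting membership of the Cantor set at digit `k`. -/
lemma discCantor_split {M : ℕ} {𝒜 : Finset ℕ} (h𝒜 : 𝒜 ⊆ Finset.range M) (k k' n : ℕ) :
    n ∈ discCantor M (k + k') 𝒜 ↔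
      n % M ^ k ∈ discCantor M k 𝒜 ∧ n / M ^ k ∈ discCantor M k' 𝒜 := by
  classical
  constructor
  · intro hn
    rw [discCantor, Finset.mem_image] at hn
    obtain ⟨a, ha, rfl⟩ := hn
    rw [Fintype.mem_piFinset] at ha
    have hc : (∑ i : Fin k, a (Fin.castAdd k' i) * M ^ (i : ℕ)) ∈ discCantor M k 𝒜 := by
      rw [discCantor, Finset.mem_image]
      exact ⟨fun i => a (Fin.castAdd k' i), by
        rw [Fintype.mem_piFinset]; exact fun i => ha _, rfl⟩
    have hc' : (∑ i : Fin k', a (Fin.natAdd k i) * M ^ (i : ℕ)) ∈ discCantor M k' 𝒜 := by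
      rw [discCantor, Finset.mem_image]
      exact ⟨fun i => a (Fin.natAdd k i), by
        rw [Fintype.mem_piFinset]; exact fun i => ha _, rfl⟩
    have hlt := discCantor_lt h𝒜 hc
    have hpos : 0 < M ^ k := Nat.lt_of_le_of_lt (Nat.zero_le _) hlt
    rw [sum_split_aux]
    refine ⟨?_, ?_⟩
    · rw [Nat.add_mul_mod_self_left, Nat.mod_eq_of_lt hlt]; exact hc
    · rw [Nat.add_mul_div_left _ _ hpos, Nat.div_eq_of_lt hlt, Nat.zero_add]; exact hc'
  · rintro ⟨h1, h2⟩
    rw [discCantor, Finset.mem_image] at h1 h2 ⊢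
    obtain ⟨a1, ha1, hs1⟩ := h1
    obtain ⟨a2, ha2, hs2⟩ := h2
    rw [Fintype.mem_piFinset] at ha1 ha2
    refine ⟨Fin.append a1 a2, by
      rw [Fintype.mem_piFinset]
      intro i
      refine Fin.addCases (fun i => ?_) (fun i => ?_) i
      · rw [Fin.append_left]; exact ha1 i
      · rw [Fin.append_right]; exact ha2 i, ?_⟩
    rw [sum_split_aux]
    have e1 : ∀ i : Fin k, Fin.append a1 a2 (Fin.castAdd k' i) = a1 i := fun i =>
      Fin.append_left _ _ _
    have e2 : ∀ i : Fin k', Fin.append a1 a2 (Fin.natAdd k i) = a2 i := fun i =>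
      Fin.append_right _ _ _
    simp only [e1, e2, hs1, hs2]
    exact Nat.mod_add_div _ _

open Complex Real in
lemma dft_split (M k1 k2 : ℕ) (hM : 0 < M) (j l : ℕ) :
    ((1 / Real.sqrt ((M^(k1+k2) : ℕ)) : ℝ) : ℂ) *
      Complex.exp (-(2 * π * I * (j : ℕ) * (l : ℕ)) / ((M^(k1+k2) : ℕ) : ℂ)) =
    ((1 / Real.sqrt ((M^k1 : ℕ)) : ℝ) : ℂ) *
      Complex.exp (-(2 * π * I * ((j / M^k2 : ℕ) : ℂ) * ((l % M^k1 : ℕ) : ℂ)) / ((M^k1 : ℕ) : ℂ)) *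
    (Complex.exp (-(2 * π * I * ((l % M^k1 : ℕ) : ℂ) * ((j % M^k2 : ℕ) : ℂ)) / ((M^(k1+k2) : ℕ) : ℂ)) *
     (((1 / Real.sqrt ((M^k2 : ℕ)) : ℝ) : ℂ) *
      Complex.exp (-(2 * π * I * ((j % M^k2 : ℕ) : ℂ) * ((l / M^k1 : ℕ) : ℂ)) / ((M^k2 : ℕ) : ℂ)))) := by
  have hMR : (0:ℝ) < M := by exact_mod_cast hM
  have hsqrt : ((1 / Real.sqrt ((M^(k1+k2) : ℕ)) : ℝ) : ℂ)
      = ((1 / Real.sqrt ((M^k1 : ℕ)) : ℝ) : ℂ) * ((1 / Real.sqrt ((M^k2 : ℕ)) : ℝ) : ℂ) := by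
    have hNN : ((M^(k1+k2) : ℕ) : ℝ) = ((M^k1 : ℕ) : ℝ) * ((M^k2 : ℕ) : ℝ) := by
      push_cast [pow_add]; ring
    have : (Real.sqrt ((M^(k1+k2) : ℕ)) : ℝ)
        = Real.sqrt ((M^k1 : ℕ)) * Real.sqrt ((M^k2 : ℕ)) := by
      rw [hNN]
      exact Real.sqrt_mul (by positivity) _
    rw [this]
    push_cast
    rw [mul_comm]
    rw [div_mul_eq_div_div]
    ring
  have hjl : j * l = (j % M^k2) * (l % M^k1) + M^k1 * ((j % M^k2) * (l / M^k1))
      + M^k2 * ((j / M^k2) * (l % M^k1)) + M^k2 * M^k1 * ((j / M^k2) * (l / M^k1)) := by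
    conv_lhs => rw [← Nat.mod_add_div j (M^k2), ← Nat.mod_add_div l (M^k1)]
    ring
  set a : ℂ := ((j % M^k2 : ℕ) : ℂ) with ha
  set b : ℂ := ((j / M^k2 : ℕ) : ℂ) with hb
  set c : ℂ := ((l % M^k1 : ℕ) : ℂ) with hc0
  set d : ℂ := ((l / M^k1 : ℕ) : ℂ) with hd
  set n : ℕ := (j / M^k2) * (l / M^k1) with hn
  have hx : ((M^k1 : ℕ) : ℂ) ≠ 0 := by
    push_cast
    exact pow_ne_zero _ (by exact_mod_cast hM.ne')
  have hy : ((M^k2 : ℕ) : ℂ) ≠ 0 := by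
    push_cast
    exact pow_ne_zero _ (by exact_mod_cast hM.ne')
  have hNc : ((M^(k1+k2) : ℕ) : ℂ) = ((M^k2 : ℕ) : ℂ) * ((M^k1 : ℕ) : ℂ) := by
    push_cast [pow_add]
    ring
  have hcc : (j:ℂ) * (l:ℂ) = a * c + ((M^k1 : ℕ) : ℂ) * (a * d)
      + ((M^k2 : ℕ) : ℂ) * (b * c) + ((M^k2 : ℕ) : ℂ) * ((M^k1 : ℕ) : ℂ) * (b * d) := by
    rw [ha, hb, hc0, hd]
    exact_mod_cast congrArg (Nat.cast : ℕ → ℂ) hjl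
  have harg : -(2 * π * I * (j:ℂ) * (l:ℂ)) / ((M^(k1+k2) : ℕ) : ℂ)
      = -(2 * π * I * b * c) / ((M^k1 : ℕ) : ℂ)
        + -(2 * π * I * c * a) / ((M^(k1+k2) : ℕ) : ℂ)
        + -(2 * π * I * a * d) / ((M^k2 : ℕ) : ℂ)
        + (n : ℂ) * (-(2 * π * I)) := by
    have hbd : (n : ℂ) = b * d := by rw [hn, hb, hd]; push_cast; ring
    rw [hNc, hbd]
    generalize hX : ((M^k1 : ℕ) : ℂ) = X at *
    generalize hY : ((M^k2 : ℕ) : ℂ) = Y at *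
    linear_combination (norm := skip) (-(2 * π * I) / (Y * X)) * hcc
    field_simp
    ring
  have hexp : Complex.exp (-(2 * π * I * (j:ℂ) * (l:ℂ)) / ((M^(k1+k2) : ℕ) : ℂ))
      = Complex.exp (-(2 * π * I * b * c) / ((M^k1 : ℕ) : ℂ))
        * Complex.exp (-(2 * π * I * c * a) / ((M^(k1+k2) : ℕ) : ℂ))
        * Complex.exp (-(2 * π * I * a * d) / ((M^k2 : ℕ) : ℂ)) := by
    rw [harg, Complex.exp_add, Complex.exp_add, Complex.exp_add]
    have hone : Complex.exp ((n : ℂ) * (-(2 * π * I))) = 1 := by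
      rw [show ((n:ℂ) * (-(2 * π * I))) = ((-(n:ℤ) : ℤ) : ℂ) * (2 * π * I) by push_cast; ring]
      exact Complex.exp_int_mul_two_pi_mul_I _
    rw [hone, mul_one]
  rw [hexp, hsqrt]
  ring

/-- The row splitting `j ↦ (j / M^k₂, j % M^k₂)`. -/
def eSp (M k1 k2 : ℕ) : Fin (M^(k1+k2)) ≃ Fin (M^k1) × Fin (M^k2) :=
  finSplitEquiv (M^k2) (M^k1) _ (by rw [pow_add, mul_comm])

/-- The column splitting `l ↦ (l / M^k₁, l % M^k₁)`. -/
def fSp (M k1 k2 : ℕ) : Fin (M^(k1+k2)) ≃ Fin (M^k2) × Fin (M^k1) :=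
  finSplitEquiv (M^k1) (M^k2) _ (by rw [pow_add])

@[simp] lemma eSp_fst (M k1 k2 : ℕ) (j : Fin (M^(k1+k2))) :
    ((eSp M k1 k2 j).1 : ℕ) = (j : ℕ) / M^k2 := rfl
@[simp] lemma eSp_snd (M k1 k2 : ℕ) (j : Fin (M^(k1+k2))) :
    ((eSp M k1 k2 j).2 : ℕ) = (j : ℕ) % M^k2 := rfl
@[simp] lemma fSp_fst (M k1 k2 : ℕ) (l : Fin (M^(k1+k2))) :
    ((fSp M k1 k2 l).1 : ℕ) = (l : ℕ) / M^k1 := rfl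
@[simp] lemma fSp_snd (M k1 k2 : ℕ) (l : Fin (M^(k1+k2))) :
    ((fSp M k1 k2 l).2 : ℕ) = (l : ℕ) % M^k1 := rfl

/-- The factor `B_{k₁} ⊗ I`. -/
noncomputable def pMat (M k1 k2 : ℕ) (𝒜 : Finset ℕ) :
    Matrix (Fin (M^(k1+k2))) (Fin (M^(k1+k2))) ℂ :=
  fun j m => if (eSp M k1 k2 j).2 = (eSp M k1 k2 m).2
    then cantorOp M k1 𝒜 (eSp M k1 k2 j).1 (eSp M k1 k2 m).1 else 0

/-- The diagonal twiddle factor. -/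
noncomputable def dMat (M k1 k2 : ℕ) :
    Matrix (Fin (M^(k1+k2))) (Fin (M^(k1+k2))) ℂ :=
  Matrix.diagonal fun m => Complex.exp
    (-(2 * Real.pi * Complex.I * (((eSp M k1 k2 m).1 : ℕ) : ℂ) * (((eSp M k1 k2 m).2 : ℕ) : ℂ))
      / ((M^(k1+k2) : ℕ) : ℂ))

/-- The factor `I ⊗ B_{k₂}` (up to a column permutation). -/
noncomputable def qMat (M k1 k2 : ℕ) (𝒜 : Finset ℕ) :
    Matrix (Fin (M^(k1+k2))) (Fin (M^(k1+k2))) ℂ :=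
  fun m l => if (eSp M k1 k2 m).1 = (fSp M k1 k2 l).2
    then cantorOp M k2 𝒜 (eSp M k1 k2 m).2 (fSp M k1 k2 l).1 else 0

/-- The scalar identity behind the factorization. -/
lemma cantorOp_entry_split (M k1 k2 : ℕ) (hM : 0 < M) (𝒜 : Finset ℕ)
    (h𝒜 : 𝒜 ⊆ Finset.range M) (j l : Fin (M^(k1+k2))) :
    cantorOp M (k1+k2) 𝒜 j l =
      cantorOp M k1 𝒜 (eSp M k1 k2 j).1 (fSp M k1 k2 l).2 *
      (Complex.exp (-(2 * Real.pi * Complex.I * (((fSp M k1 k2 l).2 : ℕ) : ℂ)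
          * (((eSp M k1 k2 j).2 : ℕ) : ℂ)) / ((M^(k1+k2) : ℕ) : ℂ)) *
       cantorOp M k2 𝒜 (eSp M k1 k2 j).2 (fSp M k1 k2 l).1) := by
  have hjmem : ((j:ℕ) ∈ discCantor M (k1+k2) 𝒜) ↔
      ((j:ℕ) % M^k2 ∈ discCantor M k2 𝒜 ∧ (j:ℕ) / M^k2 ∈ discCantor M k1 𝒜) := by
    have h' := discCantor_split h𝒜 k2 k1 ((j:ℕ))
    rw [add_comm k2 k1] at h'
    exact h'
  have hlmem : ((l:ℕ) ∈ discCantor M (k1+k2) 𝒜) ↔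
      ((l:ℕ) % M^k1 ∈ discCantor M k1 𝒜 ∧ (l:ℕ) / M^k1 ∈ discCantor M k2 𝒜) :=
    discCantor_split h𝒜 k1 k2 _
  simp only [cantorOp]
  rw [eSp_fst, eSp_snd, fSp_fst, fSp_snd]
  by_cases hJ : (j:ℕ) ∈ discCantor M (k1+k2) 𝒜
  · by_cases hL : (l:ℕ) ∈ discCantor M (k1+k2) 𝒜
    · rw [if_pos ⟨hJ, hL⟩, if_pos ⟨(hjmem.mp hJ).2, (hlmem.mp hL).1⟩,
        if_pos ⟨(hjmem.mp hJ).1, (hlmem.mp hL).2⟩]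
      simp only [dftMatrix, eSp_fst, eSp_snd, fSp_fst, fSp_snd]
      exact dft_split M k1 k2 hM (j:ℕ) (l:ℕ)
    · rw [if_neg (fun h => hL h.2)]
      rcases not_and_or.mp (hlmem.not.mp hL) with h | h
      · rw [if_neg (show ¬((j:ℕ) / M^k2 ∈ discCantor M k1 𝒜 ∧
            (l:ℕ) % M^k1 ∈ discCantor M k1 𝒜) from fun hh => h hh.2), zero_mul]
      · rw [if_neg (show ¬((j:ℕ) % M^k2 ∈ discCantor M k2 𝒜 ∧
            (l:ℕ) / M^k1 ∈ discCantor M k2 𝒜) from fun hh => h hh.2), mul_zero, mul_zero]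
  · rw [if_neg (fun h => hJ h.1)]
    rcases not_and_or.mp (hjmem.not.mp hJ) with h | h
    · rw [if_neg (show ¬((j:ℕ) % M^k2 ∈ discCantor M k2 𝒜 ∧
          (l:ℕ) / M^k1 ∈ discCantor M k2 𝒜) from fun hh => h hh.1), mul_zero, mul_zero]
    · rw [if_neg (show ¬((j:ℕ) / M^k2 ∈ discCantor M k1 𝒜 ∧
          (l:ℕ) % M^k1 ∈ discCantor M k1 𝒜) from fun hh => h hh.1), zero_mul]

/-- The Cooley–Tukey style factorization of the Cantor operator. -/
lemma cantorOp_factor (M k1 k2 : ℕ) (hM : 0 < M) (𝒜 : Finset ℕ)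
    (h𝒜 : 𝒜 ⊆ Finset.range M) :
    cantorOp M (k1+k2) 𝒜 = pMat M k1 k2 𝒜 * (dMat M k1 k2 * qMat M k1 k2 𝒜) := by
  ext j l
  rw [Matrix.mul_apply]
  set m₀ := (eSp M k1 k2).symm ((fSp M k1 k2 l).2, (eSp M k1 k2 j).2) with hm₀
  have hm : eSp M k1 k2 m₀ = ((fSp M k1 k2 l).2, (eSp M k1 k2 j).2) :=
    Equiv.apply_symm_apply _ _
  rw [Finset.sum_eq_single_of_mem m₀ (Finset.mem_univ _) ?side]
  case side =>
    intro m _ hne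
    by_cases h1 : (eSp M k1 k2 j).2 = (eSp M k1 k2 m).2
    · by_cases h2 : (eSp M k1 k2 m).1 = (fSp M k1 k2 l).2
      · exfalso
        apply hne
        have : eSp M k1 k2 m = ((fSp M k1 k2 l).2, (eSp M k1 k2 j).2) := by
          rw [Prod.ext_iff]
          exact ⟨h2, h1.symm⟩
        rw [hm₀, ← this, Equiv.symm_apply_apply]
      · have hq : qMat M k1 k2 𝒜 m l = 0 := if_neg h2
        have hdq : (dMat M k1 k2 * qMat M k1 k2 𝒜) m l
            = Complex.exp (-(2 * Real.pi * Complex.I * (((eSp M k1 k2 m).1 : ℕ) : ℂ)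
              * (((eSp M k1 k2 m).2 : ℕ) : ℂ)) / ((M^(k1+k2) : ℕ) : ℂ))
              * qMat M k1 k2 𝒜 m l := by
          rw [dMat]; exact Matrix.diagonal_mul _ _ _ _
        rw [hdq, hq, mul_zero, mul_zero]
    · have hp : pMat M k1 k2 𝒜 j m = 0 := if_neg h1
      rw [hp, zero_mul]
  · have hDQ : (dMat M k1 k2 * qMat M k1 k2 𝒜) m₀ l
        = Complex.exp (-(2 * Real.pi * Complex.I * (((eSp M k1 k2 m₀).1 : ℕ) : ℂ)
            * (((eSp M k1 k2 m₀).2 : ℕ) : ℂ)) / ((M^(k1+k2) : ℕ) : ℂ))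
            * qMat M k1 k2 𝒜 m₀ l := by
      rw [dMat]; exact Matrix.diagonal_mul _ _ _ _
    have hp : pMat M k1 k2 𝒜 j m₀
        = cantorOp M k1 𝒜 (eSp M k1 k2 j).1 (fSp M k1 k2 l).2 := by
      rw [pMat, hm, if_pos rfl]
    have hq : qMat M k1 k2 𝒜 m₀ l
        = cantorOp M k2 𝒜 (eSp M k1 k2 j).2 (fSp M k1 k2 l).1 := by
      rw [qMat, hm, if_pos rfl]
    rw [hDQ, hp, hq, hm]
    exact cantorOp_entry_split M k1 k2 hM 𝒜 h𝒜 j l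

lemma pMat_norm_le (M k1 k2 : ℕ) (𝒜 : Finset ℕ) :
    ‖pMat M k1 k2 𝒜‖ ≤ ‖cantorOp M k1 𝒜‖ :=
  dilate_norm_le (eSp M k1 k2) (eSp M k1 k2) _ _ fun _ _ => rfl

lemma qMat_norm_le (M k1 k2 : ℕ) (𝒜 : Finset ℕ) :
    ‖qMat M k1 k2 𝒜‖ ≤ ‖cantorOp M k2 𝒜‖ :=
  dilate_norm_le ((eSp M k1 k2).trans (Equiv.prodComm _ _)) (fSp M k1 k2) _ _
    fun _ _ => rfl

lemma dMat_norm_le (M k1 k2 : ℕ) : ‖dMat M k1 k2‖ ≤ 1 := by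
  refine diag_norm_le _ fun m => ?_
  have harg : (-(2 * Real.pi * Complex.I * (((eSp M k1 k2 m).1 : ℕ) : ℂ)
        * (((eSp M k1 k2 m).2 : ℕ) : ℂ)) / ((M^(k1+k2) : ℕ) : ℂ))
      = ((-(2 * Real.pi * (((eSp M k1 k2 m).1 : ℕ) : ℝ) * (((eSp M k1 k2 m).2 : ℕ) : ℝ)
          / ((M^(k1+k2) : ℕ) : ℝ)) : ℝ) : ℂ) * Complex.I := by
    push_cast
    ring
  rw [harg, Complex.norm_exp_ofReal_mul_I]

set_option maxHeartbeats 1000000 in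
lemma stmt5_aux (M : ℕ) (hM : 0 < M) (𝒜 : Finset ℕ) (h𝒜 : 𝒜 ⊆ Finset.range M)
    (k1 k2 : ℕ) :
    ‖cantorOp M (k1 + k2) 𝒜‖ ≤ ‖cantorOp M k1 𝒜‖ * ‖cantorOp M k2 𝒜‖ := by
  have h0P : (0:ℝ) ≤ ‖pMat M k1 k2 𝒜‖ := norm_nonneg _
  have h0B1 : (0:ℝ) ≤ ‖cantorOp M k1 𝒜‖ := norm_nonneg _
  have h0D : (0:ℝ) ≤ ‖dMat M k1 k2‖ := norm_nonneg _
  have h0Q : (0:ℝ) ≤ ‖qMat M k1 k2 𝒜‖ := norm_nonneg _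
  have h0B2 : (0:ℝ) ≤ ‖cantorOp M k2 𝒜‖ := norm_nonneg _
  calc ‖cantorOp M (k1 + k2) 𝒜‖
      = ‖pMat M k1 k2 𝒜 * (dMat M k1 k2 * qMat M k1 k2 𝒜)‖ := by
        rw [cantorOp_factor M k1 k2 hM 𝒜 h𝒜]
    _ ≤ ‖pMat M k1 k2 𝒜‖ * ‖dMat M k1 k2 * qMat M k1 k2 𝒜‖ := Matrix.l2_opNorm_mul _ _
    _ ≤ ‖pMat M k1 k2 𝒜‖ * (‖dMat M k1 k2‖ * ‖qMat M k1 k2 𝒜‖) :=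
        mul_le_mul_of_nonneg_left (Matrix.l2_opNorm_mul _ _) h0P
    _ ≤ ‖cantorOp M k1 𝒜‖ * (‖dMat M k1 k2‖ * ‖qMat M k1 k2 𝒜‖) :=
        mul_le_mul_of_nonneg_right (pMat_norm_le M k1 k2 𝒜) (by positivity)
    _ ≤ ‖cantorOp M k1 𝒜‖ * (1 * ‖cantorOp M k2 𝒜‖) := by
        refine mul_le_mul_of_nonneg_left ?_ h0B1
        exact mul_le_mul (dMat_norm_le M k1 k2) (qMat_norm_le M k1 k2 𝒜) h0Q zero_le_one
    _ = ‖cantorOp M k1 𝒜‖ * ‖cantorOp M k2 𝒜‖ := by rw [one_mul]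

end Aux

open scoped Matrix.Norms.L2Operator in
/-- Proposition 3.1, submultiplicativity of Dyatlov–Jin:
`r_{k₁+k₂} ≤ r_{k₁} · r_{k₂}`. -/
theorem stmt5 (M : ℕ) (hM : 3 ≤ M) (𝒜 : Finset ℕ) (h𝒜 : 𝒜 ⊆ Finset.range M)
    (k₁ k₂ : ℕ) (hk₁ : 1 ≤ k₁) (hk₂ : 1 ≤ k₂) :
    rNorm M (k₁ + k₂) 𝒜 ≤ rNorm M k₁ 𝒜 * rNorm M k₂ 𝒜 := by
  have hM0 : 0 < M := by omega
  exact stmt5_aux M hM0 𝒜 h𝒜 k₁ k₂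
end

section
/- Let M, A ∈ ℕ with M ≥ 3 and 1 < A < M, let L > 0, and let m ∈ ℤ be such that M does not divide m. Then there exists a subset 𝔊_{L,m} ⊆ 𝔄(M,A) with μ(𝔄(M,A) \ 𝔊_{L,m}) ≤ 2·exp(−L²/16) such that for all 𝒜 ∈ 𝔊_{L,m}, |∑_{l∈𝒜} e^{2πiml/M}| ≤ L·√A. -/
open scoped BigOperators

/-- Finite sharp Hoeffding lemma for values in `[-1,1]`. -/
lemma hoeffding_finset (R : Finset ℕ) (hR : R.Nonempty) (u : ℕ → ℝ)
    (hu : ∀ l ∈ R, |u l| ≤ 1) (μ : ℝ) (hμ : 0 ≤ μ) :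
    ∑ l ∈ R, Real.exp (μ * u l) ≤
      R.card * Real.exp (μ * (∑ l ∈ R, u l) / R.card + μ ^ 2 / 2) := by
  set n : ℝ := (R.card : ℝ) with hn
  have hn0 : 0 < n := by rw [hn]; exact_mod_cast Finset.card_pos.mpr hR
  set F : ℝ → ℝ := fun x => ∑ l ∈ R, Real.exp (x * u l) with hF
  set F1 : ℝ → ℝ := fun x => ∑ l ∈ R, u l * Real.exp (x * u l) with hF1
  set F2 : ℝ → ℝ := fun x => ∑ l ∈ R, u l ^ 2 * Real.exp (x * u l) with hF2
  have hFpos : ∀ x, 0 < F x := fun x =>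
    Finset.sum_pos (fun l _ => Real.exp_pos _) hR
  have hdF : ∀ x, HasDerivAt F (F1 x) x := by
    intro x
    apply HasDerivAt.fun_sum
    intro l hl
    have : HasDerivAt (fun y : ℝ => y * u l) (u l) x := by
      simpa using (hasDerivAt_id x).mul_const (u l)
    simpa [mul_comm] using this.exp
  have hdF1 : ∀ x, HasDerivAt F1 (F2 x) x := by
    intro x
    apply HasDerivAt.fun_sum
    intro l hl
    have h1 : HasDerivAt (fun y : ℝ => y * u l) (u l) x := by
      simpa using (hasDerivAt_id x).mul_const (u l)
    have := (h1.exp).const_mul (u l)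
    exact this.congr_deriv (by ring)
  have hF2leF : ∀ x, F2 x ≤ F x := by
    intro x
    apply Finset.sum_le_sum
    intro l hl
    have h1 : u l ^ 2 ≤ 1 := by
      have := hu l hl
      nlinarith [abs_nonneg (u l), sq_abs (u l), this]
    nlinarith [Real.exp_pos (x * u l)]
  set g : ℝ → ℝ := fun x => F1 x / F x - (∑ l ∈ R, u l) / n - x with hg
  have hdg : ∀ x, HasDerivAt g ((F2 x * F x - F1 x * F1 x) / (F x) ^ 2 - 1) x := by
    intro x
    have h1 : HasDerivAt (fun y => F1 y / F y)
        ((F2 x * F x - F1 x * F1 x) / (F x) ^ 2) x :=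
      (hdF1 x).div (hdF x) (ne_of_gt (hFpos x))
    exact (h1.sub_const _).sub (hasDerivAt_id x)
  have hganti : Antitone g := by
    apply antitone_of_deriv_nonpos
    · intro x; exact (hdg x).differentiableAt
    · intro x
      rw [(hdg x).deriv]
      have h2 : F2 x * F x - F1 x * F1 x ≤ (F x) ^ 2 := by
        nlinarith [hF2leF x, hFpos x, sq_nonneg (F1 x)]
      have h3 : (F2 x * F x - F1 x * F1 x) / (F x) ^ 2 ≤ 1 := by
        rw [div_le_one (by positivity)]
        exact h2
      linarith
  have hg0 : g 0 = 0 := by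
    simp only [hg, hF, hF1]
    simp [hn]
  set ψ : ℝ → ℝ := fun x => Real.log (F x) - x * (∑ l ∈ R, u l) / n - x ^ 2 / 2 with hψ
  have hdψ : ∀ x, HasDerivAt ψ (g x) x := by
    intro x
    have h1 : HasDerivAt (fun y => Real.log (F y)) (F1 x / F x) x :=
      (hdF x).log (ne_of_gt (hFpos x))
    have h2 : HasDerivAt (fun y : ℝ => y * (∑ l ∈ R, u l) / n)
        ((∑ l ∈ R, u l) / n) x := by
      simpa using ((hasDerivAt_id x).mul_const ((∑ l ∈ R, u l))).div_const n
    have h3 : HasDerivAt (fun y : ℝ => y ^ 2 / 2) x x := by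
      simpa using ((hasDerivAt_pow 2 x)).div_const 2
    exact (h1.sub h2).sub h3
  have hψanti : AntitoneOn ψ (Set.Ici (0:ℝ)) := by
    apply antitoneOn_of_deriv_nonpos (convex_Ici 0)
    · exact (Continuous.continuousOn (by
        exact continuous_iff_continuousAt.mpr fun x => (hdψ x).continuousAt))
    · intro x hx
      exact (hdψ x).differentiableAt.differentiableWithinAt
    · intro x hx
      rw [(hdψ x).deriv]
      have := hganti (le_of_lt (by simpa using hx) : (0:ℝ) ≤ x)
      rw [hg0] at this
      exact this
  have hμ' : ψ μ ≤ ψ 0 := hψanti Set.self_mem_Ici hμ hμ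
  have hψ0 : ψ 0 = Real.log n := by
    simp [hψ, hF, hn]
  rw [hψ0] at hμ'
  have : Real.log (F μ) ≤ Real.log n + μ * (∑ l ∈ R, u l) / n + μ ^ 2 / 2 := by
    simp only [hψ] at hμ'
    linarith
  have := Real.exp_le_exp.mpr this
  rw [Real.exp_log (hFpos μ)] at this
  calc F μ ≤ Real.exp (Real.log n + μ * (∑ l ∈ R, u l) / n + μ ^ 2 / 2) := this
    _ = n * Real.exp (μ * (∑ l ∈ R, u l) / n + μ ^ 2 / 2) := by
        rw [show Real.log n + μ * (∑ l ∈ R, u l) / n + μ ^ 2 / 2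
            = Real.log n + (μ * (∑ l ∈ R, u l) / n + μ ^ 2 / 2) by ring,
          Real.exp_add, Real.exp_log hn0]

lemma chernoff_pc (w : ℕ → ℝ) (lam : ℝ) (hlam : 0 ≤ lam) :
    ∀ (a : ℕ) (R : Finset ℕ), a ≤ R.card → (∀ l ∈ R, |w l| ≤ 1) →
    ∑ 𝒜 ∈ R.powersetCard a, Real.exp (lam * ∑ l ∈ 𝒜, w l) ≤
      (R.card.choose a) *
        Real.exp (lam * a * (∑ l ∈ R, w l) / R.card + a * lam ^ 2 / 2) := by
  intro a
  induction a with
  | zero =>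
    intro R _ _
    simp
  | succ a IH =>
    intro R ha hw
    set n := R.card with hn
    have hn1 : 1 ≤ n := le_trans (Nat.succ_le_succ (Nat.zero_le a)) ha
    have hRne : R.Nonempty := Finset.card_pos.mp (lt_of_lt_of_le Nat.zero_lt_one hn1)
    set W := ∑ l ∈ R, w l with hW
    set Φe : ℕ → ℝ := fun l => ∑ ℬ ∈ (R.erase l).powersetCard a,
      Real.exp (lam * ∑ x ∈ ℬ, w x) with hΦe
    -- key double counting identity
    have hid : ((a:ℝ)+1) * ∑ 𝒜 ∈ R.powersetCard (a+1), Real.exp (lam * ∑ l ∈ 𝒜, w l)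
        = ∑ l ∈ R, Real.exp (lam * w l) * Φe l := by
      have h1 : ((a:ℝ)+1) * ∑ 𝒜 ∈ R.powersetCard (a+1), Real.exp (lam * ∑ l ∈ 𝒜, w l)
          = ∑ 𝒜 ∈ R.powersetCard (a+1), ∑ _l ∈ 𝒜, Real.exp (lam * ∑ l ∈ 𝒜, w l) := by
        rw [Finset.mul_sum]
        apply Finset.sum_congr rfl
        intro 𝒜 h𝒜
        rw [Finset.sum_const, Finset.mem_powersetCard] at *
        rw [h𝒜.2]
        ring
      rw [h1]
      rw [Finset.sum_sigma']
      have h2 : ∀ l ∈ R, Real.exp (lam * w l) * Φe l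
          = ∑ ℬ ∈ (R.erase l).powersetCard a,
              Real.exp (lam * ∑ x ∈ insert l ℬ, w x) := by
        intro l hl
        rw [hΦe, Finset.mul_sum]
        apply Finset.sum_congr rfl
        intro ℬ hℬ
        rw [Finset.mem_powersetCard] at hℬ
        have hlℬ : l ∉ ℬ := fun h => (Finset.notMem_erase l R) (hℬ.1 h)
        rw [Finset.sum_insert hlℬ, ← Real.exp_add]
        congr 1
        ring
      rw [Finset.sum_congr rfl h2, Finset.sum_sigma']
      apply Finset.sum_nbij' (i := fun p => ⟨p.2, p.1.erase p.2⟩)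
        (j := fun p => ⟨insert p.1 p.2, p.1⟩)
      · rintro ⟨𝒜, l⟩ hp
        rw [Finset.mem_sigma, Finset.mem_powersetCard] at hp
        rw [Finset.mem_sigma, Finset.mem_powersetCard]
        refine ⟨hp.1.1 hp.2, ?_, ?_⟩
        · exact Finset.erase_subset_erase l hp.1.1
        · rw [Finset.card_erase_of_mem hp.2, hp.1.2]; omega
      · rintro ⟨l, ℬ⟩ hp
        rw [Finset.mem_sigma, Finset.mem_powersetCard] at hp
        have hlℬ : l ∉ ℬ := fun h => (Finset.notMem_erase l R) (hp.2.1 h)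
        rw [Finset.mem_sigma, Finset.mem_powersetCard]
        refine ⟨⟨?_, ?_⟩, Finset.mem_insert_self l ℬ⟩
        · exact Finset.insert_subset hp.1 (hp.2.1.trans (Finset.erase_subset l R))
        · rw [Finset.card_insert_of_notMem hlℬ, hp.2.2]
      · rintro ⟨𝒜, l⟩ hp
        rw [Finset.mem_sigma] at hp
        simp only []
        congr 1
        exact Finset.insert_erase hp.2
      · rintro ⟨l, ℬ⟩ hp
        rw [Finset.mem_sigma, Finset.mem_powersetCard] at hp
        have hlℬ : l ∉ ℬ := fun h => (Finset.notMem_erase l R) (hp.2.1 h)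
        simp only []
        congr 1
        exact Finset.erase_insert hlℬ
      · rintro ⟨𝒜, l⟩ hp
        rw [Finset.mem_sigma] at hp
        simp only []
        congr 1
        rw [Finset.insert_erase hp.2]
    -- now bound the right-hand side
    set c : ℝ := 1 - (a:ℝ)/((n:ℝ)-1) with hc
    have hcast : ((n-1 : ℕ) : ℝ) = (n:ℝ) - 1 := by
      have := Nat.cast_sub hn1 (R := ℝ)
      simpa using this
    have hc01 : 0 ≤ c ∧ c ≤ 1 := by
      rcases Nat.lt_or_ge n 2 with h2 | h2
      · have hn_eq : n = 1 := by omega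
        have ha0 : a = 0 := by omega
        rw [hc, ha0]
        norm_num
      · have hpos : (0:ℝ) < (n:ℝ) - 1 := by
          have : (2:ℝ) ≤ (n:ℝ) := by exact_mod_cast h2
          linarith
        have hale : (a:ℝ) ≤ (n:ℝ) - 1 := by
          have : (a:ℝ) + 1 ≤ (n:ℝ) := by exact_mod_cast ha
          linarith
        constructor
        · rw [hc]
          have := div_le_one_of_le₀ hale hpos.le
          linarith
        · rw [hc]
          have := div_nonneg (Nat.cast_nonneg a) (le_of_lt hpos)
          linarith
    have hIHl : ∀ l ∈ R, Φe l ≤ ((n-1).choose a : ℝ) *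
        Real.exp (lam * a * (W - w l) / ((n:ℝ)-1) + a * lam ^ 2 / 2) := by
      intro l hl
      have hcard : (R.erase l).card = n - 1 := by
        rw [Finset.card_erase_of_mem hl]
      have hsum : ∑ x ∈ R.erase l, w x = W - w l := Finset.sum_erase_eq_sub hl
      have h := IH (R.erase l) (by rw [hcard]; omega)
        (fun x hx => hw x (Finset.erase_subset l R hx))
      rw [hcard, hsum, hcast] at h
      exact h
    have hchain : ∑ l ∈ R, Real.exp (lam * w l) * Φe l ≤
        ((n-1).choose a : ℝ) * Real.exp ((a:ℝ) * lam ^ 2 / 2) *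
          Real.exp (lam * a * W / ((n:ℝ)-1)) *
          ((n:ℝ) * Real.exp (lam * (∑ l ∈ R, c * w l) / n + lam ^ 2 / 2)) := by
      calc ∑ l ∈ R, Real.exp (lam * w l) * Φe l
          ≤ ∑ l ∈ R, Real.exp (lam * w l) * (((n-1).choose a : ℝ) *
              Real.exp (lam * a * (W - w l) / ((n:ℝ)-1) + a * lam ^ 2 / 2)) := by
            apply Finset.sum_le_sum
            intro l hl
            exact mul_le_mul_of_nonneg_left (hIHl l hl) (Real.exp_pos _).le
        _ = ((n-1).choose a : ℝ) * Real.exp ((a:ℝ) * lam ^ 2 / 2) *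
              Real.exp (lam * a * W / ((n:ℝ)-1)) *
              ∑ l ∈ R, Real.exp (lam * (c * w l)) := by
            rw [Finset.mul_sum]
            apply Finset.sum_congr rfl
            intro l hl
            have hexpo : lam * w l + (lam * ↑a * (W - w l) / ((n:ℝ) - 1) + ↑a * lam ^ 2 / 2)
                = ↑a * lam ^ 2 / 2 + (lam * ↑a * W / ((n:ℝ) - 1) + lam * (c * w l)) := by
              rw [hc]; ring
            calc Real.exp (lam * w l) * (((n-1).choose a : ℝ) *
                Real.exp (lam * ↑a * (W - w l) / ((n:ℝ) - 1) + ↑a * lam ^ 2 / 2))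
                = ((n-1).choose a : ℝ) * (Real.exp (lam * w l) *
                    Real.exp (lam * ↑a * (W - w l) / ((n:ℝ) - 1) + ↑a * lam ^ 2 / 2)) := by
                  ring
              _ = ((n-1).choose a : ℝ) * Real.exp (↑a * lam ^ 2 / 2 +
                    (lam * ↑a * W / ((n:ℝ) - 1) + lam * (c * w l))) := by
                  rw [← Real.exp_add, hexpo]
              _ = ((n-1).choose a : ℝ) * Real.exp (↑a * lam ^ 2 / 2) *
                    Real.exp (lam * ↑a * W / ((n:ℝ) - 1)) * Real.exp (lam * (c * w l)) := by
                  rw [Real.exp_add, Real.exp_add]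
                  ring
        _ ≤ _ := by
            apply mul_le_mul_of_nonneg_left _ (by positivity)
            have h5 := hoeffding_finset R hRne (fun l => c * w l)
              (fun l hl => by
                rw [abs_mul, abs_of_nonneg hc01.1]
                calc c * |w l| ≤ 1 * 1 :=
                  mul_le_mul hc01.2 (hw l hl) (abs_nonneg _) zero_le_one
                _ = 1 := by ring) lam hlam
            rw [← hn] at h5
            exact h5
    -- final combination
    have hfin : ((n-1).choose a : ℝ) * Real.exp ((a:ℝ) * lam ^ 2 / 2) *
          Real.exp (lam * a * W / ((n:ℝ)-1)) *
          ((n:ℝ) * Real.exp (lam * (∑ l ∈ R, c * w l) / n + lam ^ 2 / 2))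
        = ((a:ℝ)+1) * ((n.choose (a+1) : ℝ) *
            Real.exp (lam * (a+1 : ℕ) * W / (n:ℝ) + (a+1 : ℕ) * lam ^ 2 / 2)) := by
      have hsumc : ∑ l ∈ R, c * w l = c * W := by rw [hW, Finset.mul_sum]
      have hcomb : (n:ℝ) * ((n-1).choose a : ℝ) = ((a:ℝ)+1) * (n.choose (a+1) : ℝ) := by
        have h := Nat.add_one_mul_choose_eq (n-1) a
        have hs : n - 1 + 1 = n := by omega
        rw [hs] at h
        have h2 : n * (n - 1).choose a = (a + 1) * n.choose (a + 1) := by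
          rw [h]; exact Nat.mul_comm _ _
        exact_mod_cast h2
      have hexp : lam * a * W / ((n:ℝ)-1) + (lam * (c * W) / n + lam ^ 2 / 2)
            + (a:ℝ) * lam ^ 2 / 2
          = lam * (a+1 : ℕ) * W / (n:ℝ) + (a+1 : ℕ) * lam ^ 2 / 2 := by
        push_cast
        rcases Nat.lt_or_ge n 2 with h2 | h2
        · have hn_eq : n = 1 := by omega
          have ha0 : a = 0 := by omega
          rw [hc, ha0, hn_eq]
          norm_num
        · have hne1 : ((n:ℝ)-1) ≠ 0 := by
            have : (2:ℝ) ≤ (n:ℝ) := by exact_mod_cast h2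
            linarith
          have hne0 : (n:ℝ) ≠ 0 := by positivity
          rw [hc]
          field_simp
          ring
      rw [hsumc, ← hexp]
      simp only [Real.exp_add]
      linear_combination (Real.exp (lam * ↑a * W / ((n:ℝ) - 1)) *
        Real.exp (lam * (c * W) / ↑n) * Real.exp (lam ^ 2 / 2) *
        Real.exp (↑a * lam ^ 2 / 2)) * hcomb
    have hgoal2 : ((a:ℝ)+1) * ∑ 𝒜 ∈ R.powersetCard (a+1), Real.exp (lam * ∑ l ∈ 𝒜, w l)
        ≤ ((a:ℝ)+1) * ((n.choose (a+1) : ℝ) *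
            Real.exp (lam * (a+1 : ℕ) * W / (n:ℝ) + (a+1 : ℕ) * lam ^ 2 / 2)) := by
      rw [hid, ← hfin]
      exact hchain
    have hpos : (0:ℝ) < (a:ℝ) + 1 := by positivity
    exact le_of_mul_le_mul_left hgoal2 hpos


lemma sum_exp_zero (M : ℕ) (hM : 0 < M) (m : ℤ) (hm : ¬ (M : ℤ) ∣ m) :
    ∑ l ∈ Finset.range M, Complex.exp (((2 * Real.pi * (m:ℝ) * l / M : ℝ) : ℂ) * Complex.I)
      = 0 := by
  set x : ℂ := Complex.exp (((2 * Real.pi * (m:ℝ) / M : ℝ) : ℂ) * Complex.I) with hx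
  have hMR : ((M:ℝ)) ≠ 0 := by positivity
  have hterm : ∀ l : ℕ,
      Complex.exp (((2 * Real.pi * (m:ℝ) * l / M : ℝ) : ℂ) * Complex.I) = x ^ l := by
    intro l
    rw [hx, ← Complex.exp_nat_mul]
    congr 1
    push_cast
    ring
  have hxM : x ^ M = 1 := by
    rw [hx, ← Complex.exp_nat_mul]
    have hMC : ((M:ℕ):ℂ) ≠ 0 := Nat.cast_ne_zero.mpr hM.ne'
    rw [show ((M:ℕ):ℂ) * (((2 * Real.pi * (m:ℝ) / M : ℝ) : ℂ) * Complex.I)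
        = (m:ℂ) * (2 * (Real.pi:ℂ) * Complex.I) by
      push_cast
      field_simp]
    exact Complex.exp_int_mul_two_pi_mul_I m
  have hx1 : x ≠ 1 := by
    intro h
    rw [hx, Complex.exp_eq_one_iff] at h
    obtain ⟨n, hn⟩ := h
    have hI : ((2 * Real.pi * (m:ℝ) / M : ℝ) : ℂ) = (n:ℂ) * (2 * (Real.pi:ℂ)) := by
      apply mul_right_cancel₀ Complex.I_ne_zero
      rw [hn]; ring
    have hR : (2 * Real.pi * (m:ℝ) / M : ℝ) = (n:ℝ) * (2 * Real.pi) := by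
      exact_mod_cast hI
    have hmnM : (m:ℝ) = (n:ℝ) * (M:ℝ) := by
      field_simp at hR
      have h6 : (2*Real.pi) * (m:ℝ) = (2*Real.pi) * ((n:ℝ)*(M:ℝ)) := by
        linear_combination (2*Real.pi) * hR
      exact mul_left_cancel₀ (by positivity : (0:ℝ) < 2*Real.pi).ne' h6
    have hmn : m = n * M := by exact_mod_cast hmnM
    exact hm ⟨n, by rw [hmn]; ring⟩
  calc ∑ l ∈ Finset.range M, Complex.exp (((2 * Real.pi * (m:ℝ) * l / M : ℝ) : ℂ) * Complex.I)
      = ∑ l ∈ Finset.range M, x ^ l := Finset.sum_congr rfl (fun l _ => hterm l)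
    _ = (x ^ M - 1) / (x - 1) := geom_sum_eq hx1 M
    _ = 0 := by rw [hxM]; simp

lemma markov_count (M A : ℕ) (hA : A ≤ M) (hA0 : 0 < A) (w : ℕ → ℝ)
    (hw : ∀ l ∈ Finset.range M, |w l| ≤ 1) (hW : ∑ l ∈ Finset.range M, w l = 0)
    (t : ℝ) (ht : 0 < t) :
    (((((Finset.range M).powersetCard A).filter (fun 𝒜 => t < ∑ l ∈ 𝒜, w l)).card : ℝ))
      ≤ (M.choose A : ℝ) * Real.exp (- t ^ 2 / (2 * A)) := by
  set lam : ℝ := t / A with hlam_def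
  have hA0R : (0:ℝ) < A := by exact_mod_cast hA0
  have hlam : 0 ≤ lam := le_of_lt (div_pos ht hA0R)
  set B := ((Finset.range M).powersetCard A).filter (fun 𝒜 => t < ∑ l ∈ 𝒜, w l) with hB
  have h1 : (B.card : ℝ) * Real.exp (lam * t) ≤
      ∑ 𝒜 ∈ (Finset.range M).powersetCard A, Real.exp (lam * ∑ l ∈ 𝒜, w l) := by
    calc (B.card : ℝ) * Real.exp (lam * t) = ∑ _𝒜 ∈ B, Real.exp (lam * t) := by
          rw [Finset.sum_const, nsmul_eq_mul]
      _ ≤ ∑ 𝒜 ∈ B, Real.exp (lam * ∑ l ∈ 𝒜, w l) := by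
          apply Finset.sum_le_sum
          intro 𝒜 h𝒜
          apply Real.exp_le_exp.mpr
          exact mul_le_mul_of_nonneg_left (le_of_lt (Finset.mem_filter.mp h𝒜).2) hlam
      _ ≤ _ := Finset.sum_le_sum_of_subset_of_nonneg (Finset.filter_subset _ _)
          (fun _ _ _ => (Real.exp_pos _).le)
  have h2 := chernoff_pc w lam hlam A (Finset.range M)
    (by simpa using hA) (by simpa using hw)
  rw [Finset.card_range, hW] at h2
  have h3 : (B.card : ℝ) * Real.exp (lam * t) ≤
      (M.choose A : ℝ) * Real.exp ((A:ℝ) * lam ^ 2 / 2) := by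
    refine le_trans h1 (le_trans h2 ?_)
    apply mul_le_mul_of_nonneg_left _ (Nat.cast_nonneg _)
    apply Real.exp_le_exp.mpr
    simp
  have h4 := mul_le_mul_of_nonneg_right h3 (Real.exp_pos (-(lam * t))).le
  rw [mul_assoc, ← Real.exp_add, add_neg_cancel, Real.exp_zero, mul_one, mul_assoc,
    ← Real.exp_add] at h4
  have h5 : (A:ℝ) * lam ^ 2 / 2 + -(lam * t) = - t ^ 2 / (2 * A) := by
    rw [hlam_def]
    field_simp
    ring
  rwa [h5] at h4


/-- Proposition 3.2, square-root cancellation of exponential sums for random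
alphabets: for `L > 0` and `m ∈ ℤ` not divisible by `M`, outside a set of alphabets of
measure at most `2 e^{-L²/16}`, one has `|∑_{l ∈ 𝒜} e^{2πiml/M}| ≤ L √A`. -/
theorem stmt6 (M A : ℕ) (hM : 3 ≤ M) (hA1 : 1 < A) (hA2 : A < M)
    (L : ℝ) (hL : 0 < L) (m : ℤ) (hm : ¬ (M : ℤ) ∣ m) :
    ∃ G ⊆ alphabets M A,
      (((alphabets M A) \ G).card : ℝ) / ((alphabets M A).card : ℝ) ≤
        2 * Real.exp (-L ^ 2 / 16) ∧
      ∀ 𝒜 ∈ G,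
        ‖∑ l ∈ 𝒜, Complex.exp (2 * Real.pi * Complex.I * m * l / M)‖ ≤
          L * Real.sqrt A := by
  classical
  have hM0 : 0 < M := by omega
  have hA0 : 0 < A := by omega
  have hAM : A ≤ M := le_of_lt hA2
  set θ : ℕ → ℝ := fun l => 2 * Real.pi * (m:ℝ) * l / M with hθ
  set w1 : ℕ → ℝ := fun l => Real.cos (θ l) with hw1
  set w3 : ℕ → ℝ := fun l => Real.sin (θ l) with hw3
  have hconv : ∀ 𝒜 : Finset ℕ,
      ∑ l ∈ 𝒜, Complex.exp (2 * Real.pi * Complex.I * m * l / M)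
        = ∑ l ∈ 𝒜, Complex.exp (((θ l : ℝ) : ℂ) * Complex.I) := by
    intro 𝒜
    apply Finset.sum_congr rfl
    intro l _
    congr 1
    rw [hθ]
    push_cast
    ring
  have hre : ∀ 𝒜 : Finset ℕ,
      (∑ l ∈ 𝒜, Complex.exp (((θ l : ℝ) : ℂ) * Complex.I)).re = ∑ l ∈ 𝒜, w1 l := by
    intro 𝒜
    rw [Complex.re_sum]
    exact Finset.sum_congr rfl (fun l _ => Complex.exp_ofReal_mul_I_re (θ l))
  have him : ∀ 𝒜 : Finset ℕ,
      (∑ l ∈ 𝒜, Complex.exp (((θ l : ℝ) : ℂ) * Complex.I)).im = ∑ l ∈ 𝒜, w3 l := by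
    intro 𝒜
    rw [Complex.im_sum]
    exact Finset.sum_congr rfl (fun l _ => Complex.exp_ofReal_mul_I_im (θ l))
  have hzero := sum_exp_zero M hM0 m hm
  have hW1 : ∑ l ∈ Finset.range M, w1 l = 0 := by
    rw [← hre, hzero, Complex.zero_re]
  have hW3 : ∑ l ∈ Finset.range M, w3 l = 0 := by
    rw [← him, hzero, Complex.zero_im]
  set t : ℝ := L * Real.sqrt A / 2 with htdef
  have hsqrtA : 0 < Real.sqrt A := Real.sqrt_pos.mpr (by exact_mod_cast hA0)
  have ht : 0 < t := by rw [htdef]; positivity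
  have hb1 : ∀ l ∈ Finset.range M, |w1 l| ≤ 1 := fun l _ => Real.abs_cos_le_one _
  have hb3 : ∀ l ∈ Finset.range M, |w3 l| ≤ 1 := fun l _ => Real.abs_sin_le_one _
  have hb2 : ∀ l ∈ Finset.range M, |(-(w1 l))| ≤ 1 := fun l hl => by
    rw [abs_neg]; exact hb1 l hl
  have hb4 : ∀ l ∈ Finset.range M, |(-(w3 l))| ≤ 1 := fun l hl => by
    rw [abs_neg]; exact hb3 l hl
  have hW2 : ∑ l ∈ Finset.range M, (-(w1 l)) = 0 := by
    rw [Finset.sum_neg_distrib, hW1, neg_zero]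
  have hW4 : ∑ l ∈ Finset.range M, (-(w3 l)) = 0 := by
    rw [Finset.sum_neg_distrib, hW3, neg_zero]
  set B1 := ((Finset.range M).powersetCard A).filter (fun 𝒜 => t < ∑ l ∈ 𝒜, w1 l) with hB1
  set B2 := ((Finset.range M).powersetCard A).filter
    (fun 𝒜 => t < ∑ l ∈ 𝒜, (-(w1 l))) with hB2
  set B3 := ((Finset.range M).powersetCard A).filter (fun 𝒜 => t < ∑ l ∈ 𝒜, w3 l) with hB3
  set B4 := ((Finset.range M).powersetCard A).filter
    (fun 𝒜 => t < ∑ l ∈ 𝒜, (-(w3 l))) with hB4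
  have hexpval : - t ^ 2 / (2 * (A:ℝ)) = - L ^ 2 / 8 := by
    have hAq : (Real.sqrt A) ^ 2 = (A:ℝ) := Real.sq_sqrt (Nat.cast_nonneg A)
    have hAne : ((A:ℝ)) ≠ 0 := by positivity
    rw [htdef]
    field_simp
    nlinarith [hAq]
  have hm1 := markov_count M A hAM hA0 w1 hb1 hW1 t ht
  have hm2 := markov_count M A hAM hA0 (fun l => -(w1 l)) hb2 hW2 t ht
  have hm3 := markov_count M A hAM hA0 w3 hb3 hW3 t ht
  have hm4 := markov_count M A hAM hA0 (fun l => -(w3 l)) hb4 hW4 t ht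
  rw [hexpval] at hm1 hm2 hm3 hm4
  set G := (alphabets M A).filter (fun 𝒜 : Finset ℕ =>
    ‖∑ l ∈ 𝒜, Complex.exp (2 * Real.pi * Complex.I * m * l / M)‖ ≤
      L * Real.sqrt A) with hG
  refine ⟨G, Finset.filter_subset _ _, ?_, fun 𝒜 h => (Finset.mem_filter.mp h).2⟩
  have hunion : alphabets M A \ G ⊆ ((B1 ∪ B2) ∪ B3) ∪ B4 := by
    intro 𝒜 h𝒜
    rw [Finset.mem_sdiff] at h𝒜
    have hmem : 𝒜 ∈ (Finset.range M).powersetCard A := h𝒜.1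
    have habs : L * Real.sqrt A <
        ‖∑ l ∈ 𝒜, Complex.exp (2 * Real.pi * Complex.I * m * l / M)‖ := by
      by_contra h
      exact h𝒜.2 (Finset.mem_filter.mpr ⟨h𝒜.1, not_lt.mp h⟩)
    rw [hconv 𝒜] at habs
    have h1 := Complex.norm_le_abs_re_add_abs_im
      (∑ l ∈ 𝒜, Complex.exp (((θ l : ℝ) : ℂ) * Complex.I))
    rw [hre 𝒜, him 𝒜] at h1
    have hcase : t < |∑ l ∈ 𝒜, w1 l| ∨ t < |∑ l ∈ 𝒜, w3 l| := by
      by_contra hh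
      push_neg at hh
      have h2t : 2 * t = L * Real.sqrt A := by rw [htdef]; ring
      linarith [hh.1, hh.2, habs, h1]
    simp only [Finset.mem_union]
    rcases hcase with hc | hc
    · rcases lt_abs.mp hc with hc' | hc'
      · exact Or.inl (Or.inl (Or.inl (Finset.mem_filter.mpr ⟨hmem, hc'⟩)))
      · refine Or.inl (Or.inl (Or.inr (Finset.mem_filter.mpr ⟨hmem, ?_⟩)))
        rw [Finset.sum_neg_distrib]
        exact hc'
    · rcases lt_abs.mp hc with hc' | hc'
      · exact Or.inl (Or.inr (Finset.mem_filter.mpr ⟨hmem, hc'⟩))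
      · refine Or.inr (Finset.mem_filter.mpr ⟨hmem, ?_⟩)
        rw [Finset.sum_neg_distrib]
        exact hc'
  have hcardnat : (alphabets M A \ G).card ≤ B1.card + B2.card + B3.card + B4.card := by
    calc (alphabets M A \ G).card ≤ (((B1 ∪ B2) ∪ B3) ∪ B4).card :=
          Finset.card_le_card hunion
      _ ≤ ((B1 ∪ B2) ∪ B3).card + B4.card := Finset.card_union_le _ _
      _ ≤ ((B1 ∪ B2).card + B3.card) + B4.card := by
          exact Nat.add_le_add_right (Finset.card_union_le _ _) _
      _ ≤ ((B1.card + B2.card) + B3.card) + B4.card := by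
          exact Nat.add_le_add_right (Nat.add_le_add_right (Finset.card_union_le _ _) _) _
  have hC : (0:ℝ) < (M.choose A : ℝ) := by
    exact_mod_cast Nat.choose_pos hAM
  have halph : ((alphabets M A).card : ℝ) = (M.choose A : ℝ) := by
    have : (alphabets M A).card = M.choose A := by
      rw [alphabets, Finset.card_powersetCard, Finset.card_range]
    exact_mod_cast this
  have hcard : ((alphabets M A \ G).card : ℝ) ≤
      4 * ((M.choose A : ℝ) * Real.exp (- L ^ 2 / 8)) := by
    have h0 : ((alphabets M A \ G).card : ℝ) ≤
        (B1.card : ℝ) + B2.card + B3.card + B4.card := by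
      exact_mod_cast hcardnat
    linarith [hm1, hm2, hm3, hm4]
  rw [halph, div_le_iff₀ hC]
  set e : ℝ := Real.exp (- L ^ 2 / 16) with he_def
  have hepos : 0 < e := Real.exp_pos _
  by_cases hbig : e < 1/2
  · have hsplit : Real.exp (- L ^ 2 / 8) = e * e := by
      rw [he_def, ← Real.exp_add]
      congr 1
      ring
    rw [hsplit] at hcard
    have hint : 0 ≤ (M.choose A : ℝ) * e * (1/2 - e) :=
      mul_nonneg (mul_pos hC hepos).le (by linarith)
    linarith [hcard, hint]
  · push_neg at hbig
    have h2 : ((alphabets M A \ G).card : ℝ) ≤ (M.choose A : ℝ) := by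
      rw [← halph]
      exact_mod_cast Finset.card_le_card (Finset.sdiff_subset)
    have hint : 0 ≤ (2 * e - 1) * (M.choose A : ℝ) :=
      mul_nonneg (by linarith) hC.le
    linarith [h2, hint]
end

section
/- Let M, A ∈ ℕ with M ≥ 3 and 1 ≤ A ≤ M, let 𝒜 ⊆ {0,...,M−1} be nonempty with Card(𝒜) = A, and let k ∈ ℕ with k ≥ 1. Then with N = M^k, the norm r_k = ‖1_{C_k(M,𝒜)} F_N 1_{C_k(M,𝒜)}‖_{ℓ²_N→ℓ²_N} satisfies r_k ≥ √(A^k/M^k) = N^{−(1−δ)/2} where δ = log A / log M; consequently the sharp exponent satisfies β^s(M,𝒜) ≤ (1−δ)/2. -/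
open scoped BigOperators

lemma digits_sum_eq (M n : ℕ) (c : Fin (n+1) → ℕ) :
    ∑ i : Fin (n+1), c i * M ^ (i : ℕ)
      = c 0 + M * ∑ i : Fin n, c i.succ * M ^ (i : ℕ) := by
  rw [Fin.sum_univ_succ, Finset.mul_sum]
  simp only [Fin.val_zero, pow_zero, mul_one, Fin.val_succ]
  congr 1
  refine Finset.sum_congr rfl fun i _ => ?_
  rw [pow_succ]
  ring

lemma digits_lt (M : ℕ) :
    ∀ (k : ℕ) (a : Fin k → ℕ), (∀ i, a i < M) → ∑ i : Fin k, a i * M ^ (i : ℕ) < M ^ k := by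
  intro k
  induction k with
  | zero => intro a _; simp
  | succ n ih =>
    intro a ha
    rw [digits_sum_eq]
    have hS : ∑ i : Fin n, a i.succ * M ^ (i : ℕ) < M ^ n := ih _ fun i => ha i.succ
    calc a 0 + M * ∑ i : Fin n, a i.succ * M ^ (i : ℕ)
        < M + M * ∑ i : Fin n, a i.succ * M ^ (i : ℕ) := by
          have := ha 0; omega
      _ = M * (∑ i : Fin n, a i.succ * M ^ (i : ℕ) + 1) := by ring
      _ ≤ M * M ^ n := Nat.mul_le_mul_left _ (Nat.succ_le_of_lt hS)
      _ = M ^ (n+1) := by rw [pow_succ]; ring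

lemma digits_inj (M : ℕ) :
    ∀ (k : ℕ) (a b : Fin k → ℕ), (∀ i, a i < M) → (∀ i, b i < M) →
      ∑ i : Fin k, a i * M ^ (i : ℕ) = ∑ i : Fin k, b i * M ^ (i : ℕ) → a = b := by
  intro k
  induction k with
  | zero => intro a b _ _ _; funext i; exact i.elim0
  | succ n ih =>
    intro a b ha hb hsum
    rw [digits_sum_eq, digits_sum_eq] at hsum
    have h0 : a 0 = b 0 := by
      have := congrArg (· % M) hsum
      simpa [Nat.add_mul_mod_self_left, Nat.mod_eq_of_lt (ha 0), Nat.mod_eq_of_lt (hb 0)]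
        using this
    have htail : (fun i : Fin n => a i.succ) = fun i : Fin n => b i.succ := by
      refine ih _ _ (fun i => ha i.succ) (fun i => hb i.succ) ?_
      have hM0 : 0 < M := by have := ha 0; omega
      have : M * ∑ i : Fin n, a i.succ * M ^ (i : ℕ)
          = M * ∑ i : Fin n, b i.succ * M ^ (i : ℕ) := by omega
      exact Nat.eq_of_mul_eq_mul_left hM0 this
    funext i
    induction i using Fin.cases with
    | zero => exact h0
    | succ j => exact congrFun htail j

/-- The sharp exponent `β^s(M,𝒜) = sup {β ≥ 0 : r_k ≤ N^{-β} for all k ≥ 1}`. -/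
noncomputable def sharpExp (M : ℕ) (A : Finset ℕ) : ℝ :=
  sSup {β : ℝ | 0 ≤ β ∧ ∀ k : ℕ, 1 ≤ k → rNorm M k A ≤ ((M : ℝ) ^ k) ^ (-β)}

lemma mem_discCantor_lt (M k : ℕ) (𝒜 : Finset ℕ) (h𝒜 : 𝒜 ⊆ Finset.range M)
    {x : ℕ} (hx : x ∈ discCantor M k 𝒜) : x < M ^ k := by
  rw [discCantor, Finset.mem_image] at hx
  obtain ⟨a, ha, rfl⟩ := hx
  rw [Fintype.mem_piFinset] at ha
  exact digits_lt M k a fun i => Finset.mem_range.mp (h𝒜 (ha i))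

lemma card_discCantor (M k : ℕ) (𝒜 : Finset ℕ) (h𝒜 : 𝒜 ⊆ Finset.range M) :
    (discCantor M k 𝒜).card = 𝒜.card ^ k := by
  rw [discCantor, Finset.card_image_of_injOn, Fintype.card_piFinset]
  · simp
  · intro a ha b hb hab
    rw [Finset.mem_coe, Fintype.mem_piFinset] at ha hb
    exact digits_inj M k a b (fun i => Finset.mem_range.mp (h𝒜 (ha i)))
      (fun i => Finset.mem_range.mp (h𝒜 (hb i))) hab

/-- Remark 1.1, the best possible exponent: for a nonempty alphabet `𝒜`
of cardinality `A`, `r_k ≥ √(A^k/M^k) = N^{-(1-δ)/2}` with `N = M^k`, `δ = log A / log M`;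
consequently `β^s(M,𝒜) ≤ (1-δ)/2`. -/
theorem stmt8 (M A : ℕ) (hM : 3 ≤ M) (hA1 : 1 ≤ A) (hA2 : A ≤ M)
    (𝒜 : Finset ℕ) (h𝒜 : 𝒜 ⊆ Finset.range M) (h𝒜ne : 𝒜.Nonempty) (hcard : 𝒜.card = A)
    (k : ℕ) (hk : 1 ≤ k) :
    Real.sqrt ((A : ℝ) ^ k / (M : ℝ) ^ k) ≤ rNorm M k 𝒜 ∧
      ((M : ℝ) ^ k) ^ (-((1 - Real.log A / Real.log M) / 2)) ≤ rNorm M k 𝒜 ∧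
      sharpExp M 𝒜 ≤ (1 - Real.log A / Real.log M) / 2 := by
  set C := discCantor M k 𝒜 with hC
  set N := M ^ k with hN
  have hN0 : 0 < N := pow_pos (by omega : 0 < M) k
  have hNR : (0:ℝ) < (N:ℝ) := by exact_mod_cast hN0
  -- a point of the Cantor set
  obtain ⟨a0, ha0⟩ := h𝒜ne
  have ha0M : a0 < M := Finset.mem_range.mp (h𝒜 ha0)
  set c : ℕ := ∑ i : Fin k, a0 * M ^ (i : ℕ) with hc
  have hcC : c ∈ C := by
    rw [hC, discCantor, Finset.mem_image]
    exact ⟨fun _ => a0, Fintype.mem_piFinset.mpr fun _ => ha0, rfl⟩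
  have hclt : c < N := mem_discCantor_lt M k 𝒜 h𝒜 hcC
  set l : Fin N := ⟨c, hclt⟩ with hl
  have hlC : (l : ℕ) ∈ C := hcC
  -- the test vector
  set v : EuclideanSpace ℂ (Fin N) := EuclideanSpace.single l 1 with hv
  have hvnorm : ‖v‖ = 1 := by
    rw [hv, EuclideanSpace.norm_single]; exact norm_one
  set T := Matrix.toEuclideanCLM (𝕜 := ℂ) (cantorOp M k 𝒜) with hT
  -- the image vector
  have hTv : ∀ j : Fin N, (T v) j = cantorOp M k 𝒜 j l := by
    intro j
    have : T v = (WithLp.equiv 2 _).symm ((cantorOp M k 𝒜).mulVec (Pi.single l 1)) := by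
      rw [hv, hT, ← EuclideanSpace.toLp_single, Matrix.toEuclideanCLM_toLp,
        WithLp.equiv_symm_apply]
    rw [this, WithLp.equiv_symm_apply, PiLp.toLp_apply, Matrix.mulVec_single]; exact mul_one _
  -- norm of each entry
  have hentry : ∀ j : Fin N, ‖cantorOp M k 𝒜 j l‖ ^ 2
      = if (j : ℕ) ∈ C then 1 / (N : ℝ) else 0 := by
    intro j
    by_cases hj : (j : ℕ) ∈ C
    · rw [cantorOp, if_pos ⟨hj, hlC⟩, if_pos hj, dftMatrix]
      have hz : -(2 * ↑Real.pi * Complex.I * ((j : ℕ) : ℂ) * ((l : ℕ) : ℂ)) / ((N : ℕ) : ℂ)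
          = ((-(2 * Real.pi * (j : ℕ) * (l : ℕ) / (N : ℕ)) : ℝ) : ℂ) * Complex.I := by
        push_cast
        ring
      rw [hz, norm_mul,
        Complex.norm_exp_ofReal_mul_I, mul_one, Complex.norm_real, Real.norm_eq_abs,
        abs_of_nonneg (by positivity), div_pow, one_pow, Real.sq_sqrt hNR.le]
    · rw [cantorOp, if_neg (by tauto), if_neg hj, norm_zero]
      ring
  -- the norm of T v
  have hcardC : (C.card : ℝ) = (A : ℝ) ^ k := by
    rw [hC, card_discCantor M k 𝒜 h𝒜, hcard]
    push_cast
    ring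
  have hfilter : ((Finset.univ.filter fun j : Fin N => (j : ℕ) ∈ C).card : ℝ)
      = (A : ℝ) ^ k := by
    rw [← hcardC]
    congr 1
    rw [← Finset.card_image_of_injective
      (Finset.univ.filter fun j : Fin N => (j : ℕ) ∈ C) Fin.val_injective]
    congr 1
    ext x
    simp only [Finset.mem_image, Finset.mem_filter, Finset.mem_univ, true_and]
    constructor
    · rintro ⟨j, hj, rfl⟩; exact hj
    · intro hx; exact ⟨⟨x, mem_discCantor_lt M k 𝒜 h𝒜 hx⟩, hx, rfl⟩
  have hTvnorm : ‖T v‖ = Real.sqrt ((A : ℝ) ^ k / (M : ℝ) ^ k) := by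
    rw [EuclideanSpace.norm_eq]
    congr 1
    calc ∑ j : Fin N, ‖(T v) j‖ ^ 2
        = ∑ j : Fin N, if (j : ℕ) ∈ C then 1 / (N : ℝ) else 0 := by
          refine Finset.sum_congr rfl fun j _ => ?_
          rw [hTv j, hentry j]
      _ = ∑ j ∈ Finset.univ.filter fun j : Fin N => (j : ℕ) ∈ C, 1 / (N : ℝ) := by
          rw [Finset.sum_filter]
      _ = ((Finset.univ.filter fun j : Fin N => (j : ℕ) ∈ C).card : ℝ) * (1 / (N : ℝ)) := by
          rw [Finset.sum_const, nsmul_eq_mul]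
      _ = (A : ℝ) ^ k / (M : ℝ) ^ k := by
          rw [hfilter, hN]
          push_cast
          ring
  -- part 1
  have part1 : Real.sqrt ((A : ℝ) ^ k / (M : ℝ) ^ k) ≤ rNorm M k 𝒜 := by
    calc Real.sqrt ((A : ℝ) ^ k / (M : ℝ) ^ k) = ‖T v‖ := hTvnorm.symm
      _ ≤ ‖T‖ * ‖v‖ := T.le_opNorm v
      _ = rNorm M k 𝒜 := by rw [hvnorm, mul_one]; rfl
  -- identification of the rpow expression
  have hM1 : (1 : ℝ) < (M : ℝ) := by exact_mod_cast (by omega : 1 < M)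
  have hlogM : 0 < Real.log M := Real.log_pos hM1
  have hA0 : (0 : ℝ) < (A : ℝ) := by exact_mod_cast hA1
  have hMk1 : (1 : ℝ) < (M : ℝ) ^ k := one_lt_pow₀ hM1 (by omega)
  have hMk0 : (0 : ℝ) < (M : ℝ) ^ k := by positivity
  have key : ((M : ℝ) ^ k) ^ (-((1 - Real.log A / Real.log M) / 2))
      = Real.sqrt ((A : ℝ) ^ k / (M : ℝ) ^ k) := by
    rw [Real.sqrt_eq_rpow, Real.rpow_def_of_pos hMk0, Real.rpow_def_of_pos (by positivity)]
    congr 1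
    rw [Real.log_div (by positivity) (by positivity), Real.log_pow, Real.log_pow]
    field_simp
    ring
  have part2 : ((M : ℝ) ^ k) ^ (-((1 - Real.log A / Real.log M) / 2)) ≤ rNorm M k 𝒜 := by
    rw [key]; exact part1
  refine ⟨part1, part2, ?_⟩
  -- part 3
  have hδ1 : Real.log A / Real.log M ≤ 1 := by
    rw [div_le_one hlogM]
    exact Real.log_le_log hA0 (by exact_mod_cast hA2)
  apply Real.sSup_le
  · rintro β ⟨hβ0, hβ⟩
    have h1 : ((M : ℝ) ^ k) ^ (-((1 - Real.log A / Real.log M) / 2))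
        ≤ ((M : ℝ) ^ k) ^ (-β) := part2.trans (hβ k hk)
    have h2 := (Real.rpow_le_rpow_left_iff hMk1).mp h1
    linarith
  · linarith
end
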